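/- arXiv:1804.02605 — 7 statements merged into one kernel-verified Lean document; each statement's English description precedes it below -/
import Mathlib

section
/- Fix α > 0 and L > 0. Define φ_{α,L} : [0,∞) → [0,∞) by φ_{α,L}(x) = exp(min{x², (x/L)^α}) − 1. Then for any real-valued random variable X, ‖X‖_{Ψ_{α,L}} ≤ ‖X‖_{φ_{α,L}} ≤ 2‖X‖_{Ψ_{α,L}}. -/
open MeasureTheory ProbabilityTheory ENNReal

noncomputable section

/-- The `g`-Orlicz norm of a real-valued random variable:
`‖X‖_g := inf {η > 0 : E[g(|X|/η)] ≤ 1}`, with `inf ∅ = ∞`. -/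
def orliczNorm {Ω : Type*} [MeasurableSpace Ω] (μ : Measure Ω) (g : ℝ → ℝ) (X : Ω → ℝ) : ℝ≥0∞ :=
  sInf (ENNReal.ofReal '' {η : ℝ | 0 < η ∧ ∫⁻ ω, ENNReal.ofReal (g (|X ω| / η)) ∂μ ≤ 1})

/-- The inverse of the Generalized Bernstein-Orlicz function:
`Ψ_{α,L}⁻¹(t) = √(log(1+t)) + L (log(1+t))^{1/α}`. -/
def PsiInv (α L t : ℝ) : ℝ :=
  Real.sqrt (Real.log (1 + t)) + L * Real.log (1 + t) ^ (1 / α)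

/-- The Generalized Bernstein-Orlicz function `Ψ_{α,L}`: the non-decreasing function with
`Ψ_{α,L}(0) = 0` whose inverse is `PsiInv α L`. -/
def Psi (α L x : ℝ) : ℝ := sInf {t : ℝ | 0 ≤ t ∧ x ≤ PsiInv α L t}

/-- The Generalized Bernstein-Orlicz (GBO) norm `‖X‖_{Ψ_{α,L}}`. -/
def gboNorm {Ω : Type*} [MeasurableSpace Ω] (μ : Measure Ω) (α L : ℝ) (X : Ω → ℝ) : ℝ≥0∞ :=
  orliczNorm μ (Psi α L) X

/-- The `ψ_α`-Orlicz norm `‖X‖_{ψ_α} := inf {η > 0 : E[exp((|X|/η)^α)] ≤ 2}`,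
with `inf ∅ = ∞`. -/
def psiNorm {Ω : Type*} [MeasurableSpace Ω] (μ : Measure Ω) (α : ℝ) (X : Ω → ℝ) : ℝ≥0∞ :=
  sInf (ENNReal.ofReal ''
    {η : ℝ | 0 < η ∧ ∫⁻ ω, ENNReal.ofReal (Real.exp ((|X ω| / η) ^ α)) ∂μ ≤ 2})

end
section Aux

private lemma psi_le_phi (α L : ℝ) (hα : 0 < α) (hL : 0 < L) {x : ℝ} (hx : 0 ≤ x) :
    Psi α L x ≤ Real.exp (min (x ^ 2) ((x / L) ^ α)) - 1 := by
  set m := min (x ^ 2) ((x / L) ^ α) with hm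
  have hm0 : 0 ≤ m := le_min (sq_nonneg x) (Real.rpow_nonneg (div_nonneg hx hL.le) α)
  have hlog : Real.log (1 + (Real.exp m - 1)) = m := by
    rw [show (1 : ℝ) + (Real.exp m - 1) = Real.exp m by ring, Real.log_exp]
  apply csInf_le ⟨0, fun t ht => ht.1⟩
  refine ⟨sub_nonneg.mpr (Real.one_le_exp hm0), ?_⟩
  simp only [PsiInv, hlog]
  have hs : 0 ≤ Real.sqrt m := Real.sqrt_nonneg m
  have hr : 0 ≤ L * m ^ (1 / α) := mul_nonneg hL.le (Real.rpow_nonneg hm0 _)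
  rcases min_cases (x ^ 2) ((x / L) ^ α) with ⟨he, _⟩ | ⟨he, _⟩
  · have : Real.sqrt m = x := by rw [hm, he, Real.sqrt_sq hx]
    linarith
  · have : L * m ^ (1 / α) = x := by
      rw [hm, he, ← Real.rpow_mul (div_nonneg hx hL.le),
        mul_one_div_cancel hα.ne', Real.rpow_one, mul_div_cancel₀ _ hL.ne']
    linarith

private lemma phi_half_le_psi (α L : ℝ) (hα : 0 < α) (hL : 0 < L) {y : ℝ} (hy : 0 ≤ y) :
    Real.exp (min ((y / 2) ^ 2) ((y / 2 / L) ^ α)) - 1 ≤ Psi α L y := by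
  apply le_csInf
  · refine ⟨Real.exp (y ^ 2) - 1, sub_nonneg.mpr (Real.one_le_exp (sq_nonneg y)), ?_⟩
    simp only [PsiInv,
      show (1 : ℝ) + (Real.exp (y ^ 2) - 1) = Real.exp (y ^ 2) by ring, Real.log_exp]
    have h1 : Real.sqrt (y ^ 2) = y := Real.sqrt_sq hy
    have h2 : 0 ≤ L * (y ^ 2) ^ (1 / α) :=
      mul_nonneg hL.le (Real.rpow_nonneg (sq_nonneg y) _)
    linarith
  · rintro t ⟨ht0, hty⟩
    simp only [PsiInv] at hty
    set m := Real.log (1 + t) with hmdef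
    have hm0 : 0 ≤ m := Real.log_nonneg (by linarith)
    have hexp : Real.exp m = 1 + t := Real.exp_log (by linarith)
    have key : min ((y / 2) ^ 2) ((y / 2 / L) ^ α) ≤ m := by
      rcases le_total (L * m ^ (1 / α)) (Real.sqrt m) with h | h
      · have h1 : y / 2 ≤ Real.sqrt m := by linarith
        refine le_trans (min_le_left _ _) ?_
        nlinarith [Real.sq_sqrt hm0, Real.sqrt_nonneg m]
      · have h1 : y / 2 ≤ L * m ^ (1 / α) := by linarith
        have h2 : y / 2 / L ≤ m ^ (1 / α) := by
          rw [div_le_iff₀ hL]; linarith [mul_comm L (m ^ (1 / α))]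
        have h3 : (y / 2 / L) ^ α ≤ (m ^ (1 / α)) ^ α := by
          have hy2 : 0 ≤ y / 2 / L := div_nonneg (by linarith) hL.le
          exact Real.rpow_le_rpow hy2 h2 hα.le
        refine le_trans (min_le_right _ _) (h3.trans ?_)
        rw [← Real.rpow_mul hm0, one_div_mul_cancel hα.ne', Real.rpow_one]
    have := Real.exp_le_exp.mpr key
    linarith

end Aux

/-- For `α, L > 0` and `φ_{α,L}(x) = exp(min{x², (x/L)^α}) − 1`,
`‖X‖_{Ψ_{α,L}} ≤ ‖X‖_{φ_{α,L}} ≤ 2 ‖X‖_{Ψ_{α,L}}` for any random variable `X`. -/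
theorem gbo_equiv_phi {Ω : Type*} [MeasurableSpace Ω] (μ : Measure Ω) [IsProbabilityMeasure μ]
    (α L : ℝ) (hα : 0 < α) (hL : 0 < L) (X : Ω → ℝ) (hX : Measurable X) :
    gboNorm μ α L X ≤
        orliczNorm μ (fun x => Real.exp (min (x ^ 2) ((x / L) ^ α)) - 1) X ∧
      orliczNorm μ (fun x => Real.exp (min (x ^ 2) ((x / L) ^ α)) - 1) X ≤
        2 * gboNorm μ α L X := by

  constructor
  · apply sInf_le_sInf
    apply Set.image_mono
    rintro η ⟨hη, hint⟩
    refine ⟨hη, le_trans (lintegral_mono fun ω => ?_) hint⟩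
    exact ENNReal.ofReal_le_ofReal
      (psi_le_phi α L hα hL (div_nonneg (abs_nonneg _) hη.le))
  · set S := {η : ℝ | 0 < η ∧
      ∫⁻ ω, ENNReal.ofReal
        ((fun x => Real.exp (min (x ^ 2) ((x / L) ^ α)) - 1) (|X ω| / η)) ∂μ ≤ 1} with hS
    have key : ∀ a ∈ ENNReal.ofReal ''
        {η : ℝ | 0 < η ∧ ∫⁻ ω, ENNReal.ofReal (Psi α L (|X ω| / η)) ∂μ ≤ 1},
        orliczNorm μ (fun x => Real.exp (min (x ^ 2) ((x / L) ^ α)) - 1) X ≤ 2 * a := by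
      rintro a ⟨η, ⟨hη, hint⟩, rfl⟩
      have hmem : (2 * η) ∈ S := by
        refine ⟨by linarith, le_trans (lintegral_mono fun ω => ?_) hint⟩
        apply ENNReal.ofReal_le_ofReal
        have harg : |X ω| / (2 * η) = (|X ω| / η) / 2 := by
          rw [div_div, mul_comm]
        simp only [harg]
        exact phi_half_le_psi α L hα hL (div_nonneg (abs_nonneg _) hη.le)
      have h1 : orliczNorm μ (fun x => Real.exp (min (x ^ 2) ((x / L) ^ α)) - 1) X ≤
          ENNReal.ofReal (2 * η) := by
        rw [orliczNorm]; exact sInf_le ⟨2 * η, hmem, rfl⟩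
      calc orliczNorm μ (fun x => Real.exp (min (x ^ 2) ((x / L) ^ α)) - 1) X ≤
            ENNReal.ofReal (2 * η) := h1
        _ = 2 * ENNReal.ofReal η := by
            rw [ENNReal.ofReal_mul (by norm_num)]; norm_num
    rw [gboNorm, orliczNorm, mul_comm,
      ← ENNReal.div_le_iff_le_mul (Or.inl two_ne_zero) (Or.inl ENNReal.ofNat_ne_top)]
    refine le_sInf fun a ha => ?_
    rw [ENNReal.div_le_iff_le_mul (Or.inl two_ne_zero) (Or.inl ENNReal.ofNat_ne_top), mul_comm]
    exact key a ha
end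

section
/- Fix α > 0 and L ≥ 0. For any real-valued random variable X, C_*(α)·sup_{p≥1} ‖X‖_p/(√p + L·p^{1/α}) ≤ ‖X‖_{Ψ_{α,L}} ≤ C^*(α)·sup_{p≥1} ‖X‖_p/(√p + L·p^{1/α}), where ‖X‖_p := (E[|X|^p])^{1/p}, C_*(α) := (1/2)·min{1, α^{1/α}} and C^*(α) := e·max{2, 4^{1/α}}. -/
open MeasureTheory ProbabilityTheory ENNReal

namespace GBOAux

variable {α L : ℝ}

lemma psiInv_nonneg (hL : 0 ≤ L) {t : ℝ} (ht : 0 ≤ t) : 0 ≤ PsiInv α L t := by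
  have h1 : (0:ℝ) ≤ Real.log (1 + t) := Real.log_nonneg (by linarith)
  exact add_nonneg (Real.sqrt_nonneg _) (mul_nonneg hL (Real.rpow_nonneg h1 _))

lemma psiInv_zero (hα : 0 < α) : PsiInv α L 0 = 0 := by
  have : (α:ℝ)⁻¹ ≠ 0 := by positivity
  simp [PsiInv, Real.log_one, Real.zero_rpow this]

lemma psiInv_lt (hα : 0 < α) (hL : 0 ≤ L) {s t : ℝ} (hs : 0 ≤ s) (hst : s < t) :
    PsiInv α L s < PsiInv α L t := by
  have hlog : Real.log (1+s) < Real.log (1+t) := Real.log_lt_log (by linarith) (by linarith)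
  have h0 : (0:ℝ) ≤ Real.log (1+s) := Real.log_nonneg (by linarith)
  have h1 : Real.sqrt (Real.log (1+s)) < Real.sqrt (Real.log (1+t)) :=
    (Real.sqrt_lt_sqrt h0 hlog)
  have h2 : Real.log (1+s) ^ (1/α) ≤ Real.log (1+t) ^ (1/α) :=
    Real.rpow_le_rpow h0 hlog.le (by positivity)
  have := mul_le_mul_of_nonneg_left h2 hL
  unfold PsiInv
  linarith

lemma psiInv_continuousOn (hα : 0 < α) : ContinuousOn (PsiInv α L) (Set.Ici 0) := by
  intro t ht
  have h1t : (0:ℝ) < 1 + t := by have := ht; simp only [Set.mem_Ici] at this; linarith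
  have hlog : ContinuousAt (fun t : ℝ => Real.log (1 + t)) t :=
    (Real.continuousAt_log (by linarith)).comp (by fun_prop)
  have hsqrt : ContinuousAt (fun t : ℝ => Real.sqrt (Real.log (1 + t))) t :=
    Real.continuous_sqrt.continuousAt.comp hlog
  have hrpow : ContinuousAt (fun t : ℝ => Real.log (1 + t) ^ (1/α)) t :=
    (Real.continuousAt_rpow_const _ _ (Or.inr (by positivity))).comp hlog
  exact ((hsqrt.add (hrpow.const_smul L)).continuousWithinAt)

lemma psi_set_nonempty (hα : 0 < α) (hL : 0 ≤ L) (x : ℝ) :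
    {t : ℝ | 0 ≤ t ∧ x ≤ PsiInv α L t}.Nonempty := by
  rcases le_or_gt x 0 with hx | hx
  · exact ⟨0, le_refl 0, hx.trans (by rw [psiInv_zero hα])⟩
  · refine ⟨Real.exp (x^2) - 1, by nlinarith [Real.one_le_exp (by positivity : (0:ℝ) ≤ x^2)], ?_⟩
    have hlog : Real.log (1 + (Real.exp (x^2) - 1)) = x^2 := by
      rw [show (1 + (Real.exp (x^2) - 1)) = Real.exp (x^2) by ring, Real.log_exp]
    have hsq : Real.sqrt (x^2) = x := by
      rw [Real.sqrt_sq hx.le]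
    have hnn : 0 ≤ L * (x^2) ^ (1/α) := mul_nonneg hL (Real.rpow_nonneg (by positivity) _)
    unfold PsiInv
    rw [hlog, hsq]
    linarith

lemma psi_bddBelow (x : ℝ) : BddBelow {t : ℝ | 0 ≤ t ∧ x ≤ PsiInv α L t} :=
  ⟨0, fun s hs => hs.1⟩

lemma psi_nonneg (hα : 0 < α) (hL : 0 ≤ L) (x : ℝ) : 0 ≤ Psi α L x :=
  le_csInf (psi_set_nonempty hα hL x) (fun t ht => ht.1)

lemma psi_le {x t : ℝ} (ht : 0 ≤ t) (hx : x ≤ PsiInv α L t) : Psi α L x ≤ t :=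
  csInf_le (psi_bddBelow x) ⟨ht, hx⟩

lemma psi_mono (hα : 0 < α) (hL : 0 ≤ L) : Monotone (Psi α L) := by
  intro x y hxy
  exact csInf_le_csInf (psi_bddBelow x) (psi_set_nonempty hα hL y)
    (fun t ht => ⟨ht.1, hxy.trans ht.2⟩)

lemma psiInv_psi (hα : 0 < α) (hL : 0 ≤ L) {x : ℝ} (hx : 0 ≤ x) :
    PsiInv α L (Psi α L x) = x := by
  obtain ⟨T, hT0, hTx⟩ : ∃ T, 0 ≤ T ∧ x ≤ PsiInv α L T := psi_set_nonempty hα hL x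
  have hx0 : x ∈ Set.Icc (PsiInv α L 0) (PsiInv α L T) := by
    rw [psiInv_zero hα]; exact ⟨hx, hTx⟩
  obtain ⟨t₀, ht₀T, ht₀⟩ :=
    intermediate_value_Icc hT0 ((psiInv_continuousOn hα).mono (Set.Icc_subset_Ici_self)) hx0
  have ht₀0 : 0 ≤ t₀ := ht₀T.1
  have heq : Psi α L x = t₀ := by
    refine le_antisymm (psi_le ht₀0 ht₀.ge) ?_
    refine le_csInf (psi_set_nonempty hα hL x) (fun s hs => ?_)
    by_contra h
    push_neg at h
    have := psiInv_lt hα hL hs.1 h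
    rw [ht₀] at this
    exact absurd hs.2 (not_le.mpr this)
  rw [heq, ht₀]

lemma psi_zero (hα : 0 < α) (hL : 0 ≤ L) : Psi α L 0 = 0 :=
  le_antisymm (psi_le le_rfl (by rw [psiInv_zero hα])) (psi_nonneg hα hL 0)

/-- `(log v)^q ≤ (q/e)^q v` for `v ≥ 1`, `q > 0`. -/
lemma log_rpow_le {q v : ℝ} (hq : 0 < q) (hv : 1 ≤ v) :
    Real.log v ^ q ≤ (q / Real.exp 1) ^ q * v := by
  have hv0 : 0 < v := lt_of_lt_of_le one_pos hv
  have hw : 0 < v ^ (1/q) := Real.rpow_pos_of_pos hv0 _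
  have h2 : Real.log (v ^ (1/q)) ≤ v ^ (1/q) / Real.exp 1 := by
    have h := Real.log_le_sub_one_of_pos (show 0 < v ^ (1/q) / Real.exp 1 by positivity)
    rw [Real.log_div hw.ne' (Real.exp_ne_zero 1), Real.log_exp] at h
    linarith
  have h1 : Real.log v = q * Real.log (v ^ (1/q)) := by
    rw [Real.log_rpow hv0]
    field_simp
  have h3 : Real.log v ≤ q / Real.exp 1 * v ^ (1/q) := by
    rw [h1]
    calc q * Real.log (v ^ (1/q)) ≤ q * (v ^ (1/q) / Real.exp 1) := by
          exact mul_le_mul_of_nonneg_left h2 hq.le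
      _ = q / Real.exp 1 * v ^ (1/q) := by ring
  have h4 : Real.log v ^ q ≤ (q / Real.exp 1 * v ^ (1/q)) ^ q :=
    Real.rpow_le_rpow (Real.log_nonneg hv) h3 hq.le
  calc Real.log v ^ q ≤ (q / Real.exp 1 * v ^ (1/q)) ^ q := h4
    _ = (q / Real.exp 1) ^ q * (v ^ (1/q)) ^ q := by
        rw [Real.mul_rpow (by positivity) hw.le]
    _ = (q / Real.exp 1) ^ q * v := by
        rw [← Real.rpow_mul hv0.le, one_div, inv_mul_cancel₀ hq.ne', Real.rpow_one]

section Main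

variable {Ω : Type*} [MeasurableSpace Ω] {μ : Measure Ω} [IsProbabilityMeasure μ]
variable {X : Ω → ℝ}

lemma meas_psi_comp (hα : 0 < α) (hL : 0 ≤ L) (hX : Measurable X) (η : ℝ) :
    Measurable (fun ω => Psi α L (|X ω| / η)) :=
  (psi_mono hα hL).measurable.comp ((hX.abs).div_const η)

lemma lintegral_logpsi_rpow (hα : 0 < α) (hL : 0 ≤ L) (hX : Measurable X) {η : ℝ}
    (H : ∫⁻ ω, ENNReal.ofReal (Psi α L (|X ω| / η)) ∂μ ≤ 1) {q : ℝ} (hq : 0 < q) :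
    ∫⁻ ω, ENNReal.ofReal (Real.log (1 + Psi α L (|X ω| / η)) ^ q) ∂μ ≤
      ENNReal.ofReal (2 * (q / Real.exp 1) ^ q) := by
  have hmeas := meas_psi_comp hα hL hX η
  have hpt : ∀ ω, Real.log (1 + Psi α L (|X ω| / η)) ^ q ≤
      (q / Real.exp 1) ^ q * (1 + Psi α L (|X ω| / η)) := fun ω =>
    log_rpow_le hq (by linarith [psi_nonneg hα hL (|X ω| / η)])
  have h2 : ∫⁻ ω, ENNReal.ofReal (1 + Psi α L (|X ω| / η)) ∂μ ≤ 2 := by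
    have he : ∀ ω, ENNReal.ofReal (1 + Psi α L (|X ω| / η)) =
        1 + ENNReal.ofReal (Psi α L (|X ω| / η)) := fun ω => by
      rw [ENNReal.ofReal_add zero_le_one (psi_nonneg hα hL _), ENNReal.ofReal_one]
    simp_rw [he]
    rw [lintegral_add_left measurable_const, lintegral_const, measure_univ, mul_one]
    calc (1 : ℝ≥0∞) + ∫⁻ ω, ENNReal.ofReal (Psi α L (|X ω| / η)) ∂μ
        ≤ 1 + 1 := add_le_add_right H _
      _ = 2 := one_add_one_eq_two
  calc ∫⁻ ω, ENNReal.ofReal (Real.log (1 + Psi α L (|X ω| / η)) ^ q) ∂μ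
      ≤ ∫⁻ ω, ENNReal.ofReal ((q / Real.exp 1) ^ q * (1 + Psi α L (|X ω| / η))) ∂μ :=
        lintegral_mono fun ω => ENNReal.ofReal_le_ofReal (hpt ω)
    _ = ENNReal.ofReal ((q / Real.exp 1) ^ q) *
          ∫⁻ ω, ENNReal.ofReal (1 + Psi α L (|X ω| / η)) ∂μ := by
        simp_rw [ENNReal.ofReal_mul (by positivity : (0:ℝ) ≤ (q / Real.exp 1) ^ q)]
        exact lintegral_const_mul _ (ENNReal.measurable_ofReal.comp
          (measurable_const.add hmeas))
    _ ≤ ENNReal.ofReal ((q / Real.exp 1) ^ q) * 2 :=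
        mul_le_mul_right h2 _
    _ = ENNReal.ofReal (2 * (q / Real.exp 1) ^ q) := by
        rw [mul_comm, show (2:ℝ≥0∞) = ENNReal.ofReal 2 by norm_num,
          ← ENNReal.ofReal_mul (by norm_num)]

lemma eLpNorm_logpsi_rpow (hα : 0 < α) (hL : 0 ≤ L) (hX : Measurable X) {η : ℝ}
    (H : ∫⁻ ω, ENNReal.ofReal (Psi α L (|X ω| / η)) ∂μ ≤ 1) {p r : ℝ} (hp : 1 ≤ p)
    (hr : 0 < r) :
    eLpNorm (fun ω => Real.log (1 + Psi α L (|X ω| / η)) ^ (1/r)) (ENNReal.ofReal p) μ ≤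
      ENNReal.ofReal (2 * (p / (r * Real.exp 1)) ^ (1/r)) := by
  have hp0 : (0:ℝ) < p := by linarith
  have hne0 : ENNReal.ofReal p ≠ 0 := by
    simp only [ne_eq, ENNReal.ofReal_eq_zero, not_le]; linarith
  have hfnn : ∀ ω, (0:ℝ) ≤ Real.log (1 + Psi α L (|X ω| / η)) := fun ω =>
    Real.log_nonneg (by linarith [psi_nonneg hα hL (|X ω| / η)])
  rw [eLpNorm_eq_lintegral_rpow_enorm_toReal hne0 ENNReal.ofReal_ne_top,
    ENNReal.toReal_ofReal hp0.le]
  have key : ∫⁻ ω, ‖Real.log (1 + Psi α L (|X ω| / η)) ^ (1/r)‖ₑ ^ p ∂μ ≤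
      ENNReal.ofReal (2 * (p / r / Real.exp 1) ^ (p/r)) := by
    have hb := lintegral_logpsi_rpow hα hL hX H (q := p/r) (by positivity)
    refine le_trans (le_of_eq (lintegral_congr fun ω => ?_)) hb
    have hx : (0:ℝ) ≤ Real.log (1 + Psi α L (|X ω| / η)) ^ (1/r) :=
      Real.rpow_nonneg (hfnn ω) _
    rw [Real.enorm_eq_ofReal hx,
      ENNReal.ofReal_rpow_of_nonneg hx hp0.le, ← Real.rpow_mul (hfnn ω), one_div,
      inv_mul_eq_div]
  have hc : (0:ℝ) ≤ p / r / Real.exp 1 := by positivity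
  calc (∫⁻ ω, ‖Real.log (1 + Psi α L (|X ω| / η)) ^ (1/r)‖ₑ ^ p ∂μ) ^ (1/p)
      ≤ (ENNReal.ofReal (2 * (p / r / Real.exp 1) ^ (p/r))) ^ (1/p) :=
        ENNReal.rpow_le_rpow key (by positivity)
    _ = ENNReal.ofReal ((2 * (p / r / Real.exp 1) ^ (p/r)) ^ (1/p)) :=
        ENNReal.ofReal_rpow_of_nonneg (by positivity) (by positivity)
    _ ≤ ENNReal.ofReal (2 * (p / (r * Real.exp 1)) ^ (1/r)) := by
        apply ENNReal.ofReal_le_ofReal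
        have e1 : (2 * (p / r / Real.exp 1) ^ (p/r)) ^ (1/p) =
            (2:ℝ) ^ (1/p) * ((p / r / Real.exp 1) ^ (p/r)) ^ (1/p) :=
          Real.mul_rpow (by norm_num) (Real.rpow_nonneg hc _)
        have e2 : ((p / r / Real.exp 1) ^ (p/r)) ^ (1/p) = (p / r / Real.exp 1) ^ (1/r) := by
          rw [← Real.rpow_mul hc]
          congr 1
          field_simp
        have e3 : (2:ℝ) ^ (1/p) ≤ 2 := by
          calc (2:ℝ) ^ (1/p) ≤ (2:ℝ) ^ (1:ℝ) :=
                Real.rpow_le_rpow_of_exponent_le one_le_two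
                  ((div_le_one hp0).mpr hp)
            _ = 2 := Real.rpow_one 2
        rw [e1, e2, div_div]
        exact mul_le_mul_of_nonneg_right e3 (Real.rpow_nonneg (by rw [← div_div]; exact hc) _)

lemma moment_le_of_psi (hα : 0 < α) (hL : 0 ≤ L) (hX : Measurable X) {η : ℝ} (hη : 0 < η)
    (H : ∫⁻ ω, ENNReal.ofReal (Psi α L (|X ω| / η)) ∂μ ≤ 1) {p : ℝ} (hp : 1 ≤ p) :
    eLpNorm X (ENNReal.ofReal p) μ ≤
      ENNReal.ofReal (η * (2 * (p / (2 * Real.exp 1)) ^ (1/(2:ℝ)) +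
        L * (2 * (p / (α * Real.exp 1)) ^ (1/α)))) := by
  set f : Ω → ℝ := fun ω => Real.log (1 + Psi α L (|X ω| / η)) with hf
  have hmeasPsi := meas_psi_comp hα hL hX η
  have hmf : Measurable f := Real.measurable_log.comp (measurable_const.add hmeasPsi)
  have hg1 : Measurable (fun ω => f ω ^ (1/(2:ℝ))) := hmf.pow_const _
  have hg2' : Measurable (fun ω => f ω ^ (1/α)) := hmf.pow_const _
  have hpt : ∀ ω, ‖X ω‖ = η * ((fun ω => f ω ^ (1/(2:ℝ))) ω
      + (fun ω => L * f ω ^ (1/α)) ω) := by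
    intro ω
    have hz : (0:ℝ) ≤ |X ω| / η := by positivity
    have hinv := psiInv_psi hα hL hz
    unfold PsiInv at hinv
    rw [Real.sqrt_eq_rpow] at hinv
    simp only [Real.norm_eq_abs]
    rw [hf]
    simp only
    rw [hinv]
    field_simp
  have hstep : eLpNorm X (ENNReal.ofReal p) μ =
      eLpNorm (η • ((fun ω => f ω ^ (1/(2:ℝ))) + (fun ω => L * f ω ^ (1/α))))
        (ENNReal.ofReal p) μ := by
    rw [← eLpNorm_norm X]
    exact eLpNorm_congr_ae (Filter.Eventually.of_forall hpt)
  rw [hstep, eLpNorm_const_smul]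
  have hL2 : (fun ω => L * f ω ^ (1/α)) = L • (fun ω => f ω ^ (1/α)) := rfl
  have htri : eLpNorm ((fun ω => f ω ^ (1/(2:ℝ))) + (fun ω => L * f ω ^ (1/α)))
      (ENNReal.ofReal p) μ ≤
      eLpNorm (fun ω => f ω ^ (1/(2:ℝ))) (ENNReal.ofReal p) μ +
      eLpNorm (fun ω => L * f ω ^ (1/α)) (ENNReal.ofReal p) μ :=
    eLpNorm_add_le hg1.aestronglyMeasurable (hg2'.const_mul L).aestronglyMeasurable
      (ENNReal.one_le_ofReal.mpr hp)
  have hA : eLpNorm (fun ω => f ω ^ (1/(2:ℝ))) (ENNReal.ofReal p) μ ≤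
      ENNReal.ofReal (2 * (p / (2 * Real.exp 1)) ^ (1/(2:ℝ))) :=
    eLpNorm_logpsi_rpow hα hL hX H hp two_pos
  have hB : eLpNorm (fun ω => L * f ω ^ (1/α)) (ENNReal.ofReal p) μ ≤
      ENNReal.ofReal (L * (2 * (p / (α * Real.exp 1)) ^ (1/α))) := by
    rw [hL2, eLpNorm_const_smul, Real.enorm_eq_ofReal hL,
      ENNReal.ofReal_mul hL]
    exact mul_le_mul_right (eLpNorm_logpsi_rpow hα hL hX H hp hα) _
  rw [Real.enorm_eq_ofReal hη.le, ENNReal.ofReal_mul hη.le,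
    ENNReal.ofReal_add (by positivity) (by positivity)]
  exact mul_le_mul_right (htri.trans (add_le_add hA hB)) _

lemma key_real (hα : 0 < α) (hL : 0 ≤ L) {p : ℝ} (hp : 1 ≤ p) :
    min 1 (α ^ (1/α)) * (2 * (p / (2 * Real.exp 1)) ^ (1/(2:ℝ)) +
        L * (2 * (p / (α * Real.exp 1)) ^ (1/α)))
      ≤ 2 * (Real.sqrt p + L * p ^ (1/α)) := by
  have hp0 : (0:ℝ) < p := by linarith
  have he1 : (1:ℝ) ≤ Real.exp 1 := by
    calc (1:ℝ) ≤ 1 + 1 := by norm_num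
      _ ≤ Real.exp 1 := Real.add_one_le_exp 1
  set m := min 1 (α ^ (1/α)) with hm
  have hm0 : 0 ≤ m := le_min zero_le_one (Real.rpow_nonneg hα.le _)
  have hm1 : m ≤ 1 := min_le_left _ _
  have hmα : m ≤ α ^ (1/α) := min_le_right _ _
  set A := (p / (2 * Real.exp 1)) ^ (1/(2:ℝ)) with hA
  set B := (p / (α * Real.exp 1)) ^ (1/α) with hB
  have hA0 : 0 ≤ A := Real.rpow_nonneg (by positivity) _
  have hB0 : 0 ≤ B := Real.rpow_nonneg (by positivity) _
  have hAle : A ≤ Real.sqrt p := by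
    rw [Real.sqrt_eq_rpow]
    exact Real.rpow_le_rpow (by positivity) (div_le_self hp0.le (by nlinarith)) (by norm_num)
  have hmB : m * B ≤ p ^ (1/α) := by
    calc m * B ≤ α ^ (1/α) * B := mul_le_mul_of_nonneg_right hmα hB0
      _ = (α * (p / (α * Real.exp 1))) ^ (1/α) := by
          rw [Real.mul_rpow hα.le (by positivity)]
      _ = (p / Real.exp 1) ^ (1/α) := by
          congr 1
          field_simp
      _ ≤ p ^ (1/α) :=
          Real.rpow_le_rpow (by positivity) (div_le_self hp0.le he1) (by positivity)
  have hmA : m * A ≤ Real.sqrt p := by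
    calc m * A ≤ 1 * A := mul_le_mul_of_nonneg_right hm1 hA0
      _ = A := one_mul A
      _ ≤ Real.sqrt p := hAle
  nlinarith [mul_le_mul_of_nonneg_left hmB hL]

lemma lower_bound (hα : 0 < α) (hL : 0 ≤ L) (hX : Measurable X) :
    ENNReal.ofReal ((1 / 2) * min 1 (α ^ (1 / α))) *
        (⨆ p ∈ Set.Ici (1 : ℝ),
          eLpNorm X (ENNReal.ofReal p) μ / ENNReal.ofReal (Real.sqrt p + L * p ^ (1 / α)))
      ≤ sInf (ENNReal.ofReal ''
        {η : ℝ | 0 < η ∧ ∫⁻ ω, ENNReal.ofReal (Psi α L (|X ω| / η)) ∂μ ≤ 1}) := by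
  refine le_sInf ?_
  rintro b ⟨η, ⟨hη, H⟩, rfl⟩
  set c : ℝ := (1 / 2) * min 1 (α ^ (1 / α)) with hc
  have hmin0 : (0:ℝ) < min 1 (α ^ (1/α)) := lt_min one_pos (Real.rpow_pos_of_pos hα _)
  have hc0 : 0 < c := by rw [hc]; positivity
  have hsup : (⨆ p ∈ Set.Ici (1 : ℝ),
      eLpNorm X (ENNReal.ofReal p) μ / ENNReal.ofReal (Real.sqrt p + L * p ^ (1 / α)))
      ≤ ENNReal.ofReal (η / c) := by
    refine iSup₂_le fun p hp => ?_
    have hp1 : (1:ℝ) ≤ p := hp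
    have hp0 : (0:ℝ) < p := by linarith
    have hD0 : (0:ℝ) < Real.sqrt p + L * p ^ (1/α) := by
      have h1 : (1:ℝ) ≤ Real.sqrt p := by
        rw [show (1:ℝ) = Real.sqrt 1 by simp]
        exact Real.sqrt_le_sqrt hp1
      have h2 : 0 ≤ L * p ^ (1/α) := mul_nonneg hL (Real.rpow_nonneg hp0.le _)
      linarith
    rw [ENNReal.div_le_iff (ENNReal.ofReal_pos.mpr hD0).ne' ENNReal.ofReal_ne_top]
    rw [← ENNReal.ofReal_mul (by positivity)]
    refine (moment_le_of_psi hα hL hX hη H hp1).trans (ENNReal.ofReal_le_ofReal ?_)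
    have hk := key_real hα hL hp1
    set B := 2 * (p / (2 * Real.exp 1)) ^ (1/(2:ℝ)) +
        L * (2 * (p / (α * Real.exp 1)) ^ (1/α)) with hBdef
    have hB0 : 0 ≤ B := by
      rw [hBdef]; positivity
    have hcB : c * B ≤ Real.sqrt p + L * p ^ (1/α) := by
      rw [hc]
      nlinarith
    calc η * B = (η / c) * (c * B) := by field_simp
      _ ≤ (η / c) * (Real.sqrt p + L * p ^ (1/α)) :=
          mul_le_mul_of_nonneg_left hcB (by positivity)
  calc ENNReal.ofReal c * (⨆ p ∈ Set.Ici (1 : ℝ),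
        eLpNorm X (ENNReal.ofReal p) μ / ENNReal.ofReal (Real.sqrt p + L * p ^ (1 / α)))
      ≤ ENNReal.ofReal c * ENNReal.ofReal (η / c) := mul_le_mul_right hsup _
    _ = ENNReal.ofReal (c * (η / c)) := (ENNReal.ofReal_mul hc0.le).symm
    _ = ENNReal.ofReal η := by rw [mul_div_cancel₀ _ hc0.ne']

/-- Markov: if `‖X‖_p ≤ b` then `μ(|X| > a) ≤ (b/a)^p`. -/
lemma markov_tail (hX : Measurable X) {p a b : ℝ} (hp : 1 ≤ p) (ha : 0 < a) (hb : 0 ≤ b)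
    (hmom : eLpNorm X (ENNReal.ofReal p) μ ≤ ENNReal.ofReal b) :
    μ {ω | a < |X ω|} ≤ ENNReal.ofReal ((b / a) ^ p) := by
  have hp0 : (0:ℝ) < p := lt_of_lt_of_le one_pos hp
  have hne0 : ENNReal.ofReal p ≠ 0 := by
    simp only [ne_eq, ENNReal.ofReal_eq_zero, not_le]; linarith
  have hint : ∫⁻ ω, (ENNReal.ofReal |X ω|) ^ p ∂μ ≤ ENNReal.ofReal (b ^ p) := by
    rw [eLpNorm_eq_lintegral_rpow_enorm_toReal hne0 ENNReal.ofReal_ne_top,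
      ENNReal.toReal_ofReal hp0.le] at hmom
    have h2 := ENNReal.rpow_le_rpow hmom hp0.le
    rw [← ENNReal.rpow_mul, one_div, inv_mul_cancel₀ hp0.ne', ENNReal.rpow_one,
      ENNReal.ofReal_rpow_of_nonneg hb hp0.le] at h2
    refine le_trans (le_of_eq (lintegral_congr fun ω => ?_)) h2
    rw [Real.enorm_eq_ofReal_abs]
  have hfm : Measurable (fun ω => (ENNReal.ofReal |X ω|) ^ p) :=
    (ENNReal.measurable_ofReal.comp hX.abs).pow_const _
  have hmk := mul_meas_ge_le_lintegral₀ (μ := μ) (f := fun ω => (ENNReal.ofReal |X ω|) ^ p)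
    hfm.aemeasurable (ENNReal.ofReal (a ^ p))
  have hsub : {ω | a < |X ω|} ⊆ {ω | ENNReal.ofReal (a ^ p) ≤ (ENNReal.ofReal |X ω|) ^ p} := by
    intro ω h
    simp only [Set.mem_setOf_eq] at h ⊢
    rw [← ENNReal.ofReal_rpow_of_nonneg ha.le hp0.le]
    exact ENNReal.rpow_le_rpow (ENNReal.ofReal_le_ofReal (le_of_lt h)) hp0.le
  have hap : ENNReal.ofReal (a ^ p) ≠ 0 := by
    simp only [ne_eq, ENNReal.ofReal_eq_zero, not_le]
    positivity
  calc μ {ω | a < |X ω|} ≤ μ {ω | ENNReal.ofReal (a ^ p) ≤ (ENNReal.ofReal |X ω|) ^ p} :=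
        measure_mono hsub
    _ ≤ ENNReal.ofReal (b ^ p) / ENNReal.ofReal (a ^ p) := by
        rw [ENNReal.le_div_iff_mul_le (Or.inl hap) (Or.inl ENNReal.ofReal_ne_top)]
        exact (mul_comm (ENNReal.ofReal (a ^ p)) _ ▸ hmk).trans hint
    _ = ENNReal.ofReal ((b / a) ^ p) := by
        rw [← ENNReal.ofReal_div_of_pos (by positivity), Real.div_rpow hb ha.le]

lemma integral_tail_le :
    ∫⁻ t in Set.Ioi (0.29:ℝ), ENNReal.ofReal ((1 + t) ^ (-4:ℝ)) ≤ ENNReal.ofReal (1/3) := by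
  have hmble : Measurable (fun x : ℝ => ENNReal.ofReal (x ^ (-4:ℝ))) :=
    ENNReal.measurable_ofReal.comp (measurable_id.pow_const _)
  have hmap : Measure.map (fun x : ℝ => 1 + x) volume = volume :=
    map_add_left_eq_self volume 1
  have hpre : (fun x : ℝ => 1 + x) ⁻¹' Set.Ioi (1.29:ℝ) = Set.Ioi (0.29:ℝ) := by
    ext x
    simp only [Set.mem_preimage, Set.mem_Ioi]
    constructor <;> intro h <;> linarith
  have hshift : ∫⁻ x in Set.Ioi (1.29:ℝ), ENNReal.ofReal (x ^ (-4:ℝ)) =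
      ∫⁻ t in Set.Ioi (0.29:ℝ), ENNReal.ofReal ((1 + t) ^ (-4:ℝ)) := by
    conv_lhs => rw [← hmap]
    rw [setLIntegral_map measurableSet_Ioi hmble (measurable_const_add 1), hpre]
  rw [← hshift]
  have hint : IntegrableOn (fun x : ℝ => x ^ (-4:ℝ)) (Set.Ioi (1.29:ℝ)) volume :=
    integrableOn_Ioi_rpow_of_lt (by norm_num) (by norm_num)
  have hnn : 0 ≤ᵐ[volume.restrict (Set.Ioi (1.29:ℝ))] fun x : ℝ => x ^ (-4:ℝ) := by
    refine (ae_restrict_iff' measurableSet_Ioi).mpr (Filter.Eventually.of_forall fun x hx => ?_)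
    have : (0:ℝ) < x := lt_trans (by norm_num) hx
    positivity
  rw [← ofReal_integral_eq_lintegral_ofReal hint hnn]
  apply ENNReal.ofReal_le_ofReal
  rw [integral_Ioi_rpow_of_lt (by norm_num) (by norm_num)]
  have h1 : ((1.29:ℝ)) ^ ((-4:ℝ) + 1) ≤ 1 :=
    Real.rpow_le_one_of_one_le_of_nonpos (by norm_num) (by norm_num)
  have h2 : (0:ℝ) ≤ ((1.29:ℝ)) ^ ((-4:ℝ) + 1) := Real.rpow_nonneg (by norm_num) _
  rw [show (-4:ℝ) + 1 = -3 by norm_num] at h1 h2 ⊢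
  rw [neg_div, div_neg, neg_neg]
  linarith

lemma D_pos (hα : 0 < α) (hL : 0 ≤ L) {p : ℝ} (hp : 1 ≤ p) :
    0 < Real.sqrt p + L * p ^ (1/α) := by
  have h1 : (1:ℝ) ≤ Real.sqrt p := by
    rw [show (1:ℝ) = Real.sqrt 1 by simp]
    exact Real.sqrt_le_sqrt hp
  have h2 : 0 ≤ L * p ^ (1/α) :=
    mul_nonneg hL (Real.rpow_nonneg (by linarith) _)
  linarith

lemma upper_admissible (hα : 0 < α) (hL : 0 ≤ L) (hX : Measurable X) {s : ℝ} (hs : 0 < s)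
    (hmom : ∀ p : ℝ, 1 ≤ p → eLpNorm X (ENNReal.ofReal p) μ ≤
      ENNReal.ofReal (s * (Real.sqrt p + L * p ^ (1/α)))) :
    ∫⁻ ω, ENNReal.ofReal
      (Psi α L (|X ω| / (Real.exp 1 * max 2 ((4:ℝ) ^ (1/α)) * s))) ∂μ ≤ 1 := by
  set M := max (2:ℝ) ((4:ℝ) ^ (1/α)) with hM
  have hM2 : (2:ℝ) ≤ M := le_max_left _ _
  have hM4 : (4:ℝ) ^ (1/α) ≤ M := le_max_right _ _
  set η := Real.exp 1 * M * s with hηdef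
  have hη0 : 0 < η := by
    have hM0 : (0:ℝ) < M := by linarith
    rw [hηdef]; positivity
  have tail : ∀ t : ℝ, 0.29 < t →
      μ {ω | t < Psi α L (|X ω| / η)} ≤ ENNReal.ofReal ((1 + t) ^ (-4:ℝ)) := by
    intro t ht
    set u := Real.log (1 + t) with hu
    have h1t : (0:ℝ) < 1 + t := by linarith
    have hexp14 : Real.exp (1/4 : ℝ) ≤ 1.29 := by
      have hpow : Real.exp (1/4:ℝ) ^ (4:ℕ) = Real.exp 1 := by
        rw [← Real.exp_nat_mul]; norm_num
      by_contra hcon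
      push_neg at hcon
      have h4 : (1.29:ℝ) ^ (4:ℕ) < Real.exp (1/4:ℝ) ^ (4:ℕ) :=
        pow_lt_pow_left₀ hcon (by norm_num) (by norm_num)
      rw [hpow] at h4
      nlinarith [Real.exp_one_lt_d9]
    have hu14 : (1/4 : ℝ) ≤ u := by
      rw [hu, Real.le_log_iff_exp_le h1t]
      linarith
    have hu0 : (0:ℝ) < u := by linarith
    set p := 4 * u with hpdef
    have hp1 : (1:ℝ) ≤ p := by rw [hpdef]; linarith
    have h4' : Real.sqrt (4:ℝ) = 2 := by
      rw [show (4:ℝ) = 2^2 by norm_num, Real.sqrt_sq (by norm_num : (0:ℝ) ≤ 2)]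
    have hsqrt : Real.sqrt p = 2 * Real.sqrt u := by
      rw [hpdef, Real.sqrt_mul (by norm_num : (0:ℝ) ≤ 4), h4']
    have hrpow : p ^ (1/α) = (4:ℝ) ^ (1/α) * u ^ (1/α) := by
      rw [hpdef, Real.mul_rpow (by norm_num) hu0.le]
    set D := Real.sqrt p + L * p ^ (1/α) with hD
    have hD0 : 0 < D := D_pos hα hL hp1
    have hPsiInv : PsiInv α L t = Real.sqrt u + L * u ^ (1/α) := rfl
    have hcmp : Real.exp 1 * s * D ≤ η * PsiInv α L t := by
      rw [hPsiInv, hηdef, hD, hsqrt, hrpow]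
      have hs1 : 0 ≤ Real.sqrt u := Real.sqrt_nonneg u
      have hs2 : 0 ≤ u ^ (1/α) := Real.rpow_nonneg hu0.le _
      have h1 : 2 * Real.sqrt u + L * ((4:ℝ)^(1/α) * u^(1/α)) ≤
          M * (Real.sqrt u + L * u^(1/α)) := by
        nlinarith [mul_nonneg hL hs2]
      nlinarith [Real.exp_pos 1, hs, h1,
        mul_le_mul_of_nonneg_left h1 (mul_pos (Real.exp_pos 1) hs).le]
    have hsub1 : {ω | t < Psi α L (|X ω| / η)} ⊆ {ω | Real.exp 1 * s * D < |X ω|} := by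
      intro ω hω
      simp only [Set.mem_setOf_eq] at hω ⊢
      by_contra hcon
      push_neg at hcon
      have hle : |X ω| / η ≤ PsiInv α L t := by
        rw [div_le_iff₀ hη0, mul_comm (PsiInv α L t) η]
        exact hcon.trans hcmp
      exact absurd hω (not_lt.mpr (psi_le (by linarith : (0:ℝ) ≤ t) hle))
    have hmark := markov_tail (μ := μ) hX hp1 (a := Real.exp 1 * s * D)
      (by positivity) (b := s * D) (by positivity) (hmom p hp1)
    have hval : (s * D / (Real.exp 1 * s * D)) ^ p = (1 + t) ^ (-4:ℝ) := by
      have hq : s * D / (Real.exp 1 * s * D) = (Real.exp 1)⁻¹ := by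
        field_simp
      rw [hq, show (Real.exp 1)⁻¹ = Real.exp (-1) by rw [← Real.exp_neg],
        Real.rpow_def_of_pos (Real.exp_pos _), Real.log_exp,
        Real.rpow_def_of_pos h1t]
      congr 1
      rw [hpdef, hu]
      ring
    calc μ {ω | t < Psi α L (|X ω| / η)} ≤ μ {ω | Real.exp 1 * s * D < |X ω|} :=
          measure_mono hsub1
      _ ≤ ENNReal.ofReal ((s * D / (Real.exp 1 * s * D)) ^ p) := hmark
      _ = ENNReal.ofReal ((1 + t) ^ (-4:ℝ)) := by rw [hval]
  have hmeasPsi := meas_psi_comp hα hL hX η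
  rw [lintegral_eq_lintegral_meas_lt μ
    (Filter.Eventually.of_forall fun ω => psi_nonneg hα hL _) hmeasPsi.aemeasurable]
  have hsplit : (Set.Ioi (0:ℝ)) = Set.Ioc (0:ℝ) 0.29 ∪ Set.Ioi (0.29:ℝ) :=
    (Set.Ioc_union_Ioi_eq_Ioi (by norm_num)).symm
  rw [hsplit, lintegral_union measurableSet_Ioi Set.Ioc_disjoint_Ioi_same]
  have h1 : ∫⁻ t in Set.Ioc (0:ℝ) 0.29, μ {ω | t < Psi α L (|X ω| / η)} ≤
      ENNReal.ofReal 0.29 := by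
    calc ∫⁻ t in Set.Ioc (0:ℝ) 0.29, μ {ω | t < Psi α L (|X ω| / η)}
        ≤ ∫⁻ _ in Set.Ioc (0:ℝ) 0.29, 1 :=
          setLIntegral_mono measurable_const fun t _ => prob_le_one
      _ = ENNReal.ofReal 0.29 := by
          rw [setLIntegral_const, one_mul, Real.volume_Ioc]
          norm_num
  have h2 : ∫⁻ t in Set.Ioi (0.29:ℝ), μ {ω | t < Psi α L (|X ω| / η)} ≤
      ENNReal.ofReal (1/3) := by
    have hmble : Measurable (fun t : ℝ => ENNReal.ofReal ((1 + t) ^ (-4:ℝ))) :=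
      ENNReal.measurable_ofReal.comp ((measurable_const_add 1).pow_const _)
    calc ∫⁻ t in Set.Ioi (0.29:ℝ), μ {ω | t < Psi α L (|X ω| / η)}
        ≤ ∫⁻ t in Set.Ioi (0.29:ℝ), ENNReal.ofReal ((1 + t) ^ (-4:ℝ)) :=
          setLIntegral_mono hmble fun t ht => tail t ht
      _ ≤ ENNReal.ofReal (1/3) := integral_tail_le
  calc (∫⁻ t in Set.Ioc (0:ℝ) 0.29, μ {ω | t < Psi α L (|X ω| / η)}) +
        ∫⁻ t in Set.Ioi (0.29:ℝ), μ {ω | t < Psi α L (|X ω| / η)}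
      ≤ ENNReal.ofReal 0.29 + ENNReal.ofReal (1/3) := add_le_add h1 h2
    _ ≤ 1 := by
        rw [← ENNReal.ofReal_add (by norm_num) (by norm_num),
          show (1:ℝ≥0∞) = ENNReal.ofReal 1 by simp]
        exact ENNReal.ofReal_le_ofReal (by norm_num)

lemma upper_bound (hα : 0 < α) (hL : 0 ≤ L) (hX : Measurable X) :
    sInf (ENNReal.ofReal ''
        {η : ℝ | 0 < η ∧ ∫⁻ ω, ENNReal.ofReal (Psi α L (|X ω| / η)) ∂μ ≤ 1})
      ≤ ENNReal.ofReal (Real.exp 1 * max 2 ((4 : ℝ) ^ (1 / α))) *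
        (⨆ p ∈ Set.Ici (1 : ℝ),
          eLpNorm X (ENNReal.ofReal p) μ / ENNReal.ofReal (Real.sqrt p + L * p ^ (1 / α))) := by
  set S := ⨆ p ∈ Set.Ici (1 : ℝ),
      eLpNorm X (ENNReal.ofReal p) μ / ENNReal.ofReal (Real.sqrt p + L * p ^ (1 / α)) with hSdef
  set C := Real.exp 1 * max 2 ((4:ℝ) ^ (1/α)) with hC
  have hmax0 : (0:ℝ) < max 2 ((4:ℝ) ^ (1/α)) := lt_of_lt_of_le two_pos (le_max_left _ _)
  have hC0 : (0:ℝ) < C := by rw [hC]; positivity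
  by_cases hStop : S = ⊤
  · rw [hStop, ENNReal.mul_top (by simp only [ne_eq, ENNReal.ofReal_eq_zero, not_le]; linarith)]
    exact le_top
  set s := S.toReal with hs
  have hSofReal : ENNReal.ofReal s = S := ENNReal.ofReal_toReal hStop
  rcases eq_or_lt_of_le (ENNReal.toReal_nonneg (a := S)) with hs0 | hs0
  · -- S = 0, so X = 0 a.e.
    have hs0' : s = 0 := by rw [hs, ← hs0]
    have hS0 : S = 0 := by rw [← hSofReal, hs0', ENNReal.ofReal_zero]
    have hle1 : eLpNorm X (ENNReal.ofReal 1) μ /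
        ENNReal.ofReal (Real.sqrt 1 + L * 1 ^ (1/α)) ≤ S := by
      rw [hSdef]
      exact le_iSup₂ (f := fun (p : ℝ) (_ : p ∈ Set.Ici (1:ℝ)) =>
        eLpNorm X (ENNReal.ofReal p) μ / ENNReal.ofReal (Real.sqrt p + L * p ^ (1 / α)))
        1 (Set.self_mem_Ici)
    rw [hS0, le_zero_iff, ENNReal.div_eq_zero_iff] at hle1
    have heq0 : eLpNorm X (ENNReal.ofReal 1) μ = 0 := by
      rcases hle1 with h | h
      · exact h
      · exact absurd h ENNReal.ofReal_ne_top
    rw [ENNReal.ofReal_one] at heq0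
    have hXae : X =ᵐ[μ] 0 :=
      (eLpNorm_eq_zero_iff hX.aestronglyMeasurable one_ne_zero).mp heq0
    have key : ∀ ε : ℝ, 0 < ε → sInf (ENNReal.ofReal ''
        {η : ℝ | 0 < η ∧ ∫⁻ ω, ENNReal.ofReal (Psi α L (|X ω| / η)) ∂μ ≤ 1}) ≤
        ENNReal.ofReal ε := by
      intro ε hε
      refine sInf_le ⟨ε, ⟨hε, ?_⟩, rfl⟩
      have : (fun ω => ENNReal.ofReal (Psi α L (|X ω| / ε))) =ᵐ[μ] 0 := by
        filter_upwards [hXae] with ω hω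
        rw [hω]
        simp [psi_zero hα hL]
      rw [lintegral_congr_ae this]
      simp
    have hinf0 : sInf (ENNReal.ofReal ''
        {η : ℝ | 0 < η ∧ ∫⁻ ω, ENNReal.ofReal (Psi α L (|X ω| / η)) ∂μ ≤ 1}) ≤ 0 := by
      refine ENNReal.le_of_forall_pos_le_add fun ε hε _ => ?_
      calc sInf _ ≤ ENNReal.ofReal (ε : ℝ) := key ε (by exact_mod_cast hε)
        _ = (ε : ℝ≥0∞) := ENNReal.ofReal_coe_nnreal
        _ ≤ 0 + ε := by simp
    exact hinf0.trans zero_le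
  · -- 0 < s
    have hs0' : 0 < s := by rw [hs]; exact hs0
    have hmom : ∀ p : ℝ, 1 ≤ p → eLpNorm X (ENNReal.ofReal p) μ ≤
        ENNReal.ofReal (s * (Real.sqrt p + L * p ^ (1/α))) := by
      intro p hp
      have hle : eLpNorm X (ENNReal.ofReal p) μ /
          ENNReal.ofReal (Real.sqrt p + L * p ^ (1/α)) ≤ S := by
        rw [hSdef]
        exact le_iSup₂ (f := fun (p : ℝ) (_ : p ∈ Set.Ici (1:ℝ)) =>
          eLpNorm X (ENNReal.ofReal p) μ / ENNReal.ofReal (Real.sqrt p + L * p ^ (1 / α)))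
          p hp
      rw [← hSofReal] at hle
      rw [ENNReal.div_le_iff (ENNReal.ofReal_pos.mpr (D_pos hα hL hp)).ne'
        ENNReal.ofReal_ne_top] at hle
      rwa [← ENNReal.ofReal_mul hs0'.le] at hle
    have hadm := upper_admissible hα hL hX hs0' hmom
    calc sInf (ENNReal.ofReal ''
        {η : ℝ | 0 < η ∧ ∫⁻ ω, ENNReal.ofReal (Psi α L (|X ω| / η)) ∂μ ≤ 1})
        ≤ ENNReal.ofReal (Real.exp 1 * max 2 ((4:ℝ) ^ (1/α)) * s) := by
          refine sInf_le ⟨Real.exp 1 * max 2 ((4:ℝ) ^ (1/α)) * s, ⟨by positivity, hadm⟩, rfl⟩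
      _ = ENNReal.ofReal C * S := by
          rw [← hC, ENNReal.ofReal_mul hC0.le, hSofReal]

end Main

end GBOAux

/-- Equivalence of the GBO norm and the moment growth
`sup_{p ≥ 1} ‖X‖_p/(√p + L p^{1/α})`, with constants
`C_*(α) = (1/2) min{1, α^{1/α}}` and `C^*(α) = e max{2, 4^{1/α}}`. -/
theorem gbo_moment_equiv {Ω : Type*} [MeasurableSpace Ω] (μ : Measure Ω) [IsProbabilityMeasure μ]
    (α L : ℝ) (hα : 0 < α) (hL : 0 ≤ L) (X : Ω → ℝ) (hX : Measurable X) :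
    ENNReal.ofReal ((1 / 2) * min 1 (α ^ (1 / α))) *
        (⨆ p ∈ Set.Ici (1 : ℝ),
          eLpNorm X (ENNReal.ofReal p) μ / ENNReal.ofReal (Real.sqrt p + L * p ^ (1 / α)))
      ≤ gboNorm μ α L X ∧
    gboNorm μ α L X ≤
      ENNReal.ofReal (Real.exp 1 * max 2 ((4 : ℝ) ^ (1 / α))) *
        (⨆ p ∈ Set.Ici (1 : ℝ),
          eLpNorm X (ENNReal.ofReal p) μ / ENNReal.ofReal (Real.sqrt p + L * p ^ (1 / α))) := by
  constructor
  · exact GBOAux.lower_bound hα hL hX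
  · exact GBOAux.upper_bound hα hL hX
end

section
/- Fix α > 0 and L ≥ 0. For any finite sequence of (possibly dependent) real-valued random variables X_1, …, X_k, ‖X_1 + ⋯ + X_k‖_{Ψ_{α,L}} ≤ Q_α · (‖X_1‖_{Ψ_{α,L}} + ⋯ + ‖X_k‖_{Ψ_{α,L}}), where Q_α := 2e·(4/α)^{1/α} if α < 1 and Q_α := 1 if α ≥ 1. -/
open MeasureTheory ProbabilityTheory ENNReal

open Real Set

lemma concaveOn_log_rpow (p a b d : ℝ) (hp : 0 < p) (ha : 0 < a)
    (hd : Real.exp (max (p-1) 0) ≤ a * d + b) :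
    ConcaveOn ℝ (Ici d) (fun t => Real.log (a*t + b) ^ p) := by
  have hpos : ∀ t ∈ Ici d, 0 < a * t + b := fun t ht => by
    have : a * d + b ≤ a * t + b := by nlinarith [mem_Ici.mp ht]
    have h1 : (0:ℝ) < Real.exp (max (p-1) 0) := Real.exp_pos _
    linarith
  have hint : interior (Ici d) = Ioi d := interior_Ici
  have hlog : ∀ t ∈ Ioi d, max (p-1) 0 < Real.log (a*t+b) := by
    intro t ht
    have h1 : a * d + b < a * t + b := by nlinarith [mem_Ioi.mp ht]
    calc max (p-1) 0 = Real.log (Real.exp (max (p-1) 0)) := (Real.log_exp _).symm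
      _ < Real.log (a*t+b) := by
          apply Real.log_lt_log (Real.exp_pos _) (lt_of_le_of_lt hd h1)
  have hderiv : ∀ t ∈ Ioi d,
      HasDerivAt (fun t => Real.log (a*t + b) ^ p)
        (p * Real.log (a*t+b) ^ (p-1) * (a / (a*t+b))) t := by
    intro t ht
    have h0 : a * t + b ≠ 0 := (hpos t (Ioi_subset_Ici_self ht)).ne'
    have hl0 : Real.log (a*t+b) ≠ 0 := by
      have := hlog t ht
      have : (0:ℝ) < Real.log (a*t+b) := lt_of_le_of_lt (le_max_right _ _) this
      exact this.ne'
    have hu : HasDerivAt (fun t => a*t+b) a t := by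
      simpa using ((hasDerivAt_id t).const_mul a).add_const b
    have hlg : HasDerivAt (fun t => Real.log (a*t+b)) (a / (a*t+b)) t := by
      have := (Real.hasDerivAt_log h0).comp t hu
      rw [div_eq_inv_mul]; exact this
    have := (Real.hasDerivAt_rpow_const (x := Real.log (a*t+b)) (p := p)
      (Or.inl hl0)).comp t hlg
    exact this
  have hderiv2 : ∀ t ∈ Ioi d,
      HasDerivAt (fun t => p * Real.log (a*t+b) ^ (p-1) * (a / (a*t+b)))
        ((a/(a*t+b))^2 * (p * ((p-1) * Real.log (a*t+b) ^ (p-2)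
          - Real.log (a*t+b) ^ (p-1)))) t := by
    intro t ht
    have h0 : a * t + b ≠ 0 := (hpos t (Ioi_subset_Ici_self ht)).ne'
    have hl0 : Real.log (a*t+b) ≠ 0 := by
      have := hlog t ht
      have : (0:ℝ) < Real.log (a*t+b) := lt_of_le_of_lt (le_max_right _ _) this
      exact this.ne'
    have hu : HasDerivAt (fun t => a*t+b) a t := by
      simpa using ((hasDerivAt_id t).const_mul a).add_const b
    have hlg : HasDerivAt (fun t => Real.log (a*t+b)) (a / (a*t+b)) t := by
      have := (Real.hasDerivAt_log h0).comp t hu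
      rw [div_eq_inv_mul]; exact this
    have h1 : HasDerivAt (fun t => Real.log (a*t+b) ^ (p-1))
        ((p-1) * Real.log (a*t+b) ^ (p-2) * (a/(a*t+b))) t := by
      have := (Real.hasDerivAt_rpow_const (x := Real.log (a*t+b)) (p := p-1)
        (Or.inl hl0)).comp t hlg
      have e : p - 2 = p - 1 - 1 := by ring
      rw [e]; exact this
    have h2 : HasDerivAt (fun t => (a*t+b)⁻¹) (-((a*t+b)^2)⁻¹ * a) t :=
      (hasDerivAt_inv h0).comp t hu
    have hprod := ((h1.mul h2).const_mul p).mul_const a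
    -- (fun t => p * (log(at+b)^(p-1) * (at+b)⁻¹) * a)
    have heq : (fun t => p * (Real.log (a*t+b) ^ (p-1) * (a*t+b)⁻¹) * a)
        = (fun t => p * Real.log (a*t+b) ^ (p-1) * (a / (a*t+b))) := by
      funext s; field_simp
    simp only [Pi.mul_apply] at hprod
    rw [heq] at hprod
    refine hprod.congr_deriv ?_
    field_simp
    ring
  apply concaveOn_of_hasDerivWithinAt2_nonpos (convex_Ici d)
    (f' := fun t => p * Real.log (a*t+b) ^ (p-1) * (a / (a*t+b)))
    (f'' := fun t => (a/(a*t+b))^2 * (p * ((p-1) * Real.log (a*t+b) ^ (p-2)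
          - Real.log (a*t+b) ^ (p-1))))
  · apply ContinuousOn.rpow_const
    · exact (continuousOn_const.mul continuousOn_id |>.add continuousOn_const).log
        (fun t ht => (hpos t ht).ne')
    · intro t ht; right; exact hp.le
  · intro t ht; rw [hint] at ht; exact ((hderiv t ht).hasDerivWithinAt)
  · intro t ht; rw [hint] at ht; exact ((hderiv2 t ht).hasDerivWithinAt)
  · intro t ht
    rw [hint] at ht
    have hl := hlog t ht
    have hlpos : (0:ℝ) < Real.log (a*t+b) := lt_of_le_of_lt (le_max_right _ _) hl
    have hlp : p - 1 ≤ Real.log (a*t+b) := le_of_lt (lt_of_le_of_lt (le_max_left _ _) hl)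
    have key : (p-1) * Real.log (a*t+b) ^ (p-2) - Real.log (a*t+b) ^ (p-1) ≤ 0 := by
      have h3 : Real.log (a*t+b) ^ (p-1) = Real.log (a*t+b) ^ (p-2) * Real.log (a*t+b) := by
        rw [← Real.rpow_add_one hlpos.ne' (p-2)]
        ring_nf
      rw [h3]
      have h4 : (0:ℝ) ≤ Real.log (a*t+b) ^ (p-2) := Real.rpow_nonneg hlpos.le _
      nlinarith
    have h5 : (0:ℝ) ≤ (a/(a*t+b))^2 := sq_nonneg _
    have h6 : p * ((p-1) * Real.log (a*t+b) ^ (p-2) - Real.log (a*t+b) ^ (p-1)) ≤ 0 :=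
      mul_nonpos_iff.mpr (Or.inl ⟨hp.le, key⟩)
    exact mul_nonpos_iff.mpr (Or.inl ⟨h5, h6⟩)


noncomputable def ginv (c : ℝ) (F : ℝ → ℝ) (x : ℝ) : ℝ := sInf {t : ℝ | c ≤ t ∧ x ≤ F t}

section Ginv
variable {c : ℝ} {F : ℝ → ℝ}

lemma ginv_set_bdd (x : ℝ) : BddBelow {t : ℝ | c ≤ t ∧ x ≤ F t} :=
  ⟨c, fun _ ht => ht.1⟩

lemma le_ginv (hFub : ∀ x, ∃ t, c ≤ t ∧ x ≤ F t) (x : ℝ) : c ≤ ginv c F x :=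
  le_csInf (hFub x) (fun _ ht => ht.1)

lemma ginv_le {x t : ℝ} (h1 : c ≤ t) (h2 : x ≤ F t) : ginv c F x ≤ t :=
  csInf_le (ginv_set_bdd x) ⟨h1, h2⟩

lemma ginv_mono (hFub : ∀ x, ∃ t, c ≤ t ∧ x ≤ F t) : Monotone (ginv c F) := by
  intro x y hxy
  apply le_csInf (hFub y)
  intro t ht
  exact csInf_le (ginv_set_bdd x) ⟨ht.1, hxy.trans ht.2⟩

lemma le_F_ginv (hFmono : MonotoneOn F (Ici c)) (hFub : ∀ x, ∃ t, c ≤ t ∧ x ≤ F t)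
    (hFcont : ContinuousOn F (Ici c)) (x : ℝ) : x ≤ F (ginv c F x) := by
  set m := ginv c F x with hm
  have hmc : c ≤ m := le_ginv hFub x
  have key : ∀ ε > (0:ℝ), x ≤ F (m + ε) := by
    intro ε hε
    obtain ⟨t, ht, htm⟩ := exists_lt_of_csInf_lt (hFub x) (show m < m + ε by linarith)
    exact ht.2.trans (hFmono (ht.1) (by simp only [mem_Ici]; linarith) htm.le)
  have hcont : ContinuousWithinAt F (Ici c) m := hFcont m hmc
  have h1 : Filter.Tendsto (fun ε : ℝ => m + ε) (nhdsWithin 0 (Ioi 0)) (nhdsWithin m (Ici c)) := by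
    rw [tendsto_nhdsWithin_iff]
    constructor
    · have := (continuous_const.add continuous_id (f := fun ε : ℝ => m)).tendsto 0
      simpa [Pi.add_def] using this.mono_left nhdsWithin_le_nhds
    · filter_upwards [self_mem_nhdsWithin] with ε hε
      simp only [mem_Ici]
      have : (0:ℝ) < ε := hε
      linarith
  have htend := hcont.tendsto.comp h1
  exact ge_of_tendsto htend (by filter_upwards [self_mem_nhdsWithin] using fun ε hε => key ε hε)

lemma ginv_convexOn (hFmono : MonotoneOn F (Ici c)) (hFub : ∀ x, ∃ t, c ≤ t ∧ x ≤ F t)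
    (hFcont : ContinuousOn F (Ici c)) (hFconc : ConcaveOn ℝ (Ici c) F) :
    ConvexOn ℝ univ (ginv c F) := by
  refine ⟨convex_univ, ?_⟩
  intro x _ y _ p q hp hq hpq
  have hax : x ≤ F (ginv c F x) := le_F_ginv hFmono hFub hFcont x
  have hay : y ≤ F (ginv c F y) := le_F_ginv hFmono hFub hFcont y
  have hcx : c ≤ ginv c F x := le_ginv hFub x
  have hcy : c ≤ ginv c F y := le_ginv hFub y
  have hmem : c ≤ p * ginv c F x + q * ginv c F y := by
    have h1 := mul_le_mul_of_nonneg_left hcx hp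
    have h2 := mul_le_mul_of_nonneg_left hcy hq
    have h3 : p*c + q*c = c := by rw [← add_mul, hpq, one_mul]
    linarith
  have hconc := hFconc.2 (mem_Ici.mpr hcx) (mem_Ici.mpr hcy) hp hq hpq
  apply ginv_le hmem
  calc p • x + q • y ≤ p * F (ginv c F x) + q * F (ginv c F y) := by
        simp only [smul_eq_mul]
        have := mul_le_mul_of_nonneg_left hax hp
        have := mul_le_mul_of_nonneg_left hay hq
        linarith
    _ ≤ F (p * ginv c F x + q * ginv c F y) := by
        simpa [smul_eq_mul] using hconc

end Ginv


variable {α L : ℝ}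

lemma psiInv_mono (hα : 0 < α) (hL : 0 ≤ L) : MonotoneOn (PsiInv α L) (Ici 0) := by
  intro s hs t ht hst
  have h1 : (0:ℝ) < 1 + s := by simp at hs; linarith
  have h2 : Real.log (1 + s) ≤ Real.log (1 + t) := by
    apply Real.log_le_log h1; linarith
  have h3 : 0 ≤ Real.log (1 + s) := Real.log_nonneg (by simp at hs; linarith)
  unfold PsiInv
  exact add_le_add (Real.sqrt_le_sqrt h2)
    (mul_le_mul_of_nonneg_left (Real.rpow_le_rpow h3 h2 (by positivity)) hL)

lemma psiInv_cont (hα : 0 < α) : ContinuousOn (PsiInv α L) (Ici 0) := by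
  have hbase : ContinuousOn (fun t : ℝ => Real.log (1 + t)) (Ici 0) := by
    apply ContinuousOn.log (by fun_prop)
    intro t ht; simp at ht; positivity
  apply ContinuousOn.add
  · exact hbase.sqrt
  · exact continuousOn_const.mul (hbase.rpow_const (fun t ht => Or.inr (by positivity)))

lemma psiInv_ub (hα : 0 < α) (hL : 0 ≤ L) : ∀ x : ℝ, ∃ t, 0 ≤ t ∧ x ≤ PsiInv α L t := by
  intro x
  refine ⟨Real.exp (x^2) - 1, by nlinarith [Real.one_le_exp (sq_nonneg x)], ?_⟩
  unfold PsiInv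
  have h1 : 1 + (Real.exp (x^2) - 1) = Real.exp (x^2) := by ring
  rw [h1, Real.log_exp]
  have h2 : x ≤ Real.sqrt (x^2) := by
    rw [Real.sqrt_sq_eq_abs]; exact le_abs_self x
  have h3 : 0 ≤ L * (x^2) ^ (1/α) := by positivity
  linarith

lemma psiInv_nonneg (hα : 0 < α) (hL : 0 ≤ L) {t : ℝ} (ht : 0 ≤ t) : 0 ≤ PsiInv α L t := by
  unfold PsiInv
  have h3 : 0 ≤ Real.log (1 + t) := Real.log_nonneg (by linarith)
  positivity


noncomputable def Hfun (α L t : ℝ) : ℝ :=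
  Real.sqrt (Real.log (2*t)) + L * Real.log (2*t - 1 + Real.exp (1/α - 1)) ^ (1/α)

variable {α L : ℝ}

lemma psiInv_concave (hα : 0 < α) (hα1 : 1 ≤ α) (hL : 0 ≤ L) :
    ConcaveOn ℝ (Ici 0) (PsiInv α L) := by
  have h1 : ConcaveOn ℝ (Ici (0:ℝ)) (fun t => Real.sqrt (Real.log (1 + t))) := by
    have := concaveOn_log_rpow (1/2) 1 1 0 (by norm_num) one_pos
      (by norm_num [Real.exp_zero])
    have heq : (fun t : ℝ => Real.log (1*t + 1) ^ ((1:ℝ)/2))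
        = (fun t : ℝ => Real.sqrt (Real.log (1 + t))) := by
      funext t; rw [Real.sqrt_eq_rpow, one_mul, add_comm]
    rwa [heq] at this
  have h2 : ConcaveOn ℝ (Ici (0:ℝ)) (fun t => L * Real.log (1 + t) ^ (1/α)) := by
    have hp : 0 < 1/α := by positivity
    have hple : 1/α ≤ 1 := by
      rw [div_le_one hα]; exact hα1
    have := concaveOn_log_rpow (1/α) 1 1 0 hp one_pos
      (by rw [max_eq_right (by linarith), Real.exp_zero]; norm_num)
    have heq : (fun t : ℝ => Real.log (1*t + 1) ^ ((1:ℝ)/α))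
        = (fun t : ℝ => Real.log (1 + t) ^ (1/α)) := by
      funext t; rw [one_mul, add_comm]
    rw [heq] at this
    have := this.smul hL
    simpa [smul_eq_mul] using this
  unfold PsiInv
  exact h1.add h2

section Hlem
variable (hα : 0 < α) (hα1 : α < 1) (hL : 0 ≤ L)
include hα hα1

lemma beta_gt : 1 < 1/α := by rw [lt_div_iff₀ hα]; linarith

lemma E_ge_one : 1 ≤ Real.exp (1/α - 1) := by
  have := beta_gt (α := α) hα hα1
  exact Real.one_le_exp (by linarith)

include hL

lemma Hfun_mono : MonotoneOn (Hfun α L) (Ici (1/2 : ℝ)) := by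
  have hE := E_ge_one hα hα1
  intro s hs t ht hst
  simp only [mem_Ici] at hs ht
  have h1 : (0:ℝ) < 2*s := by linarith
  have h2 : (0:ℝ) < 2*s - 1 + Real.exp (1/α - 1) := by linarith
  have h3 : Real.log (2*s) ≤ Real.log (2*t) := Real.log_le_log h1 (by linarith)
  have h4 : Real.log (2*s - 1 + Real.exp (1/α-1)) ≤ Real.log (2*t - 1 + Real.exp (1/α-1)) :=
    Real.log_le_log h2 (by linarith)
  have h5 : 0 ≤ Real.log (2*s - 1 + Real.exp (1/α-1)) := Real.log_nonneg (by linarith)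
  unfold Hfun
  exact add_le_add (Real.sqrt_le_sqrt h3)
    (mul_le_mul_of_nonneg_left (Real.rpow_le_rpow h5 h4 (by positivity)) hL)

lemma Hfun_cont : ContinuousOn (Hfun α L) (Ici (1/2 : ℝ)) := by
  have hE := E_ge_one hα hα1
  have hb1 : ContinuousOn (fun t : ℝ => Real.log (2*t)) (Ici (1/2:ℝ)) := by
    apply ContinuousOn.log (by fun_prop)
    intro t ht; simp only [mem_Ici] at ht; positivity
  have hb2 : ContinuousOn (fun t : ℝ => Real.log (2*t - 1 + Real.exp (1/α-1))) (Ici (1/2:ℝ)) := by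
    apply ContinuousOn.log (by fun_prop)
    intro t ht; simp only [mem_Ici] at ht; nlinarith
  exact hb1.sqrt.add (continuousOn_const.mul
    (hb2.rpow_const (fun t ht => Or.inr (by positivity))))

lemma Hfun_ub : ∀ x : ℝ, ∃ t, 1/2 ≤ t ∧ x ≤ Hfun α L t := by
  have hE := E_ge_one hα hα1
  intro x
  refine ⟨Real.exp (x^2) / 2, ?_, ?_⟩
  · have := Real.one_le_exp (sq_nonneg x); linarith
  · unfold Hfun
    have h1 : 2 * (Real.exp (x^2)/2) = Real.exp (x^2) := by ring
    rw [h1, Real.log_exp]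
    have h2 : x ≤ Real.sqrt (x^2) := by rw [Real.sqrt_sq_eq_abs]; exact le_abs_self x
    have h3 : (0:ℝ) ≤ Real.log (Real.exp (x^2) - 1 + Real.exp (1/α-1)) := by
      apply Real.log_nonneg
      have := Real.one_le_exp (sq_nonneg x); linarith
    have h4 : 0 ≤ L * Real.log (Real.exp (x^2) - 1 + Real.exp (1/α-1)) ^ (1/α) := by positivity
    linarith

lemma Hfun_concave : ConcaveOn ℝ (Ici (1/2:ℝ)) (Hfun α L) := by
  have hbeta := beta_gt (α := α) hα hα1
  have h1 : ConcaveOn ℝ (Ici (1/2:ℝ)) (fun t => Real.sqrt (Real.log (2*t))) := by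
    have := concaveOn_log_rpow (1/2) 2 0 (1/2) (by norm_num) two_pos
      (by norm_num [Real.exp_zero])
    have heq : (fun t : ℝ => Real.log (2*t + 0) ^ ((1:ℝ)/2))
        = (fun t : ℝ => Real.sqrt (Real.log (2*t))) := by
      funext t; rw [add_zero, Real.sqrt_eq_rpow]
    rwa [heq] at this
  have h2 : ConcaveOn ℝ (Ici (1/2:ℝ))
      (fun t => L * Real.log (2*t - 1 + Real.exp (1/α-1)) ^ (1/α)) := by
    have := concaveOn_log_rpow (1/α) 2 (Real.exp (1/α-1) - 1) (1/2) (by positivity) two_pos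
      (by rw [max_eq_left (by linarith)]; ring_nf; nlinarith [Real.exp_pos (1/α - 1), Real.exp_pos (-1 + α⁻¹)])
    have heq : (fun t : ℝ => Real.log (2*t + (Real.exp (1/α-1) - 1)) ^ ((1:ℝ)/α))
        = (fun t : ℝ => Real.log (2*t - 1 + Real.exp (1/α-1)) ^ (1/α)) := by
      funext t; ring_nf
    rw [heq] at this
    have := this.smul hL
    simpa [smul_eq_mul] using this
  unfold Hfun
  exact h1.add h2

end Hlem


lemma log_three_half : (2:ℝ)/5 ≤ Real.log (3/2) := by
  rw [Real.le_log_iff_exp_le (by norm_num)]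
  have h5 : Real.exp (2/5) ^ (5:ℕ) = Real.exp 2 := by
    rw [← Real.exp_nat_mul]; norm_num
  have h2 : Real.exp 2 = Real.exp 1 * Real.exp 1 := by
    rw [← Real.exp_add]; norm_num
  -- exp(2/5) ≤ 3/2 iff exp(2/5)^5 ≤ (3/2)^5 = 7.59375 and exp 2 < 2.72^2 < 7.4
  by_contra hcon
  push_neg at hcon
  have h3 : ((3:ℝ)/2) ^ (5:ℕ) < Real.exp (2/5) ^ (5:ℕ) := by
    apply pow_lt_pow_left₀ hcon (by norm_num)
    norm_num
  rw [h5, h2] at h3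
  nlinarith [Real.exp_one_lt_d9, Real.exp_pos 1]

section Ineq
variable (hα : 0 < α) (hα1 : α < 1) (hL : 0 ≤ L)
include hα hL

-- Lemma A : PsiInv t ≤ Hfun ((t+1)/2) for t ≥ 0
lemma psiInv_le_Hfun (hα1' : α < 1) {t : ℝ} (ht : 0 ≤ t) :
    PsiInv α L t ≤ Hfun α L ((t+1)/2) := by
  have hbeta : 1 < 1/α := by rw [lt_div_iff₀ hα]; linarith
  have hE : 1 ≤ Real.exp (1/α - 1) := Real.one_le_exp (by linarith)
  unfold PsiInv Hfun
  have h1 : 2 * ((t+1)/2) = 1 + t := by ring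
  have h2 : 2 * ((t+1)/2) - 1 + Real.exp (1/α-1) = t + Real.exp (1/α-1) := by ring
  rw [h2, h1]
  have h3 : Real.log (1+t) ≤ Real.log (t + Real.exp (1/α-1)) :=
    Real.log_le_log (by linarith) (by linarith)
  have h4 : 0 ≤ Real.log (1+t) := Real.log_nonneg (by linarith)
  exact add_le_add le_rfl
    (mul_le_mul_of_nonneg_left (Real.rpow_le_rpow h4 h3 (by positivity)) hL)

-- key log bound: log(2s-1+E) ≤ (4/α) * log(1+s) for s ≥ 1/2
lemma log_bound (hα1' : α < 1) {s : ℝ} (hs : 1/2 ≤ s) :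
    Real.log (2*s - 1 + Real.exp (1/α - 1)) ≤ (4/α) * Real.log (1+s) := by
  have hbeta : 1 < 1/α := by rw [lt_div_iff₀ hα]; linarith
  have hE : 1 ≤ Real.exp (1/α - 1) := Real.one_le_exp (by linarith)
  have hE0 : 0 < Real.exp (1/α - 1) := Real.exp_pos _
  have hls : Real.log (3/2) ≤ Real.log (1+s) :=
    Real.log_le_log (by norm_num) (by linarith)
  have h32 := log_three_half
  -- step 1 : 2s-1+E ≤ E*(1+2s)
  have h1 : 2*s - 1 + Real.exp (1/α-1) ≤ Real.exp (1/α-1) * (1+2*s) := by nlinarith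
  have h2 : Real.log (2*s - 1 + Real.exp (1/α-1)) ≤ Real.log (Real.exp (1/α-1) * (1+2*s)) :=
    Real.log_le_log (by nlinarith) h1
  have h3 : Real.log (Real.exp (1/α-1) * (1+2*s)) = (1/α - 1) + Real.log (1+2*s) := by
    rw [Real.log_mul hE0.ne' (by linarith), Real.log_exp]
  -- step 2 : log(1+2s) ≤ 2 log(1+s)
  have h4 : Real.log (1+2*s) ≤ 2 * Real.log (1+s) := by
    have : (1+2*s) ≤ (1+s)^2 := by nlinarith
    calc Real.log (1+2*s) ≤ Real.log ((1+s)^2) := Real.log_le_log (by linarith) this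
      _ = 2 * Real.log (1+s) := by rw [Real.log_pow]; norm_num
  -- step 3 : 1/α - 1 ≤ (4/α - 2) * log(1+s)
  have h5 : 1/α - 1 ≤ (4/α - 2) * Real.log (1+s) := by
    have h6 : (4/α - 2) * (2/5) ≤ (4/α - 2) * Real.log (1+s) := by
      apply mul_le_mul_of_nonneg_left (le_trans h32 hls)
      have h9 : (2:ℝ) ≤ 4/α := by rw [le_div_iff₀ hα]; linarith
      linarith
    have h7 : 1/α - 1 ≤ (4/α - 2) * (2/5) := by
      have hpos : 0 < 3/(5*α) := by positivity
      have hdiff : (4/α - 2)*(2/5) - (1/α - 1) = 3/(5*α) + 1/5 := by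
        field_simp
        ring
      linarith
    linarith
  linarith

end Ineq

section IneqB
variable (hα : 0 < α) (hα1 : α < 1) (hL : 0 ≤ L)
include hα hα1 hL

lemma Hfun_le_Q_psiInv {s : ℝ} (hs : 1/2 ≤ s) :
    Hfun α L s ≤ (2 * Real.exp 1 * (4/α) ^ (1/α)) * PsiInv α L s := by
  set Q := 2 * Real.exp 1 * (4/α) ^ (1/α) with hQdef
  have hbeta : 1 < 1/α := by rw [lt_div_iff₀ hα]; linarith
  have hE : 1 ≤ Real.exp (1/α - 1) := Real.one_le_exp (by linarith)
  have hl : Real.log (3/2) ≤ Real.log (1+s) := Real.log_le_log (by norm_num) (by linarith)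
  have hlpos : 0 < Real.log (1+s) := by
    have : (0:ℝ) < Real.log (3/2) := Real.log_pos (by norm_num)
    linarith
  have hbase1 : (1:ℝ) ≤ 4/α := by rw [le_div_iff₀ hα]; linarith
  have hrpow1 : (1:ℝ) ≤ (4/α) ^ (1/α) := by
    apply Real.one_le_rpow hbase1 (by positivity)
  have hQ2 : (2:ℝ) ≤ Q := by
    have he : (1:ℝ) ≤ Real.exp 1 := Real.one_le_exp (by norm_num)
    rw [hQdef]
    nlinarith
  -- sqrt part
  have hsq : Real.sqrt (Real.log (2*s)) ≤ 2 * Real.sqrt (Real.log (1+s)) := by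
    have h1 : Real.log (2*s) ≤ 2 * Real.log (1+s) := by
      have h2 : 2*s ≤ (1+s)^2 := by nlinarith
      calc Real.log (2*s) ≤ Real.log ((1+s)^2) := Real.log_le_log (by linarith) h2
        _ = 2 * Real.log (1+s) := by rw [Real.log_pow]; norm_num
    calc Real.sqrt (Real.log (2*s)) ≤ Real.sqrt (2 * Real.log (1+s)) := Real.sqrt_le_sqrt h1
      _ = Real.sqrt 2 * Real.sqrt (Real.log (1+s)) := Real.sqrt_mul (by norm_num) _
      _ ≤ 2 * Real.sqrt (Real.log (1+s)) := by
          apply mul_le_mul_of_nonneg_right _ (Real.sqrt_nonneg _)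
          nlinarith [Real.sq_sqrt (by norm_num : (0:ℝ) ≤ 2), Real.sqrt_nonneg 2]
  -- L part
  have hLpart : L * Real.log (2*s - 1 + Real.exp (1/α-1)) ^ (1/α)
      ≤ Q * (L * Real.log (1+s) ^ (1/α)) := by
    have hG0 : 0 ≤ Real.log (2*s - 1 + Real.exp (1/α-1)) := Real.log_nonneg (by linarith)
    have hlog := log_bound hα hL hα1 hs
    have h3 : Real.log (2*s - 1 + Real.exp (1/α-1)) ^ (1/α)
        ≤ ((4/α) * Real.log (1+s)) ^ (1/α) := Real.rpow_le_rpow hG0 hlog (by positivity)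
    have h4 : ((4/α) * Real.log (1+s)) ^ (1/α)
        = (4/α) ^ (1/α) * Real.log (1+s) ^ (1/α) :=
      Real.mul_rpow (by positivity) hlpos.le
    have h5 : (4/α) ^ (1/α) ≤ Q := by
      have he : (1:ℝ) ≤ Real.exp 1 := Real.one_le_exp (by norm_num)
      rw [hQdef]
      nlinarith [Real.rpow_nonneg (show (0:ℝ) ≤ 4/α by positivity) (1/α)]
    calc L * Real.log (2*s - 1 + Real.exp (1/α-1)) ^ (1/α)
        ≤ L * ((4/α) ^ (1/α) * Real.log (1+s) ^ (1/α)) := by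
          rw [← h4]; exact mul_le_mul_of_nonneg_left h3 hL
      _ ≤ Q * (L * Real.log (1+s) ^ (1/α)) := by
          have h6 : 0 ≤ Real.log (1+s) ^ (1/α) := Real.rpow_nonneg hlpos.le _
          calc L * ((4/α) ^ (1/α) * Real.log (1+s) ^ (1/α))
              = (4/α) ^ (1/α) * (L * Real.log (1+s) ^ (1/α)) := by ring
            _ ≤ Q * (L * Real.log (1+s) ^ (1/α)) := by
                apply mul_le_mul_of_nonneg_right h5 (by positivity)
  have hsq2 : Real.sqrt (Real.log (2*s)) ≤ Q * Real.sqrt (Real.log (1+s)) := by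
    calc Real.sqrt (Real.log (2*s)) ≤ 2 * Real.sqrt (Real.log (1+s)) := hsq
      _ ≤ Q * Real.sqrt (Real.log (1+s)) :=
          mul_le_mul_of_nonneg_right hQ2 (Real.sqrt_nonneg _)
  unfold Hfun PsiInv
  calc Real.sqrt (Real.log (2*s)) + L * Real.log (2*s - 1 + Real.exp (1/α-1)) ^ (1/α)
      ≤ Q * Real.sqrt (Real.log (1+s)) + Q * (L * Real.log (1+s) ^ (1/α)) :=
        add_le_add hsq2 hLpart
    _ = Q * (Real.sqrt (Real.log (1+s)) + L * Real.log (1+s) ^ (1/α)) := by ring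

end IneqB

section PsiProps
variable {α L : ℝ} (hα : 0 < α) (hL : 0 ≤ L)
include hα hL

lemma psi_eq : Psi α L = ginv 0 (PsiInv α L) := rfl

lemma psi_mono : Monotone (Psi α L) := by
  rw [psi_eq hα hL]; exact ginv_mono (psiInv_ub hα hL)

lemma psi_nonneg : ∀ x, 0 ≤ Psi α L x := by
  rw [psi_eq hα hL]; exact le_ginv (psiInv_ub hα hL)

lemma psi_le {x t : ℝ} (h1 : 0 ≤ t) (h2 : x ≤ PsiInv α L t) : Psi α L x ≤ t := by
  rw [psi_eq hα hL]; exact ginv_le h1 h2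

lemma le_psiInv_psi (x : ℝ) : x ≤ PsiInv α L (Psi α L x) := by
  rw [psi_eq hα hL]
  exact le_F_ginv (psiInv_mono hα hL) (psiInv_ub hα hL) (psiInv_cont hα) x

lemma psi_zero : Psi α L 0 = 0 := by
  have h1 : PsiInv α L 0 = 0 := by
    unfold PsiInv
    rw [add_zero, Real.log_one, Real.sqrt_zero, Real.zero_rpow (by positivity), mul_zero,
      add_zero]
  have h2 : Psi α L 0 ≤ 0 := psi_le hα hL le_rfl (by rw [h1])
  exact le_antisymm h2 (psi_nonneg hα hL 0)

lemma psi_convex (hα1 : 1 ≤ α) : ConvexOn ℝ Set.univ (Psi α L) := by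
  rw [psi_eq hα hL]
  exact ginv_convexOn (psiInv_mono hα hL) (psiInv_ub hα hL) (psiInv_cont hα)
    (psiInv_concave hα hα1 hL)

end PsiProps

noncomputable def PhiH (α L : ℝ) : ℝ → ℝ := ginv (1/2) (Hfun α L)

section PhiHProps
variable {α L : ℝ} (hα : 0 < α) (hα1 : α < 1) (hL : 0 ≤ L)
include hα hα1 hL

lemma phiH_half_le : ∀ x, 1/2 ≤ PhiH α L x :=
  le_ginv (Hfun_ub hα hα1 hL)

lemma phiH_nonneg : ∀ x, 0 ≤ PhiH α L x :=
  fun x => le_trans (by norm_num) (phiH_half_le hα hα1 hL x)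

lemma phiH_mono : Monotone (PhiH α L) := ginv_mono (Hfun_ub hα hα1 hL)

lemma phiH_convex : ConvexOn ℝ Set.univ (PhiH α L) :=
  ginv_convexOn (Hfun_mono hα hα1 hL) (Hfun_ub hα hα1 hL) (Hfun_cont hα hα1 hL)
    (Hfun_concave hα hα1 hL)

lemma le_Hfun_phiH (x : ℝ) : x ≤ Hfun α L (PhiH α L x) :=
  le_F_ginv (Hfun_mono hα hα1 hL) (Hfun_ub hα hα1 hL) (Hfun_cont hα hα1 hL) x

lemma phiH_B (x : ℝ) (hx : 0 ≤ x) :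
    Psi α L (x / (2 * Real.exp 1 * (4/α) ^ (1/α))) ≤ PhiH α L x := by
  set Q := 2 * Real.exp 1 * (4/α) ^ (1/α) with hQdef
  have hQ0 : 0 < Q := by
    have he : (0:ℝ) < Real.exp 1 := Real.exp_pos 1
    have h2 : (0:ℝ) < (4/α) ^ (1/α) := Real.rpow_pos_of_pos (by positivity) _
    positivity
  apply psi_le hα hL (phiH_nonneg hα hα1 hL x)
  rw [div_le_iff₀ hQ0]
  have h1 : x ≤ Hfun α L (PhiH α L x) := le_Hfun_phiH hα hα1 hL x
  have h2 : Hfun α L (PhiH α L x) ≤ Q * PsiInv α L (PhiH α L x) :=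
    Hfun_le_Q_psiInv hα hα1 hL (phiH_half_le hα hα1 hL x)
  calc x ≤ Q * PsiInv α L (PhiH α L x) := le_trans h1 h2
    _ = PsiInv α L (PhiH α L x) * Q := mul_comm _ _

lemma phiH_A (x : ℝ) (hx : 0 ≤ x) : PhiH α L x ≤ (Psi α L x + 1) / 2 := by
  apply ginv_le
  · have := psi_nonneg hα hL x; linarith
  · calc x ≤ PsiInv α L (Psi α L x) := le_psiInv_psi hα hL x
      _ ≤ Hfun α L ((Psi α L x + 1)/2) :=
        psiInv_le_Hfun hα hL hα1 (psi_nonneg hα hL x)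

end PhiHProps

section MeasureCore
variable {Ω : Type*} [MeasurableSpace Ω] (μ : Measure Ω) [IsProbabilityMeasure μ]

variable {Ω : Type*} [MeasurableSpace Ω] (μ : Measure Ω) [IsProbabilityMeasure μ]

theorem core_bound (Ψf : ℝ → ℝ) (hΨmono : Monotone Ψf) (Q : ℝ) (hQ : 1 ≤ Q) (Φ : ℝ → ℝ)
    (hΦconv : ConvexOn ℝ Set.univ Φ) (hΦmono : Monotone Φ) (hΦnonneg : ∀ x, 0 ≤ Φ x)
    (hB : ∀ x, 0 ≤ x → Ψf (x / Q) ≤ Φ x)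
    (hΦint : ∀ (Y : Ω → ℝ), Measurable Y → ∀ η : ℝ, 0 < η →
      (∫⁻ ω, ENNReal.ofReal (Ψf (|Y ω| / η)) ∂μ ≤ 1) →
      (∫⁻ ω, ENNReal.ofReal (Φ (|Y ω| / η)) ∂μ ≤ 1))
    (k : ℕ) (hk : 0 < k) (X : Fin k → Ω → ℝ) (hX : ∀ i, Measurable (X i))
    (η : Fin k → ℝ) (hη : ∀ i, 0 < η i)
    (hint : ∀ i, ∫⁻ ω, ENNReal.ofReal (Ψf (|X i ω| / η i)) ∂μ ≤ 1) :
    ∫⁻ ω, ENNReal.ofReal (Ψf (|∑ i, X i ω| / (Q * ∑ i, η i))) ∂μ ≤ 1 := by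
  set T : ℝ := ∑ i, η i with hT
  have hT0 : 0 < T := Finset.sum_pos (fun i _ => hη i) (by simp [Finset.univ_nonempty_iff]; exact Fin.pos_iff_nonempty.mp hk)
  have hQ0 : 0 < Q := lt_of_lt_of_le one_pos hQ
  -- weights
  set w : Fin k → ℝ := fun i => η i / T with hw
  have hw0 : ∀ i, 0 ≤ w i := fun i => le_of_lt (div_pos (hη i) hT0)
  have hw0' : ∀ i ∈ Finset.univ, (0:ℝ) ≤ w i := fun i _ => le_of_lt (div_pos (hη i) hT0)
  have hw1 : ∑ i, w i = 1 := by
    rw [hw]; rw [← Finset.sum_div]; exact div_self hT0.ne'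
  -- pointwise bound
  have hpoint : ∀ ω, ENNReal.ofReal (Ψf (|∑ i, X i ω| / (Q * T)))
      ≤ ∑ i, ENNReal.ofReal (w i) * ENNReal.ofReal (Φ (|X i ω| / η i)) := by
    intro ω
    have s1 : |∑ i, X i ω| ≤ ∑ i, |X i ω| := Finset.abs_sum_le_sum_abs _ _
    have s2 : Ψf (|∑ i, X i ω| / (Q * T)) ≤ Ψf (((∑ i, |X i ω|) / T) / Q) := by
      apply hΨmono
      rw [div_div, mul_comm T Q]
      gcongr
    have s3 : Ψf (((∑ i, |X i ω|) / T) / Q) ≤ Φ ((∑ i, |X i ω|) / T) :=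
      hB _ (by positivity)
    have s4 : (∑ i, |X i ω|) / T = ∑ i, w i • (|X i ω| / η i) := by
      rw [Finset.sum_div]
      apply Finset.sum_congr rfl
      intro i _
      rw [hw, smul_eq_mul]
      rw [div_mul_div_comm, mul_comm (η i) (|X i ω|), mul_div_mul_right _ _ (hη i).ne']
    have s5 : Φ ((∑ i, |X i ω|) / T) ≤ ∑ i, w i * Φ (|X i ω| / η i) := by
      rw [s4]
      exact hΦconv.map_sum_le hw0' hw1 (fun i _ => Set.mem_univ _)
    have s6 : Ψf (|∑ i, X i ω| / (Q * T)) ≤ ∑ i, w i * Φ (|X i ω| / η i) :=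
      le_trans s2 (le_trans s3 s5)
    calc ENNReal.ofReal (Ψf (|∑ i, X i ω| / (Q * T)))
        ≤ ENNReal.ofReal (∑ i, w i * Φ (|X i ω| / η i)) := ENNReal.ofReal_le_ofReal s6
      _ = ∑ i, ENNReal.ofReal (w i * Φ (|X i ω| / η i)) :=
          ENNReal.ofReal_sum_of_nonneg (fun i _ => mul_nonneg (hw0 i) (hΦnonneg _))
      _ = ∑ i, ENNReal.ofReal (w i) * ENNReal.ofReal (Φ (|X i ω| / η i)) := by
          apply Finset.sum_congr rfl
          intro i _
          rw [ENNReal.ofReal_mul (hw0 i)]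
  -- measurability
  have hmeas : ∀ i : Fin k, Measurable (fun ω => ENNReal.ofReal (Φ (|X i ω| / η i))) := by
    intro i
    exact (hΦmono.measurable.comp ((hX i).abs.div_const _)).ennreal_ofReal
  calc ∫⁻ ω, ENNReal.ofReal (Ψf (|∑ i, X i ω| / (Q * T))) ∂μ
      ≤ ∫⁻ ω, ∑ i, ENNReal.ofReal (w i) * ENNReal.ofReal (Φ (|X i ω| / η i)) ∂μ :=
        lintegral_mono hpoint
    _ = ∑ i, ∫⁻ ω, ENNReal.ofReal (w i) * ENNReal.ofReal (Φ (|X i ω| / η i)) ∂μ := by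
        apply lintegral_finset_sum
        intro i _
        exact (hmeas i).const_mul _
    _ = ∑ i, ENNReal.ofReal (w i) * ∫⁻ ω, ENNReal.ofReal (Φ (|X i ω| / η i)) ∂μ := by
        apply Finset.sum_congr rfl
        intro i _
        exact lintegral_const_mul _ (hmeas i)
    _ ≤ ∑ i, ENNReal.ofReal (w i) * 1 := by
        apply Finset.sum_le_sum
        intro i _
        exact mul_le_mul_right (hΦint (X i) (hX i) (η i) (hη i) (hint i)) _
    _ = ∑ i, ENNReal.ofReal (w i) := by simp
    _ = ENNReal.ofReal (∑ i, w i) := (ENNReal.ofReal_sum_of_nonneg (fun i _ => hw0 i)).symm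
    _ = 1 := by rw [hw1, ENNReal.ofReal_one]


lemma phiH_int (α L : ℝ) (hα : 0 < α) (hα1 : α < 1) (hL : 0 ≤ L)
    (Y : Ω → ℝ) (hY : Measurable Y) (η : ℝ) (hη : 0 < η)
    (h1 : ∫⁻ ω, ENNReal.ofReal (Psi α L (|Y ω| / η)) ∂μ ≤ 1) :
    ∫⁻ ω, ENNReal.ofReal (PhiH α L (|Y ω| / η)) ∂μ ≤ 1 := by
  have hmeas : Measurable (fun ω => ENNReal.ofReal (Psi α L (|Y ω| / η))) :=
    ((psi_mono hα hL).measurable.comp (hY.abs.div_const _)).ennreal_ofReal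
  have hpoint : ∀ ω, ENNReal.ofReal (PhiH α L (|Y ω| / η))
      ≤ (ENNReal.ofReal (Psi α L (|Y ω| / η)) + 1) / 2 := by
    intro ω
    have h2 := phiH_A hα hα1 hL (|Y ω| / η) (by positivity)
    calc ENNReal.ofReal (PhiH α L (|Y ω| / η))
        ≤ ENNReal.ofReal ((Psi α L (|Y ω| / η) + 1) / 2) := ENNReal.ofReal_le_ofReal h2
      _ = ENNReal.ofReal (Psi α L (|Y ω| / η) + 1) / ENNReal.ofReal 2 := by
          rw [ENNReal.ofReal_div_of_pos (by norm_num)]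
      _ = (ENNReal.ofReal (Psi α L (|Y ω| / η)) + 1) / 2 := by
          rw [ENNReal.ofReal_add (psi_nonneg hα hL _) (by norm_num), ENNReal.ofReal_one,
            ENNReal.ofReal_ofNat]
  calc ∫⁻ ω, ENNReal.ofReal (PhiH α L (|Y ω| / η)) ∂μ
      ≤ ∫⁻ ω, (ENNReal.ofReal (Psi α L (|Y ω| / η)) + 1) / 2 ∂μ := lintegral_mono hpoint
    _ = 2⁻¹ * ∫⁻ ω, (ENNReal.ofReal (Psi α L (|Y ω| / η)) + 1) ∂μ := by
        simp only [ENNReal.div_eq_inv_mul]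
        exact lintegral_const_mul _ (hmeas.add measurable_const)
    _ = 2⁻¹ * ((∫⁻ ω, ENNReal.ofReal (Psi α L (|Y ω| / η)) ∂μ) + 1) := by
        rw [lintegral_add_right _ measurable_const, lintegral_one, measure_univ]
    _ ≤ 2⁻¹ * (1 + 1) := by gcongr
    _ = 1 := by
        rw [one_add_one_eq_two, ENNReal.inv_mul_cancel (by norm_num) (by norm_num)]

lemma gbo_bound (α L Q : ℝ) (hα : 0 < α) (hL : 0 ≤ L) (hQ : 1 ≤ Q)
    (Φ : ℝ → ℝ) (hΦconv : ConvexOn ℝ Set.univ Φ) (hΦmono : Monotone Φ)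
    (hΦnonneg : ∀ x, 0 ≤ Φ x)
    (hB : ∀ x, 0 ≤ x → Psi α L (x / Q) ≤ Φ x)
    (hΦint : ∀ (Y : Ω → ℝ), Measurable Y → ∀ η : ℝ, 0 < η →
      (∫⁻ ω, ENNReal.ofReal (Psi α L (|Y ω| / η)) ∂μ ≤ 1) →
      (∫⁻ ω, ENNReal.ofReal (Φ (|Y ω| / η)) ∂μ ≤ 1))
    (k : ℕ) (hk : 0 < k) (X : Fin k → Ω → ℝ) (hX : ∀ i, Measurable (X i)) :
    gboNorm μ α L (fun ω => ∑ i, X i ω) ≤ ENNReal.ofReal Q * ∑ i, gboNorm μ α L (X i) := by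
  have hQ0 : (0:ℝ) < Q := lt_of_lt_of_le one_pos hQ
  have hQne : ENNReal.ofReal Q ≠ 0 := by
    simp only [ne_eq, ENNReal.ofReal_eq_zero, not_le]; exact hQ0
  apply ENNReal.le_of_forall_pos_le_add
  intro ε hε hlt
  have hsum_ne : ∑ i, gboNorm μ α L (X i) ≠ ⊤ := by
    intro h
    rw [h, ENNReal.mul_top hQne] at hlt
    exact (lt_irrefl _ hlt).elim
  have hNi : ∀ i, gboNorm μ α L (X i) ≠ ⊤ := by
    intro i
    exact ne_top_of_le_ne_top hsum_ne (Finset.single_le_sum (f := fun j => gboNorm μ α L (X j)) (fun j _ => zero_le) (Finset.mem_univ i))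
  set D : ℝ≥0∞ := ENNReal.ofReal Q * k + 1 with hD
  have hDne0 : D ≠ 0 := by simp [hD]
  have hDnetop : D ≠ ⊤ := by
    simp [hD, ENNReal.mul_ne_top, ENNReal.ofReal_ne_top, ENNReal.natCast_ne_top]
  set ε' : ℝ≥0∞ := (ε : ℝ≥0∞) / D with hε'
  have hε'0 : ε' ≠ 0 := by
    simp only [hε', ne_eq, ENNReal.div_eq_zero_iff, not_or]
    exact ⟨by exact_mod_cast hε.ne', hDnetop⟩
  have hchoice : ∀ i, ∃ t : ℝ, ((0 < t ∧
      ∫⁻ ω, ENNReal.ofReal (Psi α L (|X i ω| / t)) ∂μ ≤ 1) ∧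
      ENNReal.ofReal t < gboNorm μ α L (X i) + ε') := by
    intro i
    have h1 : gboNorm μ α L (X i) < gboNorm μ α L (X i) + ε' :=
      ENNReal.lt_add_right (hNi i) hε'0
    have h2 : sInf (ENNReal.ofReal '' {t : ℝ | 0 < t ∧
        ∫⁻ ω, ENNReal.ofReal (Psi α L (|X i ω| / t)) ∂μ ≤ 1}) < gboNorm μ α L (X i) + ε' := h1
    obtain ⟨a, ha, hlt'⟩ := sInf_lt_iff.mp h2
    obtain ⟨t, hmem, rfl⟩ := ha
    exact ⟨t, hmem, hlt'⟩
  choose η hηmem hηlt using hchoice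
  have hη0 : ∀ i, 0 < η i := fun i => (hηmem i).1
  have hηint : ∀ i, ∫⁻ ω, ENNReal.ofReal (Psi α L (|X i ω| / η i)) ∂μ ≤ 1 :=
    fun i => (hηmem i).2
  have hcore := core_bound μ (Psi α L) (psi_mono hα hL) Q hQ Φ hΦconv hΦmono hΦnonneg hB hΦint
    k hk X hX η hη0 hηint
  have hT0 : (0:ℝ) < ∑ i, η i := Finset.sum_pos (fun i _ => hη0 i)
    (Finset.univ_nonempty_iff.mpr (Fin.pos_iff_nonempty.mp hk))
  have hle : gboNorm μ α L (fun ω => ∑ i, X i ω) ≤ ENNReal.ofReal (Q * ∑ i, η i) := by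
    apply sInf_le
    exact ⟨Q * ∑ i, η i, ⟨by positivity, hcore⟩, rfl⟩
  calc gboNorm μ α L (fun ω => ∑ i, X i ω)
      ≤ ENNReal.ofReal (Q * ∑ i, η i) := hle
    _ = ENNReal.ofReal Q * ENNReal.ofReal (∑ i, η i) := ENNReal.ofReal_mul hQ0.le
    _ = ENNReal.ofReal Q * ∑ i, ENNReal.ofReal (η i) := by
        rw [ENNReal.ofReal_sum_of_nonneg (fun i _ => (hη0 i).le)]
    _ ≤ ENNReal.ofReal Q * ∑ i, (gboNorm μ α L (X i) + ε') := by
        apply mul_le_mul_right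
        exact Finset.sum_le_sum (fun i _ => (hηlt i).le)
    _ = ENNReal.ofReal Q * ∑ i, gboNorm μ α L (X i) + (ENNReal.ofReal Q * k) * ε' := by
        rw [Finset.sum_add_distrib, mul_add, Finset.sum_const, Finset.card_fin, nsmul_eq_mul,
          mul_assoc]
    _ ≤ ENNReal.ofReal Q * ∑ i, gboNorm μ α L (X i) + D * ε' := by
        apply add_le_add_right
        apply mul_le_mul_left
        rw [hD]
        exact le_self_add
    _ ≤ ENNReal.ofReal Q * ∑ i, gboNorm μ α L (X i) + ε := by
        apply add_le_add_right
        rw [hε']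
        exact ENNReal.mul_div_le

end MeasureCore

/-- Quasi-norm property of the GBO norm:
`‖Σᵢ Xᵢ‖_{Ψ_{α,L}} ≤ Q_α Σᵢ ‖Xᵢ‖_{Ψ_{α,L}}`, where `Q_α = 2e(4/α)^{1/α}` if `α < 1`
and `Q_α = 1` if `α ≥ 1`. -/
theorem gbo_quasi_norm {Ω : Type*} [MeasurableSpace Ω] (μ : Measure Ω) [IsProbabilityMeasure μ]
    (α L : ℝ) (hα : 0 < α) (hL : 0 ≤ L) (k : ℕ) (X : Fin k → Ω → ℝ)
    (hX : ∀ i, Measurable (X i)) :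
    gboNorm μ α L (fun ω => ∑ i, X i ω) ≤
      ENNReal.ofReal (if α < 1 then 2 * Real.exp 1 * (4 / α) ^ (1 / α) else 1) *
        ∑ i, gboNorm μ α L (X i) := by
  rcases Nat.eq_zero_or_pos k with hk0 | hk
  · subst hk0
    have hS : (fun ω => ∑ i : Fin 0, X i ω) = fun _ : Ω => (0:ℝ) := by funext ω; simp
    rw [hS]
    have hsum0 : (∑ i : Fin 0, gboNorm μ α L (X i)) = 0 := by simp
    rw [hsum0, mul_zero]
    apply ENNReal.le_of_forall_pos_le_add
    intro ε hε _
    rw [zero_add]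
    have hεR : (0:ℝ) < (ε:ℝ) := hε
    have hint0 : ∫⁻ _ω, ENNReal.ofReal (Psi α L (|(0:ℝ)| / (ε:ℝ))) ∂μ ≤ 1 := by
      simp [psi_zero hα hL]
    rw [← ENNReal.ofReal_coe_nnreal]
    apply sInf_le
    exact ⟨(ε:ℝ), ⟨hεR, hint0⟩, rfl⟩
  · by_cases hα1 : α < 1
    · rw [if_pos hα1]
      have hQ1 : 1 ≤ 2 * Real.exp 1 * (4/α) ^ (1/α) := by
        have he : (1:ℝ) ≤ Real.exp 1 := Real.one_le_exp (by norm_num)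
        have h2 : (1:ℝ) ≤ (4/α) ^ (1/α) :=
          Real.one_le_rpow (by rw [le_div_iff₀ hα]; linarith) (by positivity)
        nlinarith
      exact gbo_bound μ α L _ hα hL hQ1 (PhiH α L) (phiH_convex hα hα1 hL)
        (phiH_mono hα hα1 hL) (phiH_nonneg hα hα1 hL) (phiH_B hα hα1 hL)
        (phiH_int μ α L hα hα1 hL) k hk X hX
    · rw [if_neg hα1]
      push_neg at hα1
      apply gbo_bound μ α L 1 hα hL le_rfl (Psi α L) (psi_convex hα hL hα1)
        (psi_mono hα hL) (psi_nonneg hα hL) ?_ ?_ k hk X hX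
      · intro x _
        rw [div_one]
      · exact fun Y _ η _ h => h
end

section
/- Let X_1, X_2, … be a sequence of (possibly dependent) real-valued random variables such that ‖X_k‖_{Ψ_{α,L}} < ∞ for all k ≥ 1, for some α, L > 0. Then ‖ sup_{k≥1} |X_k| / (√2 · ‖X_k‖_{Ψ_{α,L}} · Ψ_{α,S(α)·L}^{-1}(k)) ‖_{Ψ_{α, c(α)·M(α)·L}} ≤ 2.5·Q_α, where M(α) := max{1, 2^{(1−α)/α}}, S(α) := 2^{1/α}·M(α)/2, c(α) := 3^{1/α}/√3, and Q_α := 2e·(4/α)^{1/α} if α < 1, Q_α := 1 if α ≥ 1. -/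
open MeasureTheory ProbabilityTheory ENNReal

/-! ### Auxiliary lemmas -/

section Aux

lemma PsiInv_nonneg {α L : ℝ} (hL : 0 ≤ L) {t : ℝ} (ht : 0 ≤ t) : 0 ≤ PsiInv α L t := by
  have h1 : 0 ≤ Real.log (1 + t) := Real.log_nonneg (by linarith)
  exact add_nonneg (Real.sqrt_nonneg _) (mul_nonneg hL (Real.rpow_nonneg h1 _))

lemma PsiInv_pos {α L : ℝ} (hL : 0 ≤ L) {t : ℝ} (ht : 0 < t) : 0 < PsiInv α L t := by
  have h1 : 0 < Real.log (1 + t) := Real.log_pos (by linarith)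
  exact add_pos_of_pos_of_nonneg (Real.sqrt_pos.mpr h1)
    (mul_nonneg hL (Real.rpow_nonneg h1.le _))

lemma PsiInv_mono {α L : ℝ} (hα : 0 < α) (hL : 0 ≤ L) {s t : ℝ} (hs : 0 ≤ s) (hst : s ≤ t) :
    PsiInv α L s ≤ PsiInv α L t := by
  have h1 : Real.log (1 + s) ≤ Real.log (1 + t) := Real.log_le_log (by linarith) (by linarith)
  have h0 : 0 ≤ Real.log (1 + s) := Real.log_nonneg (by linarith)
  exact add_le_add (Real.sqrt_le_sqrt h1)
    (mul_le_mul_of_nonneg_left (Real.rpow_le_rpow h0 h1 (by positivity)) hL)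

lemma exists_le_PsiInv (α L : ℝ) (hα : 0 < α) (hL : 0 < L) (x : ℝ) :
    ∃ t : ℝ, 0 ≤ t ∧ x ≤ PsiInv α L t := by
  set m := max x 0 with hm
  have hm0 : 0 ≤ m := le_max_right _ _
  refine ⟨Real.exp ((m / L) ^ α) - 1, ?_, ?_⟩
  · have : (1:ℝ) ≤ Real.exp ((m / L) ^ α) := by
      rw [show (1:ℝ) = Real.exp 0 by simp]
      exact Real.exp_le_exp.mpr (Real.rpow_nonneg (by positivity) _)
    linarith
  · have hlog : Real.log (1 + (Real.exp ((m / L) ^ α) - 1)) = (m / L) ^ α := by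
      rw [show 1 + (Real.exp ((m / L) ^ α) - 1) = Real.exp ((m / L) ^ α) by ring, Real.log_exp]
    rw [PsiInv, hlog]
    have h2 : ((m / L) ^ α) ^ (1 / α) = m / L := by
      rw [← Real.rpow_mul (by positivity), mul_one_div_cancel hα.ne', Real.rpow_one]
    rw [h2]
    have : L * (m / L) = m := by field_simp
    rw [this]
    calc x ≤ m := le_max_left _ _
      _ ≤ Real.sqrt ((m / L) ^ α) + m := le_add_of_nonneg_left (Real.sqrt_nonneg _)

lemma Psi_nonneg (α L x : ℝ) : 0 ≤ Psi α L x :=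
  Real.sInf_nonneg (fun _ h => h.1)

lemma Psi_le {α L : ℝ} {t x : ℝ} (ht : 0 ≤ t) (hx : x ≤ PsiInv α L t) : Psi α L x ≤ t :=
  csInf_le ⟨0, fun _ h => h.1⟩ ⟨ht, hx⟩

lemma le_Psi {α L : ℝ} (hα : 0 < α) (hL : 0 < L) {u x : ℝ} (hu : 0 ≤ u)
    (hx : PsiInv α L u < x) : u ≤ Psi α L x := by
  apply le_csInf
  · obtain ⟨t, ht, hxt⟩ := exists_le_PsiInv α L hα hL x
    exact ⟨t, ht, hxt⟩
  · intro b hb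
    by_contra hc
    push_neg at hc
    have : PsiInv α L b ≤ PsiInv α L u := PsiInv_mono hα hL.le hb.1 hc.le
    linarith [hb.2]

lemma Psi_mono {α L : ℝ} (hα : 0 < α) (hL : 0 < L) : Monotone (Psi α L) := by
  intro x y hxy
  apply csInf_le_csInf ⟨0, fun _ h => h.1⟩
  · obtain ⟨t, ht, hyt⟩ := exists_le_PsiInv α L hα hL y
    exact ⟨t, ht, hyt⟩
  · intro t ht
    exact ⟨ht.1, le_trans hxy ht.2⟩

lemma Psi_measurable (α L : ℝ) (hα : 0 < α) (hL : 0 < L) : Measurable (Psi α L) :=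
  (Psi_mono hα hL).measurable

/-- `(x+y)^p ≤ max 1 (2^(p-1)) * (x^p + y^p)` for nonnegative reals. -/
lemma add_rpow_le_max_mul {x y p : ℝ} (hx : 0 ≤ x) (hy : 0 ≤ y) (hp : 0 < p) :
    (x + y) ^ p ≤ max 1 ((2:ℝ) ^ (p - 1)) * (x ^ p + y ^ p) := by
  lift x to NNReal using hx
  lift y to NNReal using hy
  have h : (x + y) ^ p ≤ max 1 ((2:NNReal) ^ (p - 1)) * (x ^ p + y ^ p) := by
    rcases le_or_gt p 1 with h1 | h1
    · refine le_trans ?_ (le_mul_of_one_le_left zero_le (le_max_left _ _))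
      have h2 := NNReal.rpow_add_rpow_le x y hp h1
      simp only [NNReal.rpow_one, one_div_one] at h2
      calc (x + y) ^ p ≤ ((x ^ p + y ^ p) ^ (1 / p)) ^ p := NNReal.rpow_le_rpow h2 hp.le
        _ = x ^ p + y ^ p := by
            rw [← NNReal.rpow_mul, one_div, inv_mul_cancel₀ hp.ne', NNReal.rpow_one]
    · exact le_trans (NNReal.rpow_add_le_mul_rpow_add_rpow x y h1.le)
        (mul_le_mul_of_nonneg_right (le_max_right _ _) zero_le)
  exact_mod_cast h

end Aux

section Key

set_option maxHeartbeats 1000000 in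
/-- The key scalar inequality behind the maximal inequality. -/
lemma key_ineq (α L Q t k : ℝ) (hα : 0 < α) (hL : 0 < L) (hQ : 1 ≤ Q)
    (ht : 1/2 ≤ t) (hk : 1 ≤ k) :
    PsiInv α L ((1+t)^2 * (1+k)^2 - 1) ≤
      Real.sqrt 2 * PsiInv α (((2:ℝ)^(1/α) * max 1 ((2:ℝ)^((1-α)/α)) / 2) * L) k
        * (2.5 * Q * PsiInv α ((((3:ℝ)^(1/α) / Real.sqrt 3) * max 1 ((2:ℝ)^((1-α)/α))) * L) t) := by
  have hp0 : (0:ℝ) < 1/α := by positivity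
  have hexp : (1-α)/α = 1/α - 1 := by rw [sub_div, div_self hα.ne']
  simp only [PsiInv]
  set p := 1/α with hpdef
  set M := max (1:ℝ) ((2:ℝ)^((1-α)/α)) with hMdef
  have hM1 : (1:ℝ) ≤ M := le_max_left _ _
  have hM2 : (2:ℝ)^(p-1) ≤ M := by rw [hMdef, hexp]; exact le_max_right _ _
  have hM0 : (0:ℝ) < M := lt_of_lt_of_le one_pos hM1
  -- logs
  set a := Real.log (1 + t) with hadef
  set b := Real.log (1 + k) with hbdef
  have hlog32 : (1:ℝ)/3 ≤ Real.log (3/2) := by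
    have h1 : Real.log (2/3 : ℝ) ≤ 2/3 - 1 := Real.log_le_sub_one_of_pos (by norm_num)
    have h2 : Real.log ((3/2 : ℝ)⁻¹) = - Real.log (3/2 : ℝ) := Real.log_inv _
    rw [show ((3/2:ℝ)⁻¹) = (2/3 : ℝ) by norm_num] at h2
    linarith
  have hlog2 : (1:ℝ)/2 ≤ Real.log 2 := by
    have h1 : Real.log (2⁻¹ : ℝ) ≤ 2⁻¹ - 1 := Real.log_le_sub_one_of_pos (by norm_num)
    have h2 : Real.log (2⁻¹ : ℝ) = - Real.log 2 := Real.log_inv 2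
    linarith
  have ha3 : (1:ℝ)/3 ≤ a := by
    refine le_trans hlog32 ?_
    exact Real.log_le_log (by norm_num) (by linarith)
  have hb2 : (1:ℝ)/2 ≤ b := by
    refine le_trans hlog2 ?_
    exact Real.log_le_log (by norm_num) (by linarith)
  have ha0 : 0 ≤ a := by linarith
  have hb0 : 0 ≤ b := by linarith
  have hsa : 0 ≤ Real.sqrt a := Real.sqrt_nonneg _
  have hsb : 0 ≤ Real.sqrt b := Real.sqrt_nonneg _
  have hs2 : 0 ≤ Real.sqrt 2 := Real.sqrt_nonneg _
  have hap0 : 0 ≤ a ^ p := Real.rpow_nonneg ha0 _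
  have hbp0 : 0 ≤ b ^ p := Real.rpow_nonneg hb0 _
  -- rewrite LHS log
  have hlogu : Real.log (1 + ((1+t)^2 * (1+k)^2 - 1)) = 2 * (a + b) := by
    rw [show 1 + ((1+t)^2 * (1+k)^2 - 1) = ((1+t) * (1+k))^2 by ring, Real.log_pow,
      Real.log_mul (by positivity) (by positivity)]
    push_cast; ring
  rw [hlogu]
  clear_value p M a b
  -- T1 : sqrt part
  have hQ2 : (1:ℝ) ≤ Q^2 := by nlinarith
  have hT1 : Real.sqrt (2*(a+b)) ≤ Real.sqrt 2 * (2.5 * Q) * (Real.sqrt a * Real.sqrt b) := by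
    have hab0 : 0 ≤ a * b := mul_nonneg ha0 hb0
    have hab1 : a ≤ 2*(a*b) := by nlinarith [mul_nonneg ha0 (show (0:ℝ) ≤ 2*b - 1 by linarith)]
    have hab2 : b ≤ 3*(a*b) := by nlinarith [mul_nonneg hb0 (show (0:ℝ) ≤ 3*a - 1 by linarith)]
    have h625 : a * b * 6.25 ≤ a * b * (2.5*Q)^2 := by nlinarith [mul_le_mul_of_nonneg_left hQ2 hab0]
    have hsq : 2*(a+b) ≤ (Real.sqrt 2 * (2.5 * Q) * (Real.sqrt a * Real.sqrt b))^2 := by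
      have e1 : (Real.sqrt 2 * (2.5 * Q) * (Real.sqrt a * Real.sqrt b))^2
          = (Real.sqrt 2)^2 * ((Real.sqrt a)^2 * ((Real.sqrt b)^2 * (2.5*Q)^2)) := by ring
      rw [e1, Real.sq_sqrt (by norm_num : (0:ℝ) ≤ 2), Real.sq_sqrt ha0, Real.sq_sqrt hb0]
      nlinarith [hab1, hab2, h625]
    calc Real.sqrt (2*(a+b))
        ≤ Real.sqrt ((Real.sqrt 2 * (2.5 * Q) * (Real.sqrt a * Real.sqrt b))^2) :=
          Real.sqrt_le_sqrt hsq
      _ = Real.sqrt 2 * (2.5 * Q) * (Real.sqrt a * Real.sqrt b) := Real.sqrt_sq (by positivity)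
  -- coefficient facts
  have h23 : (2:ℝ)^p ≤ (3:ℝ)^p := Real.rpow_le_rpow (by norm_num) (by norm_num) hp0.le
  have h2pos : (0:ℝ) < (2:ℝ)^p := Real.rpow_pos_of_pos (by norm_num) _
  have h3pos : (0:ℝ) < (3:ℝ)^p := Real.rpow_pos_of_pos (by norm_num) _
  have hs3pos : (0:ℝ) < Real.sqrt 3 := Real.sqrt_pos.mpr (by norm_num)
  have hs3le : Real.sqrt 3 ≤ 2.5 := by
    rw [show (2.5:ℝ) = Real.sqrt (2.5^2) from (Real.sqrt_sq (by norm_num)).symm]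
    exact Real.sqrt_le_sqrt (by norm_num)
  -- T2 : a^p term
  have hsb1 : (1:ℝ) ≤ Real.sqrt 2 * Real.sqrt b := by
    rw [← Real.sqrt_mul (by norm_num : (0:ℝ) ≤ 2)]
    rw [show (1:ℝ) = Real.sqrt 1 from Real.sqrt_one.symm]
    exact Real.sqrt_le_sqrt (by linarith)
  have hT2 : L * ((2:ℝ)^p * M * a^p) ≤
      Real.sqrt 2 * (2.5 * Q) * (((3:ℝ)^p / Real.sqrt 3 * M * L) * a^p) * Real.sqrt b := by
    have hc : (2:ℝ)^p ≤ Real.sqrt 2 * (2.5 * Q) * ((3:ℝ)^p / Real.sqrt 3) * Real.sqrt b := by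
      have e1 : Real.sqrt 2 * (2.5 * Q) * ((3:ℝ)^p / Real.sqrt 3) * Real.sqrt b
          = (2.5 / Real.sqrt 3) * Q * (Real.sqrt 2 * Real.sqrt b) * (3:ℝ)^p := by ring
      have h1 : (1:ℝ) ≤ 2.5 / Real.sqrt 3 := by
        rw [le_div_iff₀ hs3pos]; linarith
      have h12 : (1:ℝ) ≤ (2.5 / Real.sqrt 3) * Q := by nlinarith
      have h2 : (1:ℝ) ≤ (2.5 / Real.sqrt 3) * Q * (Real.sqrt 2 * Real.sqrt b) := by nlinarith
      rw [e1]
      calc (2:ℝ)^p ≤ (3:ℝ)^p := h23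
        _ = 1 * (3:ℝ)^p := (one_mul _).symm
        _ ≤ (2.5 / Real.sqrt 3) * Q * (Real.sqrt 2 * Real.sqrt b) * (3:ℝ)^p :=
            mul_le_mul_of_nonneg_right h2 h3pos.le
    calc L * ((2:ℝ)^p * M * a^p) = (2:ℝ)^p * (M * L * a^p) := by ring
      _ ≤ (Real.sqrt 2 * (2.5 * Q) * ((3:ℝ)^p / Real.sqrt 3) * Real.sqrt b) * (M * L * a^p) :=
          mul_le_mul_of_nonneg_right hc (by positivity)
      _ = _ := by ring
  -- T3 : b^p term
  have hT3 : L * ((2:ℝ)^p * M * b^p) ≤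
      Real.sqrt 2 * (((2:ℝ)^p * M / 2 * L) * b^p) * (2.5 * Q * Real.sqrt a) := by
    have hsa45 : (4:ℝ)/5 ≤ Real.sqrt 2 * Real.sqrt a := by
      rw [← Real.sqrt_mul (by norm_num : (0:ℝ) ≤ 2)]
      rw [show (4/5:ℝ) = Real.sqrt ((4/5)^2) from (Real.sqrt_sq (by norm_num)).symm]
      exact Real.sqrt_le_sqrt (by nlinarith)
    have h0 : 0 ≤ Real.sqrt 2 * Real.sqrt a := mul_nonneg hs2 hsa
    have hc : (2:ℝ) ≤ Real.sqrt 2 * (2.5 * Q) * Real.sqrt a := by nlinarith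
    calc L * ((2:ℝ)^p * M * b^p) = 2 * (((2:ℝ)^p * M / 2) * (L * b^p)) := by ring
      _ ≤ (Real.sqrt 2 * (2.5 * Q) * Real.sqrt a) * (((2:ℝ)^p * M / 2) * (L * b^p)) := by
          apply mul_le_mul_of_nonneg_right hc
          positivity
      _ = _ := by ring
  -- split of the rpow term
  have hsplit : (2*(a+b)) ^ p ≤ (2:ℝ)^p * (M * (a^p + b^p)) := by
    have e1 : (2*(a+b)) ^ p = (2:ℝ)^p * (a+b)^p := Real.mul_rpow (by norm_num) (by linarith)
    have e2 : (a+b)^p ≤ M * (a^p + b^p) := by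
      have h := add_rpow_le_max_mul ha0 hb0 hp0
      rwa [← hexp, ← hMdef] at h
    calc (2*(a+b)) ^ p = (2:ℝ)^p * (a+b)^p := e1
      _ ≤ (2:ℝ)^p * (M * (a^p + b^p)) := mul_le_mul_of_nonneg_left e2 h2pos.le
  have hLsplit : L * (2*(a+b))^p ≤ L * ((2:ℝ)^p * M * a^p) + L * ((2:ℝ)^p * M * b^p) := by
    calc L * (2*(a+b))^p ≤ L * ((2:ℝ)^p * (M * (a^p + b^p))) :=
          mul_le_mul_of_nonneg_left hsplit hL.le
      _ = L * ((2:ℝ)^p * M * a^p) + L * ((2:ℝ)^p * M * b^p) := by ring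
  -- assemble
  have hrest : 0 ≤ Real.sqrt 2 * ((((2:ℝ)^p * M / 2) * L) * b^p) * (2.5 * Q *
      (((3:ℝ)^p / Real.sqrt 3 * M) * L * a^p)) := by positivity
  linarith [hT1, hT2, hT3, hLsplit, hrest]

end Key

section Tail

open Set

/-- Markov-type tail bound from a finite GBO norm. -/
lemma tail_bound {Ω : Type*} [MeasurableSpace Ω] (μ : Measure Ω)
    (α L : ℝ) (hα : 0 < α) (hL : 0 < L) (X : Ω → ℝ) (hXm : Measurable X)
    (hfin : gboNorm μ α L X ≠ ⊤) {u A : ℝ} (hu : 0 < u)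
    (hA : PsiInv α L u ≤ A) :
    μ {ω | (gboNorm μ α L X).toReal * A < |X ω|} ≤ (ENNReal.ofReal u)⁻¹ := by
  set N := (gboNorm μ α L X).toReal with hN
  have hN0 : 0 ≤ N := ENNReal.toReal_nonneg
  have hPu0 : 0 ≤ PsiInv α L u := PsiInv_nonneg hL.le hu.le
  have hA0 : 0 ≤ A := le_trans hPu0 hA
  -- step 1 : a tail bound at level strictly above the norm
  have step : ∀ m : ℕ, μ {ω | (N + 1/(m+1)) * PsiInv α L u < |X ω|} ≤ (ENNReal.ofReal u)⁻¹ := by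
    intro m
    have hm : (0:ℝ) < 1/((m:ℝ)+1) := by positivity
    obtain ⟨η', hη'mem, hη'lt⟩ :
        ∃ η' ∈ {η : ℝ | 0 < η ∧ ∫⁻ ω, ENNReal.ofReal (Psi α L (|X ω| / η)) ∂μ ≤ 1},
          η' < N + 1/(m+1) := by
      have h1 : gboNorm μ α L X < ENNReal.ofReal (N + 1/(m+1)) := by
        conv_lhs => rw [← ENNReal.ofReal_toReal hfin]
        exact (ENNReal.ofReal_lt_ofReal_iff (by positivity)).mpr (by push_cast; linarith)
      rw [gboNorm, orliczNorm, sInf_lt_iff] at h1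
      obtain ⟨y, hy, hlt⟩ := h1
      obtain ⟨η', hη', rfl⟩ := hy
      refine ⟨η', hη', ?_⟩
      rwa [ENNReal.ofReal_lt_ofReal_iff (by positivity)] at hlt
    obtain ⟨hη'pos, hint⟩ := hη'mem
    have hsub : {ω | (N + 1/(m+1)) * PsiInv α L u < |X ω|} ⊆
        {ω | ENNReal.ofReal u ≤ ENNReal.ofReal (Psi α L (|X ω| / η'))} := by
      intro ω hω
      simp only [Set.mem_setOf_eq] at hω ⊢
      have h2 : η' * PsiInv α L u < |X ω| := by
        refine lt_of_le_of_lt ?_ hω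
        exact mul_le_mul_of_nonneg_right hη'lt.le hPu0
      have h3 : PsiInv α L u < |X ω| / η' := by
        rw [lt_div_iff₀ hη'pos]; linarith [h2]
      exact ENNReal.ofReal_le_ofReal (le_Psi hα hL hu.le h3)
    have hmble : AEMeasurable (fun ω => ENNReal.ofReal (Psi α L (|X ω| / η'))) μ :=
      (ENNReal.measurable_ofReal.comp
        ((Psi_measurable α L hα hL).comp (hXm.abs.div_const η'))).aemeasurable
    calc μ {ω | (N + 1/(m+1)) * PsiInv α L u < |X ω|}
        ≤ μ {ω | ENNReal.ofReal u ≤ ENNReal.ofReal (Psi α L (|X ω| / η'))} := measure_mono hsub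
      _ ≤ (ENNReal.ofReal u)⁻¹ := by
          rw [ENNReal.le_inv_iff_mul_le, mul_comm]
          calc ENNReal.ofReal u * μ {ω | ENNReal.ofReal u ≤ ENNReal.ofReal (Psi α L (|X ω| / η'))}
              ≤ ∫⁻ ω, ENNReal.ofReal (Psi α L (|X ω| / η')) ∂μ :=
                mul_meas_ge_le_lintegral₀ hmble _
            _ ≤ 1 := hint
  -- step 2 : the union
  have hsub2 : {ω | N * A < |X ω|} ⊆
      ⋃ m : ℕ, {ω | (N + 1/(m+1)) * PsiInv α L u < |X ω|} := by
    intro ω hω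
    simp only [Set.mem_setOf_eq, Set.mem_iUnion] at hω ⊢
    have hNP : N * PsiInv α L u ≤ N * A := mul_le_mul_of_nonneg_left hA hN0
    rcases eq_or_lt_of_le hPu0 with heq | hpos
    · refine ⟨0, ?_⟩
      rw [← heq, mul_zero]
      exact lt_of_le_of_lt (mul_nonneg hN0 hA0) hω
    · obtain ⟨m, hm⟩ := exists_nat_one_div_lt
        (show (0:ℝ) < (|X ω| - N*A)/PsiInv α L u from div_pos (by linarith) hpos)
      refine ⟨m, ?_⟩
      rw [div_lt_div_iff₀ (by positivity) hpos] at hm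
      have hm1 : (0:ℝ) < (m:ℝ)+1 := by positivity
      have h4 : (1/((m:ℝ)+1)) * PsiInv α L u < |X ω| - N*A := by
        rw [div_mul_eq_mul_div, div_lt_iff₀ hm1]
        push_cast at hm ⊢
        linarith [hm]
      push_cast
      nlinarith [h4, hNP]
  have hmono : Monotone (fun m : ℕ => {ω | (N + 1/(m+1)) * PsiInv α L u < |X ω|}) := by
    intro m m' hmm ω hω
    simp only [Set.mem_setOf_eq] at hω ⊢
    have h1 : (1:ℝ)/((m':ℝ)+1) ≤ 1/((m:ℝ)+1) := by
      apply one_div_le_one_div_of_le (by positivity)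
      have : (m:ℝ) ≤ (m':ℝ) := by exact_mod_cast hmm
      linarith
    refine lt_of_le_of_lt ?_ hω
    apply mul_le_mul_of_nonneg_right _ hPu0
    push_cast
    linarith
  calc μ {ω | N * A < |X ω|}
      ≤ μ (⋃ m : ℕ, {ω | (N + 1/(m+1)) * PsiInv α L u < |X ω|}) := measure_mono hsub2
    _ = ⨆ m : ℕ, μ {ω | (N + 1/(m+1)) * PsiInv α L u < |X ω|} :=
        (hmono.directed_le).measure_iUnion
    _ ≤ (ENNReal.ofReal u)⁻¹ := iSup_le step

/-- Partial sums of `1/((n+1)(n+3))` are at most `3/4`. -/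
lemma sum_range_bound (n : ℕ) :
    ∑ i ∈ Finset.range n, (((i:ℝ)+1) * ((i:ℝ)+3))⁻¹ ≤ 3/4 := by
  have key : ∀ m : ℕ, ∑ i ∈ Finset.range m, (((i:ℝ)+1) * ((i:ℝ)+3))⁻¹
      = 3/4 - (1/2) * (1/((m:ℝ)+1) + 1/((m:ℝ)+2)) := by
    intro m
    induction m with
    | zero => norm_num
    | succ m ih =>
      rw [Finset.sum_range_succ, ih]
      have h1 : ((m:ℝ)+1) ≠ 0 := by positivity
      have h2 : ((m:ℝ)+2) ≠ 0 := by positivity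
      have h3 : ((m:ℝ)+3) ≠ 0 := by positivity
      push_cast
      field_simp
      ring
  rw [key n]
  have h1 : (0:ℝ) < 1/((n:ℝ)+1) := by positivity
  have h2 : (0:ℝ) < 1/((n:ℝ)+2) := by positivity
  linarith

/-- The tail integral computation. -/
lemma lintegral_tail_aux :
    ∫⁻ t in Set.Ioi (1/2 : ℝ), ENNReal.ofReal ((3/4) * ((1+t)^2)⁻¹) = ENNReal.ofReal (1/2) := by
  have hderiv : ∀ x ∈ Set.Ici (1/2:ℝ), HasDerivAt (fun t : ℝ => -(3/4) * (1+t)⁻¹)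
      ((3/4) * ((1+x)^2)⁻¹) x := by
    intro x hx
    have hx12 : (1/2:ℝ) ≤ x := hx
    have hx0 : (1:ℝ) + x ≠ 0 := by positivity
    have h1 : HasDerivAt (fun t : ℝ => 1 + t) 1 x := (hasDerivAt_id x).const_add 1
    have h2 := h1.inv hx0
    have h3 := h2.const_mul (-(3/4) : ℝ)
    exact h3.congr_deriv (by ring)
  have hpos : ∀ x ∈ Set.Ioi (1/2:ℝ), 0 ≤ (3/4:ℝ) * ((1+x)^2)⁻¹ := fun x _ => by positivity
  have htend : Filter.Tendsto (fun t : ℝ => -(3/4) * (1+t)⁻¹) Filter.atTop (nhds 0) := by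
    have h1 : Filter.Tendsto (fun t : ℝ => (1+t)⁻¹) Filter.atTop (nhds 0) :=
      tendsto_inv_atTop_zero.comp (Filter.tendsto_atTop_add_const_left _ 1 Filter.tendsto_id)
    have h2 := h1.const_mul (-(3/4):ℝ)
    simpa using h2
  have hint := integral_Ioi_of_hasDerivAt_of_nonneg' hderiv hpos htend
  have hii : MeasureTheory.IntegrableOn (fun x : ℝ => (3/4)*((1+x)^2)⁻¹) (Set.Ioi (1/2:ℝ)) :=
    integrableOn_Ioi_deriv_of_nonneg' hderiv hpos htend
  rw [← MeasureTheory.ofReal_integral_eq_lintegral_ofReal hii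
    (MeasureTheory.ae_of_all _ (fun x => by positivity))]
  rw [hint]
  norm_num

end Tail

section Main

/-- Equivalence between `ℕ` and positive naturals. -/
def natEquiv : ℕ ≃ {k : ℕ // 1 ≤ k} :=
  ⟨fun n => ⟨n + 1, Nat.le_add_left 1 n⟩, fun k => k.1 - 1,
    fun n => by simp, fun k => Subtype.ext (Nat.sub_add_cancel k.2)⟩

lemma natEquiv_coe (n : ℕ) : ((natEquiv n : ℕ) : ℝ) = (n : ℝ) + 1 := by
  simp [natEquiv]

set_option maxHeartbeats 1000000 in
lemma main_bound {Ω : Type*} [MeasurableSpace Ω] (μ : Measure Ω) [IsProbabilityMeasure μ]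
    (α L LS LO Q : ℝ) (hα : 0 < α) (hL : 0 < L) (hLS : 0 < LS) (hLO : 0 < LO) (hQ : 1 ≤ Q)
    (X : ℕ → Ω → ℝ) (hX : ∀ k, Measurable (X k))
    (hfin : ∀ k : ℕ, 1 ≤ k → gboNorm μ α L (X k) ≠ ⊤)
    (hkey : ∀ t k : ℝ, 1/2 ≤ t → 1 ≤ k →
      PsiInv α L ((1+t)^2 * (1+k)^2 - 1) ≤
        Real.sqrt 2 * PsiInv α LS k * (2.5 * Q * PsiInv α LO t)) :
    gboNorm μ α LO (fun ω => ⨆ k : {k : ℕ // 1 ≤ k},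
        |X k ω| / (Real.sqrt 2 * (gboNorm μ α L (X k)).toReal * PsiInv α LS ((k : ℕ) : ℝ)))
      ≤ ENNReal.ofReal (2.5 * Q) := by
  have hη0 : (0:ℝ) < 2.5 * Q := by linarith
  set Y : Ω → ℝ := fun ω => ⨆ k : {k : ℕ // 1 ≤ k},
      |X k ω| / (Real.sqrt 2 * (gboNorm μ α L (X k)).toReal * PsiInv α LS ((k : ℕ) : ℝ)) with hY
  have hkR : ∀ k : {k : ℕ // 1 ≤ k}, (1:ℝ) ≤ ((k : ℕ) : ℝ) := fun k => by exact_mod_cast k.2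
  have hYnn : ∀ ω, 0 ≤ Y ω := by
    intro ω
    apply Real.iSup_nonneg
    intro k
    have hP : 0 < PsiInv α LS ((k : ℕ) : ℝ) := PsiInv_pos hLS.le (lt_of_lt_of_le one_pos (hkR k))
    exact div_nonneg (abs_nonneg _)
      (mul_nonneg (mul_nonneg (Real.sqrt_nonneg _) ENNReal.toReal_nonneg) hP.le)
  have hYmeas : Measurable Y := Measurable.iSup (fun k => (hX k).abs.div_const _)
  have hfnn : ∀ ω, 0 ≤ Psi α LO (Y ω / (2.5 * Q)) := fun ω => Psi_nonneg α LO _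
  have hfmeas : Measurable (fun ω => Psi α LO (Y ω / (2.5 * Q))) :=
    (Psi_measurable α LO hα hLO).comp (hYmeas.div_const _)
  -- main integral bound
  have hIntBound : ∫⁻ ω, ENNReal.ofReal (Psi α LO (Y ω / (2.5 * Q))) ∂μ ≤ 1 := by
    rw [MeasureTheory.lintegral_eq_lintegral_meas_lt μ (MeasureTheory.ae_of_all μ hfnn)
      hfmeas.aemeasurable]
    have hbd : ∀ t ∈ Set.Ioi (1/2 : ℝ), μ {a | t < Psi α LO (Y a / (2.5 * Q))} ≤
        ENNReal.ofReal ((3/4) * ((1+t)^2)⁻¹) := by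
      intro t ht
      have ht2 : (1/2 : ℝ) < t := ht
      have hPt : 0 < PsiInv α LO t := PsiInv_pos hLO.le (by linarith)
      set s := 2.5 * Q * PsiInv α LO t with hs
      have hs0 : 0 < s := mul_pos hη0 hPt
      have hsub1 : {a | t < Psi α LO (Y a / (2.5 * Q))} ⊆
          ⋃ k : {k : ℕ // 1 ≤ k}, {a | s < |X k a| /
            (Real.sqrt 2 * (gboNorm μ α L (X k)).toReal * PsiInv α LS ((k : ℕ) : ℝ))} := by
        intro ω hω
        simp only [Set.mem_setOf_eq] at hω
        by_contra hc
        simp only [Set.mem_iUnion, Set.mem_setOf_eq, not_exists, not_lt] at hc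
        have hYle : Y ω ≤ s := by
          rw [hY]; exact ciSup_le (fun k => hc k)
        have hle : Psi α LO (Y ω / (2.5 * Q)) ≤ t := by
          apply Psi_le (by linarith)
          rw [div_le_iff₀ hη0]
          calc Y ω ≤ s := hYle
            _ = PsiInv α LO t * (2.5 * Q) := by rw [hs]; ring
        exact absurd hω (not_lt.mpr hle)
      have perk : ∀ k : {k : ℕ // 1 ≤ k}, μ {a | s < |X k a| /
          (Real.sqrt 2 * (gboNorm μ α L (X k)).toReal * PsiInv α LS ((k : ℕ) : ℝ))} ≤
          ENNReal.ofReal (((1+t)^2)⁻¹ * ((((k : ℕ) : ℝ)) * (((k : ℕ) : ℝ) + 2))⁻¹) := by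
        intro k
        have hk1 : (1:ℝ) ≤ ((k : ℕ) : ℝ) := hkR k
        have hPk : 0 < PsiInv α LS ((k : ℕ) : ℝ) := PsiInv_pos hLS.le (by linarith)
        have hT1 : (1:ℝ) ≤ (1+t)^2 := by nlinarith
        have hu0 : (0:ℝ) < (1+t)^2 * (1 + ((k : ℕ) : ℝ))^2 - 1 := by nlinarith
        by_cases hNk : (gboNorm μ α L (X k)).toReal = 0
        · have hempty : {a | s < |X k a| /
              (Real.sqrt 2 * (gboNorm μ α L (X k)).toReal * PsiInv α LS ((k : ℕ) : ℝ))} = ∅ := by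
            ext a
            simp only [Set.mem_setOf_eq, Set.mem_empty_iff_false, iff_false, not_lt, hNk,
              mul_zero, zero_mul]
            rw [_root_.div_zero]
            exact hs0.le
          rw [hempty]
          simp
        · have hNk0 : 0 < (gboNorm μ α L (X k)).toReal :=
            lt_of_le_of_ne ENNReal.toReal_nonneg (Ne.symm hNk)
          have hD : 0 < Real.sqrt 2 * (gboNorm μ α L (X k)).toReal * PsiInv α LS ((k : ℕ) : ℝ) :=
            mul_pos (mul_pos (Real.sqrt_pos.mpr two_pos) hNk0) hPk
          have hset : {a | s < |X k a| /
              (Real.sqrt 2 * (gboNorm μ α L (X k)).toReal * PsiInv α LS ((k : ℕ) : ℝ))}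
              = {a | (gboNorm μ α L (X k)).toReal *
                  (Real.sqrt 2 * PsiInv α LS ((k : ℕ) : ℝ) * s) < |X k a|} := by
            ext a
            simp only [Set.mem_setOf_eq]
            rw [lt_div_iff₀ hD]
            constructor <;> intro h <;> nlinarith [h]
          rw [hset]
          have hAineq : PsiInv α L ((1+t)^2 * (1 + ((k : ℕ) : ℝ))^2 - 1) ≤
              Real.sqrt 2 * PsiInv α LS ((k : ℕ) : ℝ) * s := by
            rw [hs]
            exact hkey t ((k : ℕ) : ℝ) ht2.le hk1
          have hApp := tail_bound μ α L hα hL (X k) (hX k) (hfin k k.2) hu0 hAineq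
          calc μ {a | (gboNorm μ α L (X k)).toReal *
                  (Real.sqrt 2 * PsiInv α LS ((k : ℕ) : ℝ) * s) < |X k a|}
              ≤ (ENNReal.ofReal ((1+t)^2 * (1 + ((k : ℕ) : ℝ))^2 - 1))⁻¹ := hApp
            _ = ENNReal.ofReal (((1+t)^2 * (1 + ((k : ℕ) : ℝ))^2 - 1)⁻¹) :=
                (ENNReal.ofReal_inv_of_pos hu0).symm
            _ ≤ ENNReal.ofReal (((1+t)^2)⁻¹ * ((((k : ℕ) : ℝ)) * (((k : ℕ) : ℝ) + 2))⁻¹) := by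
                apply ENNReal.ofReal_le_ofReal
                rw [← mul_inv]
                apply inv_anti₀
                · have hkk : (0:ℝ) < (((k : ℕ) : ℝ)) * (((k : ℕ) : ℝ) + 2) := by nlinarith [hk1]
                  exact mul_pos (by nlinarith [hT1, ht2]) hkk
                · nlinarith [hT1, ht2, hk1]
      calc μ {a | t < Psi α LO (Y a / (2.5 * Q))}
          ≤ μ (⋃ k : {k : ℕ // 1 ≤ k}, {a | s < |X k a| /
              (Real.sqrt 2 * (gboNorm μ α L (X k)).toReal * PsiInv α LS ((k : ℕ) : ℝ))}) :=
            measure_mono hsub1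
        _ ≤ ∑' k : {k : ℕ // 1 ≤ k}, μ {a | s < |X k a| /
              (Real.sqrt 2 * (gboNorm μ α L (X k)).toReal * PsiInv α LS ((k : ℕ) : ℝ))} :=
            measure_iUnion_le _
        _ ≤ ∑' k : {k : ℕ // 1 ≤ k},
              ENNReal.ofReal (((1+t)^2)⁻¹ * ((((k : ℕ) : ℝ)) * (((k : ℕ) : ℝ) + 2))⁻¹) :=
            ENNReal.tsum_le_tsum perk
        _ = ∑' n : ℕ, ENNReal.ofReal (((1+t)^2)⁻¹ * ((((n:ℝ) + 1)) * (((n:ℝ) + 1) + 2))⁻¹) := by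
            rw [← Equiv.tsum_eq natEquiv]
            congr 1
            funext n
            rw [natEquiv_coe]
        _ ≤ ENNReal.ofReal ((3/4) * ((1+t)^2)⁻¹) := by
            have hc0 : (0:ℝ) ≤ ((1+t)^2)⁻¹ := by positivity
            calc ∑' n : ℕ, ENNReal.ofReal (((1+t)^2)⁻¹ * ((((n:ℝ) + 1)) * (((n:ℝ) + 1) + 2))⁻¹)
                = ∑' n : ℕ, ENNReal.ofReal (((1+t)^2)⁻¹) *
                    ENNReal.ofReal (((((n:ℝ) + 1)) * (((n:ℝ) + 1) + 2))⁻¹) := by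
                  congr 1
                  funext n
                  rw [← ENNReal.ofReal_mul hc0]
              _ = ENNReal.ofReal (((1+t)^2)⁻¹) *
                    ∑' n : ℕ, ENNReal.ofReal (((((n:ℝ) + 1)) * (((n:ℝ) + 1) + 2))⁻¹) :=
                  ENNReal.tsum_mul_left
              _ ≤ ENNReal.ofReal (((1+t)^2)⁻¹) * ENNReal.ofReal (3/4) := by
                  apply mul_le_mul_right
                  apply ENNReal.tsum_le_of_sum_range_le
                  intro n
                  rw [← ENNReal.ofReal_sum_of_nonneg (fun i _ => by positivity)]
                  apply ENNReal.ofReal_le_ofReal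
                  calc ∑ i ∈ Finset.range n, ((((i:ℝ) + 1)) * (((i:ℝ) + 1) + 2))⁻¹
                      = ∑ i ∈ Finset.range n, (((i:ℝ) + 1) * ((i:ℝ) + 3))⁻¹ := by
                        apply Finset.sum_congr rfl
                        intro i _
                        ring_nf
                    _ ≤ 3/4 := sum_range_bound n
              _ = ENNReal.ofReal ((3/4) * ((1+t)^2)⁻¹) := by
                  rw [← ENNReal.ofReal_mul hc0]
                  congr 1
                  ring
    rw [show Set.Ioi (0:ℝ) = Set.Ioc (0:ℝ) (1/2) ∪ Set.Ioi (1/2) from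
      (Set.Ioc_union_Ioi_eq_Ioi (by norm_num)).symm]
    rw [MeasureTheory.lintegral_union measurableSet_Ioi Set.Ioc_disjoint_Ioi_same]
    have h1 : ∫⁻ t in Set.Ioc (0:ℝ) (1/2), μ {a | t < Psi α LO (Y a / (2.5 * Q))} ≤
        ENNReal.ofReal (1/2) := by
      calc ∫⁻ t in Set.Ioc (0:ℝ) (1/2), μ {a | t < Psi α LO (Y a / (2.5 * Q))}
          ≤ ∫⁻ _t in Set.Ioc (0:ℝ) (1/2), 1 := lintegral_mono (fun t => prob_le_one)
        _ = ENNReal.ofReal (1/2) := by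
            rw [MeasureTheory.setLIntegral_one, Real.volume_Ioc]
            norm_num
    have h2 : ∫⁻ t in Set.Ioi (1/2 : ℝ), μ {a | t < Psi α LO (Y a / (2.5 * Q))} ≤
        ENNReal.ofReal (1/2) := by
      have hgm : Measurable (fun t : ℝ => ENNReal.ofReal ((3/4) * ((1+t)^2)⁻¹)) := by
        apply ENNReal.measurable_ofReal.comp
        fun_prop
      calc ∫⁻ t in Set.Ioi (1/2 : ℝ), μ {a | t < Psi α LO (Y a / (2.5 * Q))}
          ≤ ∫⁻ t in Set.Ioi (1/2 : ℝ), ENNReal.ofReal ((3/4) * ((1+t)^2)⁻¹) :=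
            MeasureTheory.setLIntegral_mono hgm hbd
        _ = ENNReal.ofReal (1/2) := lintegral_tail_aux
    calc (∫⁻ t in Set.Ioc (0:ℝ) (1/2), μ {a | t < Psi α LO (Y a / (2.5 * Q))}) +
          ∫⁻ t in Set.Ioi (1/2 : ℝ), μ {a | t < Psi α LO (Y a / (2.5 * Q))}
        ≤ ENNReal.ofReal (1/2) + ENNReal.ofReal (1/2) := add_le_add h1 h2
      _ = 1 := by
          rw [← ENNReal.ofReal_add (by norm_num) (by norm_num)]
          norm_num
  rw [gboNorm, orliczNorm]
  apply sInf_le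
  refine ⟨2.5 * Q, ⟨hη0, ?_⟩, rfl⟩
  calc ∫⁻ ω, ENNReal.ofReal (Psi α LO (|Y ω| / (2.5 * Q))) ∂μ
      = ∫⁻ ω, ENNReal.ofReal (Psi α LO (Y ω / (2.5 * Q))) ∂μ := by
        apply lintegral_congr
        intro ω
        rw [abs_of_nonneg (hYnn ω)]
    _ ≤ 1 := hIntBound

end Main

/-- Sharper maximal inequality. For any sequence `X₁, X₂, …` with finite
GBO norms, the GBO norm (with parameter `c(α) M(α) L`) of
`sup_{k ≥ 1} |X_k| / (√2 ‖X_k‖_{Ψ_{α,L}} Ψ_{α,S(α)L}⁻¹(k))` is at most `2.5 Q_α`,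
where `M(α) = max{1, 2^{(1−α)/α}}`, `S(α) = 2^{1/α} M(α)/2`, `c(α) = 3^{1/α}/√3`,
and `Q_α = 2e(4/α)^{1/α}` if `α < 1`, `Q_α = 1` if `α ≥ 1`. -/
theorem gbo_ratio_maximal {Ω : Type*} [MeasurableSpace Ω] (μ : Measure Ω)
    [IsProbabilityMeasure μ] (α L : ℝ) (hα : 0 < α) (hL : 0 < L)
    (X : ℕ → Ω → ℝ) (hX : ∀ k, Measurable (X k))
    (hfin : ∀ k, 1 ≤ k → gboNorm μ α L (X k) ≠ ⊤) :
    gboNorm μ α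
        ((((3 : ℝ) ^ (1 / α) / Real.sqrt 3) * max 1 ((2 : ℝ) ^ ((1 - α) / α))) * L)
        (fun ω => ⨆ k : {k : ℕ // 1 ≤ k},
          |X k ω| / (Real.sqrt 2 * (gboNorm μ α L (X k)).toReal *
            PsiInv α (((2 : ℝ) ^ (1 / α) * max 1 ((2 : ℝ) ^ ((1 - α) / α)) / 2) * L)
              ((k : ℕ) : ℝ)))
      ≤ ENNReal.ofReal (2.5 * (if α < 1 then 2 * Real.exp 1 * (4 / α) ^ (1 / α) else 1)) := by
  set Q := (if α < 1 then 2 * Real.exp 1 * (4 / α) ^ (1 / α) else 1) with hQdef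
  have hQ1 : (1:ℝ) ≤ Q := by
    rw [hQdef]
    split_ifs with h
    · have h1 : (1:ℝ) ≤ (4/α) ^ (1/α) := by
        have h0 : ((1:ℝ)) ^ (1/α) ≤ (4/α) ^ (1/α) :=
          Real.rpow_le_rpow zero_le_one (by rw [le_div_iff₀ hα]; linarith) (by positivity)
        simpa using h0
      have h2 : (1:ℝ) ≤ Real.exp 1 := by linarith [Real.add_one_le_exp 1]
      nlinarith
    · exact le_refl 1
  have hMc0 : (0:ℝ) < max 1 ((2:ℝ) ^ ((1-α)/α)) := lt_of_lt_of_le one_pos (le_max_left _ _)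
  have hLS : 0 < ((2:ℝ) ^ (1/α) * max 1 ((2:ℝ) ^ ((1-α)/α)) / 2) * L :=
    mul_pos (div_pos (mul_pos (Real.rpow_pos_of_pos two_pos _) hMc0) two_pos) hL
  have hLO : 0 < (((3:ℝ) ^ (1/α) / Real.sqrt 3) * max 1 ((2:ℝ) ^ ((1-α)/α))) * L :=
    mul_pos (mul_pos (div_pos (Real.rpow_pos_of_pos (by norm_num) _)
      (Real.sqrt_pos.mpr (by norm_num))) hMc0) hL
  exact main_bound μ α L _ _ Q hα hL hLS hLO hQ1 X hX hfin
    (fun t k ht hk => key_ineq α L Q t k hα hL hQ1 ht hk)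
end

section
/- Let W_1, …, W_k be (possibly dependent) real-valued random variables satisfying ‖W_i‖_{ψ_{α_i}} < ∞ for some α_i > 0, 1 ≤ i ≤ k. Then ‖ ∏_{i=1}^k W_i ‖_{ψ_β} ≤ ∏_{i=1}^k ‖W_i‖_{ψ_{α_i}}, where 1/β := Σ_{i=1}^k 1/α_i. -/
open MeasureTheory ProbabilityTheory ENNReal

/-- Pointwise key inequality: weighted AM-GM followed by convexity of `exp`. -/
lemma exp_prod_le_aux {k : ℕ} (hk : 0 < k) (α : Fin k → ℝ) (hα : ∀ i, 0 < α i)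
    (x : Fin k → ℝ) (hx : ∀ i, 0 ≤ x i) :
    Real.exp ((∏ i, x i) ^ (∑ j, (α j)⁻¹)⁻¹) ≤
      ∑ i, ((∑ j, (α j)⁻¹)⁻¹ / α i) * Real.exp (x i ^ α i) := by
  haveI : Nonempty (Fin k) := Fin.pos_iff_nonempty.mp hk
  set β : ℝ := (∑ j, (α j)⁻¹)⁻¹ with hβ
  have hs : 0 < ∑ j, (α j)⁻¹ :=
    Finset.sum_pos (fun j _ => inv_pos.2 (hα j)) Finset.univ_nonempty
  have hβpos : 0 < β := inv_pos.2 hs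
  set w : Fin k → ℝ := fun i => β / α i with hw
  have hw0 : ∀ i, 0 ≤ w i := fun i => div_nonneg hβpos.le (hα i).le
  have hw1 : ∑ i, w i = 1 := by
    simp only [hw, div_eq_mul_inv, ← Finset.mul_sum]
    exact inv_mul_cancel₀ hs.ne'
  have step1 : (∏ i, x i) ^ β ≤ ∑ i, w i * (x i ^ α i) := by
    have h1 : ∀ i : Fin k, x i ^ β = (x i ^ α i) ^ w i := by
      intro i
      rw [← Real.rpow_mul (hx i)]
      congr 1
      rw [hw, mul_comm]
      exact (div_mul_cancel₀ _ (hα i).ne').symm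
    calc (∏ i, x i) ^ β = ∏ i, (x i ^ α i) ^ w i := by
          rw [← Real.finset_prod_rpow _ _ (fun i _ => hx i) β]
          exact Finset.prod_congr rfl fun i _ => h1 i
      _ ≤ ∑ i, w i * (x i ^ α i) :=
          Real.geom_mean_le_arith_mean_weighted _ w _ (fun i _ => hw0 i) hw1
            (fun i _ => Real.rpow_nonneg (hx i) _)
  calc Real.exp ((∏ i, x i) ^ β) ≤ Real.exp (∑ i, w i * (x i ^ α i)) :=
        Real.exp_le_exp.2 step1
    _ ≤ ∑ i, w i * Real.exp (x i ^ α i) := by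
        have := convexOn_exp.map_sum_le (t := Finset.univ) (w := w)
          (p := fun i => x i ^ α i) (fun i _ => hw0 i) hw1 (fun i _ => Set.mem_univ _)
        simpa [smul_eq_mul] using this

/-- Integral bound: if each factor satisfies the `ψ_{α i}` moment bound with scale `η i`,
then the product satisfies the `ψ_β` moment bound with scale `∏ η i`. -/
lemma integral_bound_aux {Ω : Type*} [MeasurableSpace Ω] (μ : Measure Ω)
    [IsProbabilityMeasure μ] {k : ℕ} (hk : 0 < k) (α : Fin k → ℝ) (hα : ∀ i, 0 < α i)
    (W : Fin k → Ω → ℝ) (hW : ∀ i, Measurable (W i)) (η : Fin k → ℝ) (hη : ∀ i, 0 < η i)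
    (hint : ∀ i, ∫⁻ ω, ENNReal.ofReal (Real.exp ((|W i ω| / η i) ^ α i)) ∂μ ≤ 2) :
    ∫⁻ ω, ENNReal.ofReal
        (Real.exp ((|∏ i, W i ω| / ∏ i, η i) ^ (∑ j, (α j)⁻¹)⁻¹)) ∂μ ≤ 2 := by
  haveI : Nonempty (Fin k) := Fin.pos_iff_nonempty.mp hk
  set β : ℝ := (∑ j, (α j)⁻¹)⁻¹ with hβ
  set w : Fin k → ℝ := fun i => β / α i with hw
  have hs : 0 < ∑ j, (α j)⁻¹ :=
    Finset.sum_pos (fun j _ => inv_pos.2 (hα j)) Finset.univ_nonempty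
  have hβpos : 0 < β := inv_pos.2 hs
  have hw0 : ∀ i, 0 ≤ w i := fun i => div_nonneg hβpos.le (hα i).le
  have hw1 : ∑ i, w i = 1 := by
    simp only [hw, div_eq_mul_inv, ← Finset.mul_sum]
    exact inv_mul_cancel₀ hs.ne'
  have hme : ∀ i, Measurable fun ω =>
      ENNReal.ofReal (Real.exp ((|W i ω| / η i) ^ α i)) := by
    intro i
    exact (Real.measurable_exp.comp ((Real.continuous_rpow_const (hα i).le).measurable.comp
      ((hW i).abs.div_const (η i)))).ennreal_ofReal
  have hmeas : ∀ i, Measurable fun ω =>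
      ENNReal.ofReal (w i * Real.exp ((|W i ω| / η i) ^ α i)) := by
    intro i
    exact (measurable_const.mul (Real.measurable_exp.comp
      ((Real.continuous_rpow_const (hα i).le).measurable.comp
        ((hW i).abs.div_const (η i))))).ennreal_ofReal
  calc ∫⁻ ω, ENNReal.ofReal (Real.exp ((|∏ i, W i ω| / ∏ i, η i) ^ β)) ∂μ
      ≤ ∫⁻ ω, ∑ i, ENNReal.ofReal (w i * Real.exp ((|W i ω| / η i) ^ α i)) ∂μ := by
        apply lintegral_mono
        intro ω
        dsimp only
        rw [← ENNReal.ofReal_sum_of_nonneg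
          (fun i _ => mul_nonneg (hw0 i) (Real.exp_nonneg _))]
        apply ENNReal.ofReal_le_ofReal
        have habs : |∏ i, W i ω| / ∏ i, η i = ∏ i, (|W i ω| / η i) := by
          rw [Finset.abs_prod, Finset.prod_div_distrib]
        rw [habs]
        exact exp_prod_le_aux hk α hα _ (fun i => div_nonneg (abs_nonneg _) (hη i).le)
    _ = ∑ i, ∫⁻ ω, ENNReal.ofReal (w i * Real.exp ((|W i ω| / η i) ^ α i)) ∂μ :=
        lintegral_finset_sum _ (fun i _ => hmeas i)
    _ ≤ ∑ i : Fin k, ENNReal.ofReal (w i) * 2 := by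
        apply Finset.sum_le_sum
        intro i _
        calc ∫⁻ ω, ENNReal.ofReal (w i * Real.exp ((|W i ω| / η i) ^ α i)) ∂μ
            = ENNReal.ofReal (w i) *
                ∫⁻ ω, ENNReal.ofReal (Real.exp ((|W i ω| / η i) ^ α i)) ∂μ := by
              simp_rw [ENNReal.ofReal_mul (hw0 i)]
              exact lintegral_const_mul _ (hme i)
          _ ≤ ENNReal.ofReal (w i) * 2 := mul_le_mul_right (hint i) _
    _ = 2 := by
        rw [← Finset.sum_mul, ← ENNReal.ofReal_sum_of_nonneg (fun i _ => hw0 i), hw1]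
        simp

/-- Hölder-type inequality for `ψ_α` norms of products:
`‖∏ᵢ Wᵢ‖_{ψ_β} ≤ ∏ᵢ ‖Wᵢ‖_{ψ_{αᵢ}}` where `1/β = Σᵢ 1/αᵢ`. -/
theorem psiNorm_prod_le {Ω : Type*} [MeasurableSpace Ω] (μ : Measure Ω)
    [IsProbabilityMeasure μ] (k : ℕ) (hk : 0 < k) (α : Fin k → ℝ) (hα : ∀ i, 0 < α i)
    (W : Fin k → Ω → ℝ) (hW : ∀ i, Measurable (W i))
    (hfin : ∀ i, psiNorm μ (α i) (W i) ≠ ⊤) :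
    psiNorm μ (∑ i, (α i)⁻¹)⁻¹ (fun ω => ∏ i, W i ω) ≤ ∏ i, psiNorm μ (α i) (W i) := by
  haveI : Nonempty (Fin k) := Fin.pos_iff_nonempty.mp hk
  have key : ∀ η : Fin k → ℝ,
      (∀ i, 0 < η i ∧ ∫⁻ ω, ENNReal.ofReal (Real.exp ((|W i ω| / η i) ^ α i)) ∂μ ≤ 2) →
      psiNorm μ (∑ i, (α i)⁻¹)⁻¹ (fun ω => ∏ i, W i ω) ≤ ENNReal.ofReal (∏ i, η i) := by
    intro η hη
    unfold psiNorm
    refine sInf_le ⟨∏ i, η i, ⟨Finset.prod_pos (fun i _ => (hη i).1), ?_⟩, rfl⟩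
    exact integral_bound_aux μ hk α hα W hW η (fun i => (hη i).1) (fun i => (hη i).2)
  have hr0 : ∀ i, 0 ≤ (psiNorm μ (α i) (W i)).toReal := fun i => ENNReal.toReal_nonneg
  have hsr : ∀ i, psiNorm μ (α i) (W i) =
      ENNReal.ofReal ((psiNorm μ (α i) (W i)).toReal) :=
    fun i => (ENNReal.ofReal_toReal (hfin i)).symm
  have main : ∀ δ : ℝ, 0 < δ →
      psiNorm μ (∑ i, (α i)⁻¹)⁻¹ (fun ω => ∏ i, W i ω) ≤
        ENNReal.ofReal (∏ i, ((psiNorm μ (α i) (W i)).toReal + δ)) := by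
    intro δ hδ
    have h1 : ∀ i, ∃ ηi : ℝ,
        (0 < ηi ∧ ∫⁻ ω, ENNReal.ofReal (Real.exp ((|W i ω| / ηi) ^ α i)) ∂μ ≤ 2) ∧
        ηi ≤ (psiNorm μ (α i) (W i)).toReal + δ := by
      intro i
      have hlt : psiNorm μ (α i) (W i) <
          ENNReal.ofReal ((psiNorm μ (α i) (W i)).toReal + δ) :=
        calc psiNorm μ (α i) (W i)
            = ENNReal.ofReal ((psiNorm μ (α i) (W i)).toReal) := hsr i
          _ < ENNReal.ofReal ((psiNorm μ (α i) (W i)).toReal + δ) :=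
            (ENNReal.ofReal_lt_ofReal_iff (by linarith [hr0 i])).2
              (lt_add_of_pos_right _ hδ)
      unfold psiNorm at hlt
      obtain ⟨e, he, hlt'⟩ := sInf_lt_iff.mp hlt
      obtain ⟨ηi, hmem, rfl⟩ := he
      exact ⟨ηi, hmem, ((ENNReal.ofReal_lt_ofReal_iff_of_nonneg hmem.1.le).mp hlt').le⟩
    choose η hηmem hηle using h1
    calc psiNorm μ (∑ i, (α i)⁻¹)⁻¹ (fun ω => ∏ i, W i ω)
        ≤ ENNReal.ofReal (∏ i, η i) := key η hηmem
      _ ≤ ENNReal.ofReal (∏ i, ((psiNorm μ (α i) (W i)).toReal + δ)) :=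
          ENNReal.ofReal_le_ofReal
            (Finset.prod_le_prod (fun i _ => (hηmem i).1.le) (fun i _ => hηle i))
  have hcont : Filter.Tendsto
      (fun δ : ℝ => ENNReal.ofReal (∏ i, ((psiNorm μ (α i) (W i)).toReal + δ)))
      (nhdsWithin 0 (Set.Ioi 0))
      (nhds (ENNReal.ofReal (∏ i, (psiNorm μ (α i) (W i)).toReal))) := by
    have h1 : Continuous fun δ : ℝ => ∏ i, ((psiNorm μ (α i) (W i)).toReal + δ) :=
      continuous_finset_prod _ (fun i _ => continuous_const.add continuous_id)
    have h2 := (ENNReal.continuous_ofReal.comp h1).tendsto 0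
    simp only [Function.comp, add_zero] at h2
    exact h2.mono_left nhdsWithin_le_nhds
  have hfinal := ge_of_tendsto hcont
    (eventually_nhdsWithin_of_forall (fun δ hδ => main δ hδ))
  calc psiNorm μ (∑ i, (α i)⁻¹)⁻¹ (fun ω => ∏ i, W i ω)
      ≤ ENNReal.ofReal (∏ i, (psiNorm μ (α i) (W i)).toReal) := hfinal
    _ = ∏ i, psiNorm μ (α i) (W i) := by
        rw [ENNReal.ofReal_prod_of_nonneg (fun i _ => hr0 i)]
        exact Finset.prod_congr rfl (fun i _ => (hsr i).symm)
end

section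
/- Let Z_1, …, Z_n be independent mean-zero real-valued random variables with |Z_i| ≤ U almost surely for all i. Then for every p ≥ 1, (E[|Σ_{i=1}^n Z_i|^p])^{1/p} ≤ √(6p)·(Σ_{i=1}^n E[Z_i²])^{1/2} + 10·p·U. -/
open MeasureTheory ProbabilityTheory ENNReal

lemma exp_le_quad {x : ℝ} (hx : x ≤ 1) : Real.exp x ≤ 1 + x + x ^ 2 := by
  rcases le_or_gt x (-1) with h | h
  · have h1 : Real.exp x ≤ 1 := Real.exp_le_one_iff.2 (by linarith)
    nlinarith
  · have hx1 : |x| ≤ 1 := abs_le.2 ⟨h.le, hx⟩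
    have hb := Real.exp_bound hx1 (n := 2) (by norm_num)
    have h2 : (∑ i ∈ Finset.range 2, x ^ i / i.factorial) = 1 + x := by
      simp [Finset.sum_range_succ]
    rw [h2] at hb
    norm_num [Nat.factorial] at hb
    have := abs_le.1 hb
    have hsq : |x| ^ 2 = x ^ 2 := sq_abs x
    nlinarith [this.2]

lemma rpow_le_exp_aux {t p : ℝ} (ht : 0 ≤ t) (hp : 0 < p) :
    t ^ p ≤ (p / Real.exp 1) ^ p * Real.exp t := by
  rcases ht.eq_or_lt with rfl | ht0
  · rw [Real.zero_rpow hp.ne']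
    positivity
  · have hpe : 0 < p / Real.exp 1 := by positivity
    rw [Real.rpow_def_of_pos ht0, Real.rpow_def_of_pos hpe, ← Real.exp_add, Real.exp_le_exp]
    have hlog : Real.log (t / p) ≤ t / p - 1 := Real.log_le_sub_one_of_pos (by positivity)
    rw [Real.log_div ht0.ne' hp.ne'] at hlog
    rw [Real.log_div hp.ne' (Real.exp_ne_zero 1), Real.log_exp]
    have : Real.log t - Real.log p ≤ t / p - 1 := hlog
    have htp : p * (t / p) = t := by field_simp
    nlinarith [this]

lemma bounded_integrable {Ω : Type*} [MeasurableSpace Ω] {μ : Measure Ω}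
    [IsProbabilityMeasure μ] {f : Ω → ℝ} {C : ℝ} (hf : AEStronglyMeasurable f μ)
    (h : ∀ᵐ ω ∂μ, |f ω| ≤ C) : Integrable f μ :=
  Integrable.mono' (integrable_const C) hf (h.mono fun ω hω => by rwa [Real.norm_eq_abs])

lemma mgf_le_of_bounded {Ω : Type*} [MeasurableSpace Ω] {μ : Measure Ω}
    [IsProbabilityMeasure μ] {U t : ℝ} {Z : Ω → ℝ} (hZ : Measurable Z)
    (hmean : ∫ ω, Z ω ∂μ = 0) (hbdd : ∀ᵐ ω ∂μ, |Z ω| ≤ U) (ht : |t| * U ≤ 1) :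
    mgf Z μ t ≤ Real.exp (t ^ 2 * ∫ ω, Z ω ^ 2 ∂μ) := by
  have hZint : Integrable Z μ := bounded_integrable hZ.aestronglyMeasurable hbdd
  have hZ2int : Integrable (fun ω => Z ω ^ 2) μ := by
    refine bounded_integrable (C := U ^ 2) (hZ.pow_const 2).aestronglyMeasurable ?_
    filter_upwards [hbdd] with ω hω
    calc |Z ω ^ 2| = |Z ω| ^ 2 := by rw [abs_pow]
    _ ≤ U ^ 2 := by nlinarith [abs_nonneg (Z ω)]
  have h1 : Integrable (fun ω => t * Z ω) μ := hZint.const_mul t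
  have h2 : Integrable (fun ω => (t * Z ω) ^ 2) μ := by
    simpa [mul_pow] using hZ2int.const_mul (t ^ 2)
  have h12 : Integrable (fun ω => 1 + t * Z ω) μ := (integrable_const 1).add h1
  have hint : Integrable (fun ω => 1 + t * Z ω + (t * Z ω) ^ 2) μ := h12.add h2
  have hle : ∀ᵐ ω ∂μ, Real.exp (t * Z ω) ≤ 1 + t * Z ω + (t * Z ω) ^ 2 := by
    filter_upwards [hbdd] with ω hω
    refine exp_le_quad ?_
    calc t * Z ω ≤ |t * Z ω| := le_abs_self _
    _ = |t| * |Z ω| := abs_mul _ _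
    _ ≤ |t| * U := by gcongr
    _ ≤ 1 := ht
  calc mgf Z μ t = ∫ ω, Real.exp (t * Z ω) ∂μ := rfl
  _ ≤ ∫ ω, (1 + t * Z ω + (t * Z ω) ^ 2) ∂μ :=
      integral_mono_of_nonneg (Filter.Eventually.of_forall fun ω => (Real.exp_pos _).le) hint hle
  _ = 1 + t ^ 2 * ∫ ω, Z ω ^ 2 ∂μ := by
      rw [integral_add h12 h2, integral_add (integrable_const 1) h1]
      simp only [mul_pow]
      rw [integral_const, integral_const_mul, integral_const_mul, hmean]
      simp
  _ ≤ Real.exp (t ^ 2 * ∫ ω, Z ω ^ 2 ∂μ) := by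
      have := Real.add_one_le_exp (t ^ 2 * ∫ ω, Z ω ^ 2 ∂μ)
      linarith

/-- Bernstein moment inequality for bounded random variables: if
`Z₁, …, Z_n` are independent, mean zero and `|Zᵢ| ≤ U` a.s., then for `p ≥ 1`,
`‖Σᵢ Zᵢ‖_p ≤ √(6p) (Σᵢ E[Zᵢ²])^{1/2} + 10 p U`. -/
theorem bernstein_moment_bound {Ω : Type*} [MeasurableSpace Ω] (μ : Measure Ω)
    [IsProbabilityMeasure μ] (n : ℕ) (U : ℝ) (hU : 0 < U) (Z : Fin n → Ω → ℝ)
    (hmeas : ∀ i, Measurable (Z i)) (hindep : iIndepFun Z μ)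
    (hmean : ∀ i, ∫ ω, Z i ω ∂μ = 0) (hbdd : ∀ i, ∀ᵐ ω ∂μ, |Z i ω| ≤ U) :
    ∀ p : ℝ, 1 ≤ p →
      (∫ ω, |∑ i, Z i ω| ^ p ∂μ) ^ (1 / p) ≤
        Real.sqrt (6 * p) * Real.sqrt (∑ i, ∫ ω, Z i ω ^ 2 ∂μ) + 10 * p * U := by
  intro p hp
  have hp0 : (0:ℝ) < p := by linarith
  have hsp : 0 < Real.sqrt p := Real.sqrt_pos.2 hp0
  set V : ℝ := ∑ i, ∫ ω, Z i ω ^ 2 ∂μ with hV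
  have hV0 : 0 ≤ V := Finset.sum_nonneg fun i _ => integral_nonneg fun ω => sq_nonneg _
  set σ : ℝ := Real.sqrt V with hσdef
  have hσ0 : 0 ≤ σ := Real.sqrt_nonneg V
  set D : ℝ := σ / Real.sqrt p + U with hD
  have hD0 : 0 < D := by positivity
  set l : ℝ := D⁻¹ with hldef
  have hl0 : 0 < l := inv_pos.2 hD0
  have hlD : l * D = 1 := inv_mul_cancel₀ hD0.ne'
  have hlU : l * U ≤ 1 := by
    have hUD : U ≤ D := by
      rw [hD]
      have h0 : 0 ≤ σ / Real.sqrt p := by positivity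
      linarith
    calc l * U ≤ l * D := by gcongr
    _ = 1 := hlD
  have hl2V : l ^ 2 * V ≤ p := by
    have hlσ : l * σ ≤ Real.sqrt p := by
      have h1 : σ ≤ Real.sqrt p * D := by
        rw [hD, mul_add, mul_div_cancel₀ _ hsp.ne']
        nlinarith
      calc l * σ ≤ l * (Real.sqrt p * D) := by gcongr
      _ = Real.sqrt p * (l * D) := by ring
      _ = Real.sqrt p := by rw [hlD, mul_one]
    have h2 : (l * σ) ^ 2 ≤ Real.sqrt p ^ 2 := by
      apply pow_le_pow_left₀ (by positivity) hlσ
    rw [Real.sq_sqrt hp0.le] at h2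
    have hσ2 : σ ^ 2 = V := Real.sq_sqrt hV0
    nlinarith
  -- mgf bound for the sum
  have hmgf : ∀ t : ℝ, |t| ≤ l → mgf (∑ i, Z i) μ t ≤ Real.exp (t ^ 2 * V) := by
    intro t htl
    rw [hindep.mgf_sum hmeas Finset.univ]
    calc ∏ i, mgf (Z i) μ t ≤ ∏ i, Real.exp (t ^ 2 * ∫ ω, Z i ω ^ 2 ∂μ) := by
          refine Finset.prod_le_prod (fun i _ => mgf_nonneg) (fun i _ => ?_)
          refine mgf_le_of_bounded (hmeas i) (hmean i) (hbdd i) ?_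
          calc |t| * U ≤ l * U := by gcongr
          _ ≤ 1 := hlU
    _ = Real.exp (∑ i, t ^ 2 * ∫ ω, Z i ω ^ 2 ∂μ) := (Real.exp_sum _ _).symm
    _ = Real.exp (t ^ 2 * V) := by rw [← Finset.mul_sum, hV]
  have hexpint : ∀ t : ℝ, Integrable (fun ω => Real.exp (t * (∑ i, Z i) ω)) μ := by
    intro t
    refine hindep.integrable_exp_mul_sum hmeas fun i _ => ?_
    refine bounded_integrable (C := Real.exp (|t| * U))
      (((hmeas i).const_mul t).exp).aestronglyMeasurable ?_
    filter_upwards [hbdd i] with ω hω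
    rw [abs_of_pos (Real.exp_pos _), Real.exp_le_exp]
    calc t * Z i ω ≤ |t * Z i ω| := le_abs_self _
    _ = |t| * |Z i ω| := abs_mul _ _
    _ ≤ |t| * U := by gcongr
  have hTfun : (∑ i, Z i) = fun ω => ∑ i, Z i ω := funext fun ω => Finset.sum_apply ω Finset.univ Z
  have hTmeas : Measurable (∑ i, Z i) := by
    rw [hTfun]; exact Finset.measurable_sum Finset.univ fun i _ => hmeas i
  have habs : Integrable (fun ω => Real.exp (l * |(∑ i, Z i) ω|)) μ := by
    refine Integrable.mono' ((hexpint l).add (hexpint (-l)))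
      (((hTmeas.abs.const_mul l).exp).aestronglyMeasurable) (Filter.Eventually.of_forall fun ω => ?_)
    rw [Real.norm_eq_abs, abs_of_pos (Real.exp_pos _)]
    simp only [Pi.add_apply]
    rcases abs_cases ((∑ i, Z i) ω) with ⟨h1, _⟩ | ⟨h1, _⟩
    · rw [h1]
      exact le_add_of_nonneg_right (Real.exp_pos _).le
    · rw [h1, mul_neg, ← neg_mul]
      exact le_add_of_nonneg_left (Real.exp_pos _).le
  have hA : ∫ ω, Real.exp (l * |(∑ i, Z i) ω|) ∂μ ≤ 2 * Real.exp (l ^ 2 * V) := by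
    calc ∫ ω, Real.exp (l * |(∑ i, Z i) ω|) ∂μ
        ≤ ∫ ω, (Real.exp (l * (∑ i, Z i) ω) + Real.exp (-l * (∑ i, Z i) ω)) ∂μ := by
          refine integral_mono habs ((hexpint l).add (hexpint (-l))) fun ω => ?_
          rcases abs_cases ((∑ i, Z i) ω) with ⟨h1, _⟩ | ⟨h1, _⟩
          · rw [h1]; exact le_add_of_nonneg_right (Real.exp_pos _).le
          · rw [h1, mul_neg, ← neg_mul]; exact le_add_of_nonneg_left (Real.exp_pos _).le
    _ = mgf (∑ i, Z i) μ l + mgf (∑ i, Z i) μ (-l) := integral_add (hexpint l) (hexpint (-l))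
    _ ≤ Real.exp (l ^ 2 * V) + Real.exp ((-l) ^ 2 * V) := by
          refine add_le_add (hmgf l ?_) (hmgf (-l) ?_)
          · rw [abs_of_pos hl0]
          · rw [abs_neg, abs_of_pos hl0]
    _ = 2 * Real.exp (l ^ 2 * V) := by rw [neg_sq]; ring
  have hB : ∫ ω, |(∑ i, Z i) ω| ^ p ∂μ
      ≤ (p / (Real.exp 1 * l)) ^ p * (2 * Real.exp (l ^ 2 * V)) := by
    calc ∫ ω, |(∑ i, Z i) ω| ^ p ∂μ
        ≤ ∫ ω, (p / (Real.exp 1 * l)) ^ p * Real.exp (l * |(∑ i, Z i) ω|) ∂μ := by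
          refine integral_mono_of_nonneg
            (Filter.Eventually.of_forall fun ω => Real.rpow_nonneg (abs_nonneg _) p)
            (habs.const_mul _) (Filter.Eventually.of_forall fun ω => ?_)
          dsimp only
          have key := rpow_le_exp_aux (mul_nonneg hl0.le (abs_nonneg ((∑ i, Z i) ω))) hp0
          have hdiv : (p / (Real.exp 1 * l)) ^ p = (p / Real.exp 1) ^ p / l ^ p := by
            rw [← Real.div_rpow (by positivity) hl0.le, div_div]
          rw [hdiv, div_mul_eq_mul_div, le_div_iff₀ (Real.rpow_pos_of_pos hl0 p)]
          calc |(∑ i, Z i) ω| ^ p * l ^ p = (l * |(∑ i, Z i) ω|) ^ p := by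
                rw [← Real.mul_rpow (abs_nonneg _) hl0.le, mul_comm]
          _ ≤ (p / Real.exp 1) ^ p * Real.exp (l * |(∑ i, Z i) ω|) := key
    _ = (p / (Real.exp 1 * l)) ^ p * ∫ ω, Real.exp (l * |(∑ i, Z i) ω|) ∂μ :=
          integral_const_mul _ _
    _ ≤ (p / (Real.exp 1 * l)) ^ p * (2 * Real.exp (l ^ 2 * V)) := by
          exact mul_le_mul_of_nonneg_left hA (Real.rpow_nonneg (by positivity) p)
  have hgoal : (∫ ω, |(∑ i, Z i) ω| ^ p ∂μ) ^ (1 / p)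
      ≤ Real.sqrt (6 * p) * σ + 10 * p * U := by
    calc (∫ ω, |(∑ i, Z i) ω| ^ p ∂μ) ^ (1 / p)
        ≤ ((p / (Real.exp 1 * l)) ^ p * (2 * Real.exp (l ^ 2 * V))) ^ (1 / p) :=
          Real.rpow_le_rpow
            (integral_nonneg fun ω => Real.rpow_nonneg (abs_nonneg _) p) hB (by positivity)
    _ = (p / (Real.exp 1 * l)) * (2 * Real.exp (l ^ 2 * V)) ^ (1 / p) := by
          rw [Real.mul_rpow (Real.rpow_nonneg (by positivity) p) (by positivity),
            ← Real.rpow_mul (by positivity), mul_one_div_cancel hp0.ne', Real.rpow_one]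
    _ ≤ (p / (Real.exp 1 * l)) * (2 * Real.exp 1) := by
          refine mul_le_mul_of_nonneg_left ?_ (by positivity)
          calc (2 * Real.exp (l ^ 2 * V)) ^ (1 / p) ≤ (2 * Real.exp p) ^ (1 / p) := by
                refine Real.rpow_le_rpow (by positivity) ?_ (by positivity)
                have := Real.exp_le_exp.2 hl2V
                linarith
          _ = (2:ℝ) ^ (1/p : ℝ) * (Real.exp p) ^ (1/p : ℝ) :=
                Real.mul_rpow (by norm_num) (Real.exp_pos p).le
          _ ≤ 2 * Real.exp 1 := by
                refine mul_le_mul ?_ ?_ (by positivity) (by norm_num)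
                · calc (2:ℝ) ^ (1/p : ℝ) ≤ (2:ℝ) ^ (1:ℝ) :=
                        Real.rpow_le_rpow_of_exponent_le (by norm_num)
                          ((div_le_one hp0).2 hp)
                  _ = 2 := Real.rpow_one 2
                · rw [← Real.exp_one_rpow p, ← Real.rpow_mul (Real.exp_pos 1).le,
                    mul_one_div_cancel hp0.ne', Real.rpow_one]
    _ = 2 * p * D := by
          rw [hldef]
          field_simp
    _ = 2 * Real.sqrt p * σ + 2 * p * U := by
          rw [hD, mul_add]
          have hss : Real.sqrt p * Real.sqrt p = p := Real.mul_self_sqrt hp0.le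
          field_simp
          nlinarith [hss]
    _ ≤ Real.sqrt (6 * p) * σ + 10 * p * U := by
          have h6 : Real.sqrt (6 * p) = Real.sqrt 6 * Real.sqrt p :=
            Real.sqrt_mul (by norm_num) p
          have h26 : (2:ℝ) ≤ Real.sqrt 6 := by
            nlinarith [Real.sq_sqrt (by norm_num : (0:ℝ) ≤ 6), Real.sqrt_nonneg 6]
          rw [h6]
          have : 2 * Real.sqrt p * σ ≤ Real.sqrt 6 * Real.sqrt p * σ := by
            apply mul_le_mul_of_nonneg_right _ hσ0
            exact mul_le_mul_of_nonneg_right h26 hsp.le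
          nlinarith [hU.le, hp0.le]
  simpa only [Finset.sum_apply] using hgoal
end

section
/- Let ξ be a nonnegative real-valued random variable such that P(ξ > x) ≤ A·exp(−x^α/B^α) for all x ≥ 0, for some constants A, B, α > 0. Then for every t ≥ max{(6/α)^{1/α}, 1}·B: if 0 < α ≤ 2, then E[ξ³·1{ξ ≥ t}] ≤ ((6+α)/α)·A·t³·exp(−t^α/B^α); and if α ≥ 2, then E[ξ³·1{ξ ≥ t}] ≤ 4·A·t³·exp(−t²/B²). -/
open MeasureTheory ProbabilityTheory ENNReal

open MeasureTheory Set Filter in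
private lemma aux_mono {α B t s : ℝ} (hα : 0 < α) (hB : 0 < B) (ht : 0 < t)
    (hT : 6 / α * B ^ α ≤ t ^ α) (hs : t ≤ s) :
    s ^ (3 - α) * Real.exp (-(s ^ α / (2 * B ^ α))) ≤
      t ^ (3 - α) * Real.exp (-(t ^ α / (2 * B ^ α))) := by
  have hs0 : 0 < s := lt_of_lt_of_le ht hs
  have hBα : 0 < B ^ α := Real.rpow_pos_of_pos hB α
  have htα : 0 < t ^ α := Real.rpow_pos_of_pos ht α
  have hr : (1:ℝ) ≤ s / t := (one_le_div ht).2 hs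
  have hu : (1:ℝ) ≤ (s/t) ^ α := Real.one_le_rpow hr hα.le
  set u : ℝ := (s/t) ^ α with hu_def
  have hu0 : 0 < u := lt_of_lt_of_le one_pos hu
  have hsα : s ^ α = t ^ α * u := by
    rw [hu_def, Real.div_rpow hs0.le ht.le]; field_simp
  have hst3 : s ^ (3 - α) = t ^ (3 - α) * (s/t) ^ (3 - α) := by
    rw [Real.div_rpow hs0.le ht.le]; field_simp
  have ht3 : 0 < t ^ (3 - α) := Real.rpow_pos_of_pos ht _
  -- key : (s/t)^(3-α) ≤ exp ((s^α - t^α)/(2*B^α))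
  have key : (s/t) ^ (3 - α) ≤ Real.exp ((s ^ α - t ^ α) / (2 * B ^ α)) := by
    have h1 : (s/t) ^ (3 - α) = u ^ ((3 - α)/α) := by
      rw [hu_def, ← Real.rpow_mul (by positivity : (0:ℝ) ≤ s/t)]
      congr 1
      field_simp
    have h2 : u ^ ((3 - α)/α) ≤ u ^ (3/α) :=
      Real.rpow_le_rpow_of_exponent_le hu (by gcongr <;> linarith)
    have h3 : u ^ (3/α) ≤ Real.exp ((u - 1) * (3/α)) := by
      rw [Real.rpow_def_of_pos hu0]
      exact Real.exp_le_exp.2 (mul_le_mul_of_nonneg_right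
        (Real.log_le_sub_one_of_pos hu0) (by positivity))
    have h4 : (u - 1) * (3/α) ≤ (s ^ α - t ^ α) / (2 * B ^ α) := by
      rw [hsα]
      have h5 : 3 / α ≤ t ^ α / (2 * B ^ α) := by
        rw [div_le_div_iff₀ hα (by positivity)]
        rw [div_mul_eq_mul_div, div_le_iff₀ hα] at hT
        linarith
      have h6 : 0 ≤ u - 1 := by linarith
      calc (u - 1) * (3/α) ≤ (u - 1) * (t ^ α / (2 * B ^ α)) :=
            mul_le_mul_of_nonneg_left h5 h6
        _ = (t ^ α * u - t ^ α) / (2 * B ^ α) := by ring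
    calc (s/t) ^ (3 - α) = u ^ ((3 - α)/α) := h1
      _ ≤ u ^ (3/α) := h2
      _ ≤ Real.exp ((u - 1) * (3/α)) := h3
      _ ≤ Real.exp ((s ^ α - t ^ α) / (2 * B ^ α)) := Real.exp_le_exp.2 h4
  calc s ^ (3 - α) * Real.exp (-(s ^ α / (2 * B ^ α)))
      = t ^ (3 - α) * ((s/t) ^ (3-α) * Real.exp (-(s ^ α / (2 * B ^ α)))) := by
        rw [hst3]; ring
    _ ≤ t ^ (3 - α) * (Real.exp ((s ^ α - t ^ α) / (2 * B ^ α)) * Real.exp (-(s ^ α / (2 * B ^ α)))) := by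
        apply mul_le_mul_of_nonneg_left (mul_le_mul_of_nonneg_right key (Real.exp_pos _).le) ht3.le
    _ = t ^ (3 - α) * Real.exp (-(t ^ α / (2 * B ^ α))) := by
        rw [← Real.exp_add]; congr 1; field_simp; ring

open MeasureTheory Set Filter in
private lemma aux_ftc {α B t : ℝ} (hα : 0 < α) (hB : 0 < B) (ht : 0 < t) :
    IntegrableOn (fun s => α * s ^ (α - 1) / (2 * B ^ α) *
        Real.exp (-(s ^ α / (2 * B ^ α)))) (Set.Ioi t) volume ∧
      ∫ s in Set.Ioi t, α * s ^ (α - 1) / (2 * B ^ α) * Real.exp (-(s ^ α / (2 * B ^ α)))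
        = Real.exp (-(t ^ α / (2 * B ^ α))) := by
  have hBα : 0 < B ^ α := Real.rpow_pos_of_pos hB α
  set g : ℝ → ℝ := fun x => -Real.exp (-(x ^ α / (2 * B ^ α))) with hg
  set g' : ℝ → ℝ := fun s => α * s ^ (α - 1) / (2 * B ^ α) *
    Real.exp (-(s ^ α / (2 * B ^ α))) with hg'
  have hderiv : ∀ x ∈ Set.Ici t, HasDerivAt g (g' x) x := by
    intro x hx
    have hx0 : 0 < x := lt_of_lt_of_le ht hx
    have h1 : HasDerivAt (fun y : ℝ => y ^ α) (α * x ^ (α - 1)) x :=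
      Real.hasDerivAt_rpow_const (Or.inl hx0.ne')
    have h2 : HasDerivAt (fun y : ℝ => -(y ^ α / (2 * B ^ α)))
        (-(α * x ^ (α - 1) / (2 * B ^ α))) x := ((h1.div_const _).neg)
    have h3 := (Real.hasDerivAt_exp _).comp x h2
    have h4 := h3.neg
    refine h4.congr_deriv ?_
    simp [hg', mul_comm]
  have hnn : ∀ x ∈ Set.Ioi t, 0 ≤ g' x := by
    intro x hx
    have hx0 : 0 < x := lt_trans ht hx
    have : 0 ≤ x ^ (α - 1) := (Real.rpow_pos_of_pos hx0 _).le
    positivity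
  have htend : Tendsto g atTop (nhds 0) := by
    rw [hg]
    rw [show (0:ℝ) = -0 by norm_num]
    apply Tendsto.neg
    apply Real.tendsto_exp_atBot.comp
    apply Filter.tendsto_neg_atBot_iff.mpr
    exact (tendsto_rpow_atTop hα).atTop_div_const (by positivity)
  have hcont : ContinuousWithinAt g (Set.Ici t) t :=
    (hderiv t Set.self_mem_Ici).continuousAt.continuousWithinAt
  have hderiv' : ∀ x ∈ Set.Ioi t, HasDerivAt g (g' x) x := fun x hx => hderiv x (Set.mem_Ici.2 (Set.mem_Ioi.1 hx).le)
  refine ⟨integrableOn_Ioi_deriv_of_nonneg hcont hderiv' hnn htend, ?_⟩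
  rw [integral_Ioi_of_hasDerivAt_of_nonneg hcont hderiv' hnn htend]
  simp [hg]

open MeasureTheory Set Filter in
private lemma aux_tail {A B α t : ℝ} (hA : 0 < A) (hB : 0 < B) (hα : 0 < α) (ht : 0 < t)
    (hT6 : 6 / α * B ^ α ≤ t ^ α) (hT1 : B ^ α ≤ t ^ α) :
    IntegrableOn (fun s => A * Real.exp (-(s ^ α / B ^ α)) * (3 * s ^ 2)) (Set.Ioi t) volume ∧
      ∫ s in Set.Ioi t, A * Real.exp (-(s ^ α / B ^ α)) * (3 * s ^ 2)
        ≤ 6 / α * A * t ^ 3 * Real.exp (-(t ^ α / B ^ α)) := by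
  have hBα : 0 < B ^ α := Real.rpow_pos_of_pos hB α
  set D : ℝ := A * (6 * B ^ α / α) * t ^ (3 - α) * Real.exp (-(t ^ α / (2 * B ^ α))) with hD
  set g' : ℝ → ℝ := fun s => α * s ^ (α - 1) / (2 * B ^ α) *
    Real.exp (-(s ^ α / (2 * B ^ α))) with hg'
  have hsplit : ∀ s : ℝ, 0 < s → Real.exp (-(s ^ α / B ^ α)) =
      Real.exp (-(s ^ α / (2 * B ^ α))) * Real.exp (-(s ^ α / (2 * B ^ α))) := by
    intro s _; rw [← Real.exp_add]; congr 1; field_simp; ring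
  -- pointwise bound on Ioi t
  have hpt : ∀ s ∈ Set.Ioi t, A * Real.exp (-(s ^ α / B ^ α)) * (3 * s ^ 2) ≤ D * g' s := by
    intro s hs
    have hs0 : 0 < s := lt_trans ht hs
    have hsa1 : 0 < s ^ (α - 1) := Real.rpow_pos_of_pos hs0 _
    have hs2 : (s : ℝ) ^ 2 = s ^ (3 - α) * s ^ (α - 1) := by
      rw [← Real.rpow_add hs0]
      norm_num
    have hmono := aux_mono hα hB ht hT6 hs.le
    have key : s ^ 2 * Real.exp (-(s ^ α / (2 * B ^ α))) ≤
        t ^ (3 - α) * Real.exp (-(t ^ α / (2 * B ^ α))) * s ^ (α - 1) := by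
      calc s ^ 2 * Real.exp (-(s ^ α / (2 * B ^ α)))
          = (s ^ (3 - α) * Real.exp (-(s ^ α / (2 * B ^ α)))) * s ^ (α - 1) := by
            rw [hs2]; ring
        _ ≤ (t ^ (3 - α) * Real.exp (-(t ^ α / (2 * B ^ α)))) * s ^ (α - 1) :=
            mul_le_mul_of_nonneg_right hmono hsa1.le
    calc A * Real.exp (-(s ^ α / B ^ α)) * (3 * s ^ 2)
        = 3 * A * (s ^ 2 * Real.exp (-(s ^ α / (2 * B ^ α)))) *
            Real.exp (-(s ^ α / (2 * B ^ α))) := by rw [hsplit s hs0]; ring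
      _ ≤ 3 * A * (t ^ (3 - α) * Real.exp (-(t ^ α / (2 * B ^ α))) * s ^ (α - 1)) *
            Real.exp (-(s ^ α / (2 * B ^ α))) := by
          apply mul_le_mul_of_nonneg_right _ (Real.exp_pos _).le
          apply mul_le_mul_of_nonneg_left key (by positivity)
      _ = D * g' s := by rw [hD, hg']; field_simp; ring
  have hint := aux_ftc (α := α) (B := B) hα hB ht
  have hDg : IntegrableOn (fun s => D * g' s) (Set.Ioi t) volume := hint.1.const_mul D
  have hmble : AEStronglyMeasurable (fun s => A * Real.exp (-(s ^ α / B ^ α)) * (3 * s ^ 2))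
      (volume.restrict (Set.Ioi t)) := by
    apply Measurable.aestronglyMeasurable
    fun_prop
  have hf_int : IntegrableOn (fun s => A * Real.exp (-(s ^ α / B ^ α)) * (3 * s ^ 2))
      (Set.Ioi t) volume := by
    apply Integrable.mono' hDg hmble
    filter_upwards [ae_restrict_mem measurableSet_Ioi] with s hs
    rw [Real.norm_eq_abs, abs_of_nonneg (by positivity)]
    exact hpt s hs
  refine ⟨hf_int, ?_⟩
  have hle := setIntegral_mono_on hf_int hDg measurableSet_Ioi hpt
  rw [MeasureTheory.integral_const_mul, hint.2] at hle
  refine le_trans hle ?_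
  rw [hD]
  have h1 : Real.exp (-(t ^ α / (2 * B ^ α))) * Real.exp (-(t ^ α / (2 * B ^ α)))
      = Real.exp (-(t ^ α / B ^ α)) := (hsplit t ht).symm
  have h2 : B ^ α * t ^ (3 - α) ≤ t ^ 3 := by
    calc B ^ α * t ^ (3 - α) ≤ t ^ α * t ^ (3 - α) :=
          mul_le_mul_of_nonneg_right hT1 (Real.rpow_pos_of_pos ht _).le
      _ = t ^ 3 := by
          rw [← Real.rpow_add ht]
          norm_num
  calc A * (6 * B ^ α / α) * t ^ (3 - α) * Real.exp (-(t ^ α / (2 * B ^ α))) *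
        Real.exp (-(t ^ α / (2 * B ^ α)))
      = 6 / α * A * (B ^ α * t ^ (3 - α)) * Real.exp (-(t ^ α / B ^ α)) := by
        rw [mul_assoc _ _ (Real.exp _), h1]; ring
    _ ≤ 6 / α * A * t ^ 3 * Real.exp (-(t ^ α / B ^ α)) := by
        apply mul_le_mul_of_nonneg_right _ (Real.exp_pos _).le
        apply mul_le_mul_of_nonneg_left h2 (by positivity)

/-- Truncated third-moment bound for a nonnegative random variable with
Weibull-type tail `P(ξ > x) ≤ A exp(−x^α/B^α)`: for every
`t ≥ max{(6/α)^{1/α}, 1} B`, if `0 < α ≤ 2` then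
`E[ξ³ 1{ξ ≥ t}] ≤ ((6+α)/α) A t³ exp(−t^α/B^α)`, and if `α ≥ 2` then
`E[ξ³ 1{ξ ≥ t}] ≤ 4 A t³ exp(−t²/B²)`. -/
theorem truncated_third_moment_bound {Ω : Type*} [MeasurableSpace Ω] (μ : Measure Ω)
    [IsProbabilityMeasure μ] (ξ : Ω → ℝ) (hmeas : Measurable ξ) (hpos : ∀ ω, 0 ≤ ξ ω)
    (A B α : ℝ) (hA : 0 < A) (hB : 0 < B) (hα : 0 < α)
    (htail : ∀ x : ℝ, 0 ≤ x →
      μ {ω | x < ξ ω} ≤ ENNReal.ofReal (A * Real.exp (-(x ^ α / B ^ α)))) :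
    ∀ t : ℝ, max ((6 / α) ^ (1 / α)) 1 * B ≤ t →
      (α ≤ 2 →
        ∫ ω in {ω | t ≤ ξ ω}, ξ ω ^ 3 ∂μ ≤
          (6 + α) / α * A * t ^ 3 * Real.exp (-(t ^ α / B ^ α))) ∧
      (2 ≤ α →
        ∫ ω in {ω | t ≤ ξ ω}, ξ ω ^ 3 ∂μ ≤
          4 * A * t ^ 3 * Real.exp (-(t ^ 2 / B ^ 2))) := by
  intro t ht
  have hBt : B ≤ t := by
    calc B = 1 * B := (one_mul B).symm
      _ ≤ max ((6 / α) ^ (1 / α)) 1 * B :=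
          mul_le_mul_of_nonneg_right (le_max_right _ _) hB.le
      _ ≤ t := ht
  have ht0 : 0 < t := lt_of_lt_of_le hB hBt
  have hBα : 0 < B ^ α := Real.rpow_pos_of_pos hB α
  have hT1 : B ^ α ≤ t ^ α := Real.rpow_le_rpow hB.le hBt hα.le
  have hT6 : 6 / α * B ^ α ≤ t ^ α := by
    have h1 : (6 / α) ^ (1 / α) * B ≤ t :=
      le_trans (mul_le_mul_of_nonneg_right (le_max_left _ _) hB.le) ht
    have h2 : ((6 / α) ^ (1 / α) * B) ^ α ≤ t ^ α :=
      Real.rpow_le_rpow (by positivity) h1 hα.le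
    calc 6 / α * B ^ α = ((6 / α) ^ (1 / α)) ^ α * B ^ α := by
          rw [one_div, Real.rpow_inv_rpow (by positivity) hα.ne']
      _ = ((6 / α) ^ (1 / α) * B) ^ α := (Real.mul_rpow (by positivity) hB.le).symm
      _ ≤ t ^ α := h2
  -- the set and the indicator
  set S : Set Ω := {ω | t ≤ ξ ω} with hS_def
  have hS : MeasurableSet S := measurableSet_le measurable_const hmeas
  set Y : Ω → ℝ := S.indicator ξ with hY_def
  have hYm : Measurable Y := hmeas.indicator hS
  have hY0 : ∀ ω, 0 ≤ Y ω := fun ω => Set.indicator_nonneg (fun ω _ => hpos ω) ω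
  -- μ S bound via limit from the left
  have μS_le : μ S ≤ ENNReal.ofReal (A * Real.exp (-(t ^ α / B ^ α))) := by
    have cont : ContinuousAt (fun x : ℝ => ENNReal.ofReal (A * Real.exp (-(x ^ α / B ^ α)))) t := by
      apply ENNReal.continuous_ofReal.continuousAt.comp
      exact (continuousAt_const.mul (Real.continuous_exp.continuousAt.comp
        (((Real.continuousAt_rpow_const t α (Or.inl ht0.ne')).div_const _).neg)))
    apply ge_of_tendsto (cont.tendsto.mono_left (nhdsWithin_le_nhds (s := Set.Iio t)))
    filter_upwards [Ioo_mem_nhdsLT_of_mem (⟨ht0, le_refl t⟩ : t ∈ Set.Ioc 0 t)] with x hx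
    calc μ S ≤ μ {ω | x < ξ ω} := measure_mono (fun ω hω => lt_of_lt_of_le hx.2 hω)
      _ ≤ ENNReal.ofReal (A * Real.exp (-(x ^ α / B ^ α))) := htail x hx.1.le
  -- cube formula
  have cube : ∀ y : ℝ, (∫ s in (0:ℝ)..y, 3 * s ^ 2) = y ^ 3 := by
    intro y
    rw [intervalIntegral.integral_const_mul, integral_pow]
    ring
  -- layer cake
  have layer : ∫⁻ ω, ENNReal.ofReal (∫ s in (0:ℝ)..(Y ω), 3 * s ^ 2) ∂μ
      = ∫⁻ s in Set.Ioi (0:ℝ), μ {ω | s < Y ω} * ENNReal.ofReal (3 * s ^ 2) := by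
    refine lintegral_comp_eq_lintegral_meas_lt_mul μ (Filter.Eventually.of_forall hY0)
      hYm.aemeasurable (fun u _ => ?_) (Filter.Eventually.of_forall (fun s => by positivity))
    exact (continuous_const.mul (continuous_pow 2)).intervalIntegrable 0 u
  -- LHS as lintegral
  have lhs_eq : ∫ ω in S, ξ ω ^ 3 ∂μ
      = (∫⁻ ω, ENNReal.ofReal (∫ s in (0:ℝ)..(Y ω), 3 * s ^ 2) ∂μ).toReal := by
    rw [MeasureTheory.integral_eq_lintegral_of_nonneg_ae
      (Filter.Eventually.of_forall (fun ω => pow_nonneg (hpos ω) 3))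
      ((hmeas.pow_const 3).aestronglyMeasurable)]
    congr 1
    rw [← lintegral_indicator hS]
    apply lintegral_congr
    intro ω
    rw [cube (Y ω)]
    by_cases hω : ω ∈ S
    · simp [hY_def, Set.indicator_of_mem hω]
    · simp [hY_def, Set.indicator_of_notMem hω]
  -- the dominating function
  set H : ℝ → ℝ := fun s => A * Real.exp (-((max s t) ^ α / B ^ α)) * (3 * s ^ 2) with hH_def
  have hHcont : Continuous H := by
    rw [continuous_iff_continuousAt]
    intro s
    have hmax : (0:ℝ) < max s t := lt_of_lt_of_le ht0 (le_max_right s t)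
    have h1 : ContinuousAt (fun x : ℝ => (max x t) ^ α) s :=
      ContinuousAt.rpow_const ((continuous_id.max continuous_const).continuousAt)
        (Or.inl hmax.ne')
    exact (continuousAt_const.mul (Real.continuous_exp.continuousAt.comp
      ((h1.div_const _).neg))).mul ((continuous_const.mul (continuous_pow 2)).continuousAt)
  have hH0 : ∀ s, 0 ≤ H s := fun s => by
    have : (0:ℝ) ≤ s ^ 2 := sq_nonneg s
    positivity
  -- pointwise bound of measures
  have hbound : ∀ s ∈ Set.Ioi (0:ℝ),
      μ {ω | s < Y ω} * ENNReal.ofReal (3 * s ^ 2) ≤ ENNReal.ofReal (H s) := by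
    intro s hs
    have hs0 : (0:ℝ) < s := hs
    have hofr : ENNReal.ofReal (A * Real.exp (-((max s t) ^ α / B ^ α)) * (3 * s ^ 2))
        = ENNReal.ofReal (A * Real.exp (-((max s t) ^ α / B ^ α))) * ENNReal.ofReal (3 * s ^ 2) :=
      ENNReal.ofReal_mul (by positivity)
    rw [hH_def]
    simp only []
    rw [hofr]
    apply mul_le_mul_left
    rcases le_or_gt t s with h | h
    · rw [max_eq_left h]
      refine le_trans (measure_mono ?_) (htail s (le_trans ht0.le h))
      intro ω hω
      have hωS : ω ∈ S := by
        by_contra hc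
        rw [hY_def] at hω
        simp only [Set.mem_setOf_eq, Set.indicator_of_notMem hc] at hω
        exact absurd hω (not_lt.2 hs0.le)
      have hYξ : Y ω = ξ ω := Set.indicator_of_mem hωS ξ
      exact Set.mem_setOf_eq ▸ (hYξ ▸ hω)
    · rw [max_eq_right h.le]
      refine le_trans (measure_mono ?_) μS_le
      intro ω hω
      by_contra hc
      rw [hY_def] at hω
      simp only [Set.mem_setOf_eq, Set.indicator_of_notMem hc] at hω
      exact absurd hω (not_lt.2 hs0.le)
  -- integrability of H on (0, ∞)
  have htailH := aux_tail hA hB hα ht0 hT6 hT1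
  have hEq_Ioi : Set.EqOn (fun s => A * Real.exp (-(s ^ α / B ^ α)) * (3 * s ^ 2)) H
      (Set.Ioi t) := fun s hs => by
    simp only [hH_def, max_eq_left (le_of_lt (Set.mem_Ioi.1 hs))]
  have hH_Ioi : IntegrableOn H (Set.Ioi t) volume :=
    htailH.1.congr_fun hEq_Ioi measurableSet_Ioi
  have hH_Ioc : IntegrableOn H (Set.Ioc 0 t) volume :=
    hHcont.integrableOn_Ioc
  have hH_int : IntegrableOn H (Set.Ioi (0:ℝ)) volume := by
    rw [← Set.Ioc_union_Ioi_eq_Ioi ht0.le]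
    exact hH_Ioc.union hH_Ioi
  -- value of the integral of H
  have hIoc_val : ∫ s in Set.Ioc (0:ℝ) t, H s = A * Real.exp (-(t ^ α / B ^ α)) * t ^ 3 := by
    have : ∫ s in Set.Ioc (0:ℝ) t, H s
        = ∫ s in Set.Ioc (0:ℝ) t, A * Real.exp (-(t ^ α / B ^ α)) * (3 * s ^ 2) := by
      apply setIntegral_congr_fun measurableSet_Ioc
      intro s hs
      simp only [hH_def, max_eq_right hs.2]
    rw [this, MeasureTheory.integral_const_mul, ← intervalIntegral.integral_of_le ht0.le, cube]
  have hint_le : ∫ s in Set.Ioi (0:ℝ), H s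
      ≤ (6 + α) / α * A * t ^ 3 * Real.exp (-(t ^ α / B ^ α)) := by
    have hsplit : ∫ s in Set.Ioi (0:ℝ), H s
        = (∫ s in Set.Ioc (0:ℝ) t, H s) + ∫ s in Set.Ioi t, H s := by
      rw [← Set.Ioc_union_Ioi_eq_Ioi ht0.le]
      exact setIntegral_union Set.Ioc_disjoint_Ioi_same measurableSet_Ioi hH_Ioc hH_Ioi
    have hIoi_le : ∫ s in Set.Ioi t, H s ≤ 6 / α * A * t ^ 3 * Real.exp (-(t ^ α / B ^ α)) := by
      rw [← setIntegral_congr_fun measurableSet_Ioi hEq_Ioi]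
      exact htailH.2
    rw [hsplit, hIoc_val]
    have : A * Real.exp (-(t ^ α / B ^ α)) * t ^ 3 + 6 / α * A * t ^ 3 * Real.exp (-(t ^ α / B ^ α))
        = (6 + α) / α * A * t ^ 3 * Real.exp (-(t ^ α / B ^ α)) := by
      field_simp
      ring
    linarith [this]
  -- put everything together
  have key : ∫ ω in S, ξ ω ^ 3 ∂μ ≤ (6 + α) / α * A * t ^ 3 * Real.exp (-(t ^ α / B ^ α)) := by
    rw [lhs_eq, layer]
    apply ENNReal.toReal_le_of_le_ofReal (by positivity)
    calc ∫⁻ s in Set.Ioi (0:ℝ), μ {ω | s < Y ω} * ENNReal.ofReal (3 * s ^ 2)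
        ≤ ∫⁻ s in Set.Ioi (0:ℝ), ENNReal.ofReal (H s) := by
          apply setLIntegral_mono (ENNReal.measurable_ofReal.comp hHcont.measurable) hbound
      _ = ENNReal.ofReal (∫ s in Set.Ioi (0:ℝ), H s) :=
          (MeasureTheory.ofReal_integral_eq_lintegral_ofReal hH_int
            (Filter.Eventually.of_forall (fun s => hH0 s))).symm
      _ ≤ ENNReal.ofReal ((6 + α) / α * A * t ^ 3 * Real.exp (-(t ^ α / B ^ α))) :=
          ENNReal.ofReal_le_ofReal hint_le
  refine ⟨fun _ => key, fun h2 => le_trans key ?_⟩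
  -- second branch
  have e1 : Real.exp (-(t ^ α / B ^ α)) ≤ Real.exp (-(t ^ 2 / B ^ 2)) := by
    apply Real.exp_le_exp.2
    apply neg_le_neg
    have h3 : (t / B) ^ (2:ℝ) ≤ (t / B) ^ α :=
      Real.rpow_le_rpow_of_exponent_le ((one_le_div hB).2 hBt) h2
    rw [Real.div_rpow ht0.le hB.le, Real.div_rpow ht0.le hB.le] at h3
    have ct : t ^ (2:ℝ) = t ^ 2 := by exact_mod_cast Real.rpow_natCast t 2
    have cB : B ^ (2:ℝ) = B ^ 2 := by exact_mod_cast Real.rpow_natCast B 2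
    rw [ct, cB] at h3
    exact h3
  have c1 : (6 + α) / α ≤ 4 := by
    rw [div_le_iff₀ hα]
    linarith
  calc (6 + α) / α * A * t ^ 3 * Real.exp (-(t ^ α / B ^ α))
      ≤ 4 * A * t ^ 3 * Real.exp (-(t ^ α / B ^ α)) := by
        apply mul_le_mul_of_nonneg_right _ (Real.exp_pos _).le
        apply mul_le_mul_of_nonneg_right _ (by positivity)
        exact mul_le_mul_of_nonneg_right c1 hA.le
    _ ≤ 4 * A * t ^ 3 * Real.exp (-(t ^ 2 / B ^ 2)) := by
        apply mul_le_mul_of_nonneg_left e1 (by positivity)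
end
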